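/- arXiv:2306.16983 — 5 statements merged into one kernel-verified Lean document; each statement's English description precedes it below -/
import Mathlib

section
/- Let K be a number field of degree n = [K:ℚ]. There exists a constant C > 1 such that for every nonzero fractional ideal 𝔞 of K there is a ℤ-basis x_1,…,x_n of 𝔞 with the property that the associated ℓ∞-norm ‖·‖_∞ on 𝔞⊗ℝ satisfies (1/C)·N(𝔞)^{1/n}·‖v‖_∞ ≤ ‖v‖_can ≤ C·N(𝔞)^{1/n}·‖v‖_∞ for all v ∈ 𝔞⊗ℝ. -/
/-!
STATEMENT 5: Existence of norm-length compatible bases.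

Let `K` be a number field of degree `n = [K:ℚ]`. There exists a constant `C > 1` such that for
every nonzero fractional ideal `𝔞` of `K` there is a `ℤ`-basis `x_1, …, x_n` of `𝔞` with the
property that the associated `ℓ∞`-norm on `𝔞 ⊗ ℝ` satisfies
`(1/C)·N(𝔞)^{1/n}·‖v‖_∞ ≤ ‖v‖_can ≤ C·N(𝔞)^{1/n}·‖v‖_∞` for all `v ∈ 𝔞 ⊗ ℝ`.

A vector `v ∈ 𝔞 ⊗ ℝ` is described by its (arbitrary real) coordinates `c : Fin n → ℝ` in the
chosen basis; its canonical norm is `max_{σ : K ↪ ℂ} |∑ i, c i • σ (x i)|` (the `ℝ`-linear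
extension of the embeddings to `𝔞 ⊗ ℝ = K ⊗ ℝ`).
-/

open NumberField
open scoped Classical

noncomputable section

variable (K : Type) [Field K] [NumberField K]

/-- The monoid of fractional ideals of `K`. -/
abbrev FracIdl := FractionalIdeal (nonZeroDivisors (𝓞 K)) K

/-- The underlying `ℤ`-lattice of a fractional ideal. -/
def latticeOf (a : FracIdl K) : Submodule ℤ K :=
  Submodule.restrictScalars ℤ (a : Submodule (𝓞 K) K)

/-- The canonical norm `‖·‖_can = max_{σ : K ↪ ℂ} |σ(·)|` of the vector of `𝔞 ⊗ ℝ` whose real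
coordinates in the basis `bv` are `c`. -/
noncomputable def canCoordNorm {n : ℕ} (bv : Fin n → K) (c : Fin n → ℝ) : ℝ :=
  ⨆ σ : K →+* ℂ, ‖∑ i, (c i : ℂ) * σ (bv i)‖

/-- Norm–length compatibility, with coefficient `C`, of a `ℤ`-basis `b` of the fractional
ideal `𝔞`: for every vector of `𝔞 ⊗ ℝ` (described by its real coordinates `c`), the canonical
norm is within a factor `C` of `N(𝔞)^{1/n}` times the `ℓ∞`-norm `⨆ i, |c i|`. -/
def IsNLCBasis (a : FracIdl K) (C : ℝ) {n : ℕ}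
    (b : Module.Basis (Fin n) ℤ (latticeOf K a)) : Prop :=
  ∀ c : Fin n → ℝ,
    (1 / C) * (FractionalIdeal.absNorm a : ℝ) ^ ((n : ℝ)⁻¹) * (⨆ i, |c i|) ≤
        canCoordNorm K (fun i => ((b i : K))) c ∧
      canCoordNorm K (fun i => ((b i : K))) c ≤
        C * (FractionalIdeal.absNorm a : ℝ) ^ ((n : ℝ)⁻¹) * (⨆ i, |c i|)


open Module FractionalIdeal NumberField.mixedEmbedding MeasureTheory
open scoped ENNReal NNReal

/- ### Auxiliary lemmas -/

theorem coreB (n : ℕ) (hn : 0 < n) (bQ : Fin n → K)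
    (e : Fin n ≃ (K →+* ℂ))
    (N : Matrix (Fin n) (Fin n) ℂ) (hN : ∀ j i, N j i = (e j) (bQ i))
    (hNdet : IsUnit N.det) :
    ∃ A : ℝ, 1 < A ∧ ∀ cv : Fin n → ℝ,
      (1 / A) * (⨆ i, |cv i|) ≤ (⨆ σ : K →+* ℂ, ‖∑ i, (cv i : ℂ) * σ (bQ i)‖) ∧
      (⨆ σ : K →+* ℂ, ‖∑ i, (cv i : ℂ) * σ (bQ i)‖) ≤ A * (⨆ i, |cv i|) := by
  haveI : Nonempty (Fin n) := Fin.pos_iff_nonempty.mp hn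
  haveI hNE : Nonempty (K →+* ℂ) := ⟨e ⟨0, hn⟩⟩
  set A1 : ℝ := ∑ σ : K →+* ℂ, ∑ i, ‖σ (bQ i)‖ with hA1
  set A2 : ℝ := ∑ i, ∑ j, ‖N⁻¹ i j‖ with hA2
  have hA1nonneg : 0 ≤ A1 := Finset.sum_nonneg fun _ _ =>
    Finset.sum_nonneg fun _ _ => norm_nonneg _
  have hA2nonneg : 0 ≤ A2 := Finset.sum_nonneg fun _ _ =>
    Finset.sum_nonneg fun _ _ => norm_nonneg _
  refine ⟨max A1 A2 + 2, by have := le_max_left A1 A2; linarith, fun cv => ?_⟩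
  set A := max A1 A2 + 2 with hA
  have hApos : (0:ℝ) < A := by have := le_max_left A1 A2; linarith
  set cc : Fin n → ℂ := fun i => (cv i : ℂ) with hcc
  set S : (K →+* ℂ) → ℝ := fun σ => ‖∑ i, cc i * σ (bQ i)‖ with hS
  have hSnonneg : ∀ σ, 0 ≤ S σ := fun σ => norm_nonneg _
  have hSbdd : BddAbove (Set.range S) := (Set.finite_range S).bddAbove
  have hsupS : 0 ≤ ⨆ σ, S σ := Real.iSup_nonneg hSnonneg
  have hcvbdd : BddAbove (Set.range fun i => |cv i|) := (Set.finite_range _).bddAbove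
  have hsupcv : 0 ≤ ⨆ i, |cv i| := Real.iSup_nonneg fun i => abs_nonneg _
  have hle : ∀ i, |cv i| ≤ ⨆ i, |cv i| := fun i => le_ciSup hcvbdd i
  have hupper : (⨆ σ, S σ) ≤ A1 * (⨆ i, |cv i|) := by
    refine ciSup_le fun σ => ?_
    calc S σ ≤ ∑ i, ‖cc i * σ (bQ i)‖ := norm_sum_le _ _
      _ = ∑ i, |cv i| * ‖σ (bQ i)‖ := by
          refine Finset.sum_congr rfl fun i _ => ?_
          rw [norm_mul, hcc]
          simp
      _ ≤ ∑ i, (⨆ i, |cv i|) * ‖σ (bQ i)‖ :=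
          Finset.sum_le_sum fun i _ =>
            mul_le_mul_of_nonneg_right (hle i) (norm_nonneg _)
      _ = (∑ i, ‖σ (bQ i)‖) * (⨆ i, |cv i|) := by
          rw [Finset.sum_mul]
          exact Finset.sum_congr rfl fun i _ => mul_comm _ _
      _ ≤ A1 * (⨆ i, |cv i|) :=
          mul_le_mul_of_nonneg_right
            (Finset.single_le_sum (f := fun σ : K →+* ℂ => ∑ i, ‖σ (bQ i)‖)
              (fun _ _ => Finset.sum_nonneg fun _ _ => norm_nonneg _) (Finset.mem_univ σ))
            hsupcv
  have hlower : (⨆ i, |cv i|) ≤ A2 * (⨆ σ, S σ) := by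
    set vv : Fin n → ℂ := fun j => ∑ i, cc i * (e j) (bQ i) with hvv
    have hmul : N.mulVec cc = vv := by
      funext j
      simp only [Matrix.mulVec, dotProduct, hvv]
      exact Finset.sum_congr rfl fun i _ => by rw [hN j i, mul_comm]
    have hccinv : cc = N⁻¹.mulVec vv := by
      rw [← hmul, Matrix.mulVec_mulVec, Matrix.nonsing_inv_mul N hNdet, Matrix.one_mulVec]
    have hvvS : ∀ j, ‖vv j‖ ≤ ⨆ σ, S σ := fun j => le_ciSup hSbdd (e j)
    refine ciSup_le fun i => ?_
    have h0 : |cv i| = ‖cc i‖ := by rw [hcc]; simp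
    rw [h0, hccinv]
    calc ‖N⁻¹.mulVec vv i‖
        ≤ ∑ j, ‖N⁻¹ i j * vv j‖ := norm_sum_le Finset.univ (fun j => N⁻¹ i j * vv j)
      _ = ∑ j, ‖N⁻¹ i j‖ * ‖vv j‖ :=
          Finset.sum_congr rfl fun j _ => norm_mul _ _
      _ ≤ ∑ j, ‖N⁻¹ i j‖ * (⨆ σ, S σ) :=
          Finset.sum_le_sum fun j _ =>
            mul_le_mul_of_nonneg_left (hvvS j) (norm_nonneg _)
      _ = (∑ j, ‖N⁻¹ i j‖) * (⨆ σ, S σ) := by rw [← Finset.sum_mul]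
      _ ≤ A2 * (⨆ σ, S σ) :=
          mul_le_mul_of_nonneg_right
            (Finset.single_le_sum (f := fun i => ∑ j, ‖N⁻¹ i j‖)
              (fun _ _ => Finset.sum_nonneg fun _ _ => norm_nonneg _) (Finset.mem_univ i))
            hsupS
  constructor
  · rw [div_mul_eq_mul_div, one_mul, div_le_iff₀ hApos, mul_comm]
    calc (⨆ i, |cv i|) ≤ A2 * (⨆ σ, S σ) := hlower
      _ ≤ A * (⨆ σ, S σ) := mul_le_mul_of_nonneg_right
          (by have := le_max_right A1 A2; linarith) hsupS
  · calc (⨆ σ, S σ) ≤ A1 * (⨆ i, |cv i|) := hupper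
      _ ≤ A * (⨆ i, |cv i|) := mul_le_mul_of_nonneg_right
          (by have := le_max_left A1 A2; linarith) hsupcv

theorem coreA (n : ℕ) (hn : 0 < n) (hcard : n = Module.finrank ℚ K) (bQ : Basis (Fin n) ℚ K) :
    ∃ e : Fin n ≃ (K →+* ℂ), IsUnit (Matrix.of fun j i => (e j) (bQ i)).det := by
  have hcard2 : Fintype.card (Fin n) = Fintype.card (K →+* ℂ) := by
    rw [Fintype.card_fin, Embeddings.card K ℂ, hcard]
  let e : Fin n ≃ (K →+* ℂ) := Fintype.equivOfCardEq hcard2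
  let eA : Fin n ≃ (K →ₐ[ℚ] ℂ) := e.trans (RingHom.equivRatAlgHom K ℂ)
  let M : Matrix (Fin n) (Fin n) ℂ := Algebra.embeddingsMatrixReindex ℚ ℂ (⇑bQ) eA
  have hdet : M.det ≠ 0 := by
    have h1 : algebraMap ℚ ℂ (Algebra.discr ℚ ⇑bQ) = M.det ^ 2 :=
      Algebra.discr_eq_det_embeddingsMatrixReindex_pow_two ℚ ℂ ⇑bQ eA
    have h2 : Algebra.discr ℚ ⇑bQ ≠ 0 := by
      simpa using Algebra.discr_not_zero_of_basis ℚ bQ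
    intro h
    rw [h] at h1
    simp only [ne_eq, zero_pow, OfNat.ofNat_ne_zero, not_false_eq_true] at h1
    rw [show (algebraMap ℚ ℂ) (Algebra.discr ℚ ⇑bQ) = ((Algebra.discr ℚ ⇑bQ : ℚ) : ℂ) from rfl]
      at h1
    exact_mod_cast h2 (by exact_mod_cast h1)
  refine ⟨e, ?_⟩
  have : (Matrix.of fun j i => (e j) (bQ i)) = M.transpose := by
    ext j i
    rfl
  rw [this, Matrix.det_transpose]
  exact Ne.isUnit hdet

theorem exists_good_basis (c : FracIdl K) (hc : c ≠ 0) :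
    ∃ A : ℝ, 1 < A ∧ ∃ b : Basis (Fin (Module.finrank ℚ K)) ℤ (latticeOf K c),
      ∀ cv : Fin (Module.finrank ℚ K) → ℝ,
        (1 / A) * (⨆ i, |cv i|) ≤ canCoordNorm K (fun i => ((b i : K))) cv ∧
        canCoordNorm K (fun i => ((b i : K))) cv ≤ A * (⨆ i, |cv i|) := by
  have hn0 : 0 < Module.finrank ℚ K := Module.finrank_pos
  set n := Module.finrank ℚ K with hn
  let I : (FracIdl K)ˣ := Units.mk0 c hc
  have hcard : Fintype.card (Free.ChooseBasisIndex ℤ I) = n := by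
    rw [← finrank_eq_card_chooseBasisIndex, fractionalIdeal_rank, RingOfIntegers.rank]
  let e0 : Free.ChooseBasisIndex ℤ I ≃ Fin n := Fintype.equivFinOfCardEq hcard
  let bQ : Basis (Fin n) ℚ K := (basisOfFractionalIdeal K I).reindex e0
  let E : ↥(latticeOf K c) ≃ₗ[ℤ] ↥(I.1 : Submodule (𝓞 K) K) :=
    (Submodule.restrictScalarsEquiv ℤ (𝓞 K) K (I.1 : Submodule (𝓞 K) K)).restrictScalars ℤ
  let y : Basis (Fin n) ℤ ↥(latticeOf K c) :=
    ((fractionalIdealBasis K I.1).reindex e0).map E.symm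
  have key : ∀ i, ((y i : K)) = bQ i := by
    intro i
    simp only [y, bQ, Basis.map_apply, Basis.coe_reindex, Function.comp_apply,
      basisOfFractionalIdeal_apply]
    rfl
  obtain ⟨e, hdet⟩ := coreA K n hn0 hn bQ
  obtain ⟨A, hA, hbound⟩ := coreB K n hn0 ⇑bQ e _ (fun j i => rfl) hdet
  refine ⟨A, hA, y, fun cv => ?_⟩
  have hfn : (fun i => ((y i : K))) = ⇑bQ := funext key
  have hcan : canCoordNorm K (fun i => ((y i : K))) cv
      = ⨆ σ : K →+* ℂ, ‖∑ i, (cv i : ℂ) * σ (bQ i)‖ := by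
    rw [canCoordNorm]; simp only [key]
  rw [hcan]
  exact hbound cv

theorem prod_abs_embeddings (x : K) :
    ∏ σ : K →+* ℂ, ‖σ x‖ = |((Algebra.norm ℚ x : ℚ) : ℝ)| := by
  have h := Algebra.norm_eq_prod_embeddings ℚ ℂ (x := x)
  have h2 : ‖(algebraMap ℚ ℂ) (Algebra.norm ℚ x)‖ = |((Algebra.norm ℚ x : ℚ) : ℝ)| := by
    rw [show (algebraMap ℚ ℂ) (Algebra.norm ℚ x) = (((Algebra.norm ℚ x : ℚ) : ℝ) : ℂ) by
      push_cast; rfl]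
    rw [Complex.norm_real, Real.norm_eq_abs]
  rw [← h2, h, norm_prod]
  exact (Fintype.prod_equiv (RingHom.equivRatAlgHom K ℂ) (fun σ => ‖σ x‖)
    (fun φ => ‖φ x‖) fun _ => rfl)

theorem factor_lemma (a : FractionalIdeal (nonZeroDivisors (𝓞 K)) K) (ha : a ≠ 0)
    {x : K} (hx : x ∈ a) (hx0 : x ≠ 0) :
    ∃ J : Ideal (𝓞 K), J ≠ 0 ∧
      (spanSingleton (nonZeroDivisors (𝓞 K)) x⁻¹ * a) = ((J : FractionalIdeal (nonZeroDivisors (𝓞 K)) K))⁻¹ ∧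
      (Ideal.absNorm J : ℚ) * FractionalIdeal.absNorm a = |Algebra.norm ℚ x| := by
  have hsx0 : spanSingleton (nonZeroDivisors (𝓞 K)) x ≠ 0 := by
    simp [spanSingleton_eq_zero_iff, hx0]
  have hle : spanSingleton (nonZeroDivisors (𝓞 K)) x ≤ a := spanSingleton_le_iff_mem.mpr hx
  have hinv : a⁻¹ * a = 1 := by
    rw [mul_comm]; exact mul_inv_cancel₀ ha
  have hle2 : a⁻¹ * spanSingleton (nonZeroDivisors (𝓞 K)) x ≤ 1 := by
    calc a⁻¹ * spanSingleton (nonZeroDivisors (𝓞 K)) x ≤ a⁻¹ * a :=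
          mul_le_mul_right hle a⁻¹
      _ = 1 := hinv
  obtain ⟨J, hJ⟩ := le_one_iff_exists_coeIdeal.mp hle2
  have ha' : a⁻¹ ≠ 0 := inv_ne_zero ha
  have hJ0 : (J : FractionalIdeal (nonZeroDivisors (𝓞 K)) K) ≠ 0 := by
    rw [hJ]; exact mul_ne_zero ha' hsx0
  refine ⟨J, by simpa using hJ0, ?_, ?_⟩
  · rw [hJ, mul_inv, inv_inv, spanSingleton_inv, mul_comm]
  · have : (J : FractionalIdeal (nonZeroDivisors (𝓞 K)) K) * a
        = spanSingleton (nonZeroDivisors (𝓞 K)) x := by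
      rw [hJ, mul_comm a⁻¹, mul_assoc, hinv, mul_one]
    have h2 := congrArg FractionalIdeal.absNorm this
    rw [_root_.map_mul, absNorm_span_singleton, coeIdeal_absNorm] at h2
    exact h2

theorem exists_balanced_elem :
    ∃ C₀ : ℝ, 1 < C₀ ∧ ∀ a : FractionalIdeal (nonZeroDivisors (𝓞 K)) K, a ≠ 0 →
      ∃ x : K, x ∈ a ∧ x ≠ 0 ∧
      ∀ σ : K →+* ℂ, ‖σ x‖ ≤
        C₀ * ((FractionalIdeal.absNorm a : ℝ) ^ ((Module.finrank ℚ K : ℝ)⁻¹)) := by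
  have hn0 : 0 < Module.finrank ℚ K := Module.finrank_pos
  set n := Module.finrank ℚ K with hn
  set mb1 : ℝ≥0∞ := minkowskiBound K 1 with hmb1
  have hmb1top : mb1 ≠ ⊤ := (minkowskiBound_lt_top K 1).ne
  set F : NNReal := convexBodyLTFactor K with hF
  have hF0 : F ≠ 0 := convexBodyLTFactor_ne_zero K
  set β : NNReal := (mb1 / F).toNNReal + 1 with hβ
  have hβ1 : 1 ≤ β := le_add_self
  set C₀ : ℝ := (β : ℝ) ^ ((n : ℝ)⁻¹) + 1 with hC₀
  have hβpos : (0:ℝ) < (β:ℝ) := by positivity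
  have hC₀1 : 1 < C₀ := by
    have h : (0:ℝ) < (β : ℝ) ^ ((n : ℝ)⁻¹) := Real.rpow_pos_of_pos hβpos _
    rw [hC₀]; linarith
  refine ⟨C₀, hC₀1, fun a ha => ?_⟩
  set I : (FractionalIdeal (nonZeroDivisors (𝓞 K)) K)ˣ := Units.mk0 a ha with hI
  have hNQpos : 0 < FractionalIdeal.absNorm a := by
    refine lt_of_le_of_ne (FractionalIdeal.absNorm_nonneg a) ?_
    exact fun h => ha (FractionalIdeal.absNorm_eq_zero_iff.mp h.symm)
  set NR : ℝ := (FractionalIdeal.absNorm a : ℝ) with hNR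
  have hNRpos : 0 < NR := by rw [hNR]; exact_mod_cast hNQpos
  set NN : NNReal := Real.toNNReal NR with hNN
  have hNN0 : NN ≠ 0 := by
    simp [hNN, Real.toNNReal_eq_zero, not_le, hNRpos]
  set t : NNReal := (β * NN) ^ ((n : ℝ)⁻¹) with ht
  have hvol : minkowskiBound K I < volume (convexBodyLT K (fun _ => t)) := by
    rw [convexBodyLT_volume]
    have hprodN : (∏ w : InfinitePlace K, t ^ w.mult) = β * NN := by
      rw [Finset.prod_pow_eq_pow_sum, InfinitePlace.sum_mult_eq, ← hn, ht,
        ← NNReal.rpow_natCast (((β * NN) ^ ((n : ℝ)⁻¹))) n, ← NNReal.rpow_mul,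
        inv_mul_cancel₀ (by exact_mod_cast hn0.ne' : (n:ℝ) ≠ 0), NNReal.rpow_one]
    have hmbI : minkowskiBound K I = (NN : ℝ≥0∞) * mb1 := by
      rw [hmb1]
      unfold minkowskiBound
      rw [volume_fundamentalDomain_fractionalIdealLatticeBasis,
        volume_fundamentalDomain_fractionalIdealLatticeBasis]
      have h1 : FractionalIdeal.absNorm ((1 : (FractionalIdeal (nonZeroDivisors (𝓞 K)) K)ˣ) :
          FractionalIdeal (nonZeroDivisors (𝓞 K)) K) = 1 := by
        simp
      rw [h1]
      have h2 : ENNReal.ofReal ((FractionalIdeal.absNorm (I : FractionalIdeal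
          (nonZeroDivisors (𝓞 K)) K) : ℚ) : ℝ) = (NN : ℝ≥0∞) := by
        rw [ENNReal.ofReal, hNN]
        rfl
      have hIa : (I : FractionalIdeal (nonZeroDivisors (𝓞 K)) K) = a := rfl
      rw [hIa] at h2
      rw [Rat.cast_one, ENNReal.ofReal_one, one_mul, hIa, h2, mul_assoc]
    rw [hmbI, hprodN]
    have hdivlt : mb1 / (F : ℝ≥0∞) < (β : ℝ≥0∞) := by
      have hne : mb1 / (F : ℝ≥0∞) ≠ ⊤ :=
        (ENNReal.div_lt_top hmb1top (by exact_mod_cast hF0)).ne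
      conv_lhs => rw [← ENNReal.coe_toNNReal hne]
      exact_mod_cast lt_add_one _
    have hmb1lt : mb1 < (F : ℝ≥0∞) * β := by
      have h3 : mb1 = (F : ℝ≥0∞) * (mb1 / F) := by
        rw [ENNReal.mul_div_cancel (by exact_mod_cast hF0) ENNReal.coe_ne_top]
      rw [h3]
      exact (ENNReal.mul_lt_mul_iff_right (by exact_mod_cast hF0) ENNReal.coe_ne_top).mpr hdivlt
    calc (NN : ℝ≥0∞) * mb1 < (NN : ℝ≥0∞) * ((F : ℝ≥0∞) * β) := by
          exact (ENNReal.mul_lt_mul_iff_right (by exact_mod_cast hNN0) ENNReal.coe_ne_top).mpr hmb1lt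
      _ = (F : ℝ≥0∞) * ((β * NN : NNReal) : ℝ≥0∞) := by
          push_cast
          ring
  obtain ⟨x, hxI, hx0, hxw⟩ := exists_ne_zero_mem_ideal_lt K I hvol
  refine ⟨x, hxI, hx0, fun σ => ?_⟩
  have h4 : ‖σ x‖ = (InfinitePlace.mk σ) x := (InfinitePlace.apply σ x).symm
  have h5 := hxw (InfinitePlace.mk σ)
  have h6 : (t : ℝ) ≤ C₀ * NR ^ ((n : ℝ)⁻¹) := by
    have hcoe : (t : ℝ) = ((β:ℝ) * NR) ^ ((n : ℝ)⁻¹) := by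
      rw [ht, NNReal.coe_rpow]
      congr 2
      rw [NNReal.coe_mul, hNN, Real.coe_toNNReal _ hNRpos.le]
    rw [hcoe, Real.mul_rpow hβpos.le hNRpos.le]
    refine mul_le_mul_of_nonneg_right ?_ (Real.rpow_nonneg hNRpos.le _)
    rw [hC₀]; linarith
  rw [h4]
  exact le_trans h5.le h6

theorem exists_balanced :
    ∃ C₀ : ℝ, 1 < C₀ ∧ ∀ a : FractionalIdeal (nonZeroDivisors (𝓞 K)) K, a ≠ 0 →
      ∃ x : K, x ∈ a ∧ x ≠ 0 ∧
        (∀ σ : K →+* ℂ,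
          ‖σ x‖ ≤
            C₀ * (FractionalIdeal.absNorm a : ℝ) ^ ((Module.finrank ℚ K : ℝ)⁻¹) ∧
          (FractionalIdeal.absNorm a : ℝ) ^ ((Module.finrank ℚ K : ℝ)⁻¹) ≤
            ‖σ x‖ * C₀ ^ (Module.finrank ℚ K - 1)) ∧
        ∃ J : Ideal (𝓞 K), J ≠ 0 ∧ (Ideal.absNorm J : ℝ) ≤ C₀ ^ (Module.finrank ℚ K) ∧
          spanSingleton (nonZeroDivisors (𝓞 K)) x⁻¹ * a
            = ((J : FractionalIdeal (nonZeroDivisors (𝓞 K)) K))⁻¹ := by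
  obtain ⟨C₀, hC₀, H⟩ := exists_balanced_elem K
  have hn0 : 0 < Module.finrank ℚ K := Module.finrank_pos
  set n := Module.finrank ℚ K with hn
  have hcardσ : Fintype.card (K →+* ℂ) = n := Embeddings.card K ℂ
  refine ⟨C₀, hC₀, fun a ha => ?_⟩
  obtain ⟨x, hxa, hx0, hU⟩ := H a ha
  obtain ⟨J, hJ0, hJc, hJn⟩ := factor_lemma K a ha hxa hx0
  have hNpos : (0:ℝ) < (FractionalIdeal.absNorm a : ℝ) := by
    have := FractionalIdeal.absNorm_nonneg a
    have hne : FractionalIdeal.absNorm a ≠ 0 := fun h => ha (absNorm_eq_zero_iff.mp h)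
    have : (0:ℚ) < FractionalIdeal.absNorm a := lt_of_le_of_ne this (Ne.symm hne)
    exact_mod_cast this
  set N : ℝ := (FractionalIdeal.absNorm a : ℝ) with hN
  set Nr : ℝ := N ^ ((n : ℝ)⁻¹) with hNr
  have hNrpos : 0 < Nr := Real.rpow_pos_of_pos hNpos _
  have hNrn : Nr ^ n = N := Real.rpow_inv_natCast_pow hNpos.le hn0.ne'
  set dJ : ℝ := (Ideal.absNorm J : ℝ) with hdJ
  have hdJ1 : (1:ℝ) ≤ dJ := by
    have : Ideal.absNorm J ≠ 0 := by
      intro h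
      exact hJ0 (Ideal.absNorm_eq_zero_iff.mp h)
    rw [hdJ]; exact_mod_cast Nat.one_le_iff_ne_zero.mpr this
  have hP : ∏ σ : K →+* ℂ, ‖σ x‖ = dJ * N := by
    rw [prod_abs_embeddings K x, hdJ, hN]
    rw [show |((Algebra.norm ℚ x : ℚ) : ℝ)| = ((|Algebra.norm ℚ x| : ℚ) : ℝ) by push_cast; rfl,
      ← hJn]
    push_cast
    ring
  have hC₀pos : (0:ℝ) < C₀ := by linarith
  have habsnn : ∀ σ : K →+* ℂ, (0:ℝ) ≤ ‖σ x‖ := fun σ => norm_nonneg _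
  have hPU : ∏ σ : K →+* ℂ, ‖σ x‖ ≤ (C₀ * Nr) ^ n := by
    rw [← hcardσ, ← Finset.card_univ, ← Finset.prod_const]
    exact Finset.prod_le_prod (fun σ _ => habsnn σ) (fun σ _ => hU σ)
  have hdJbound : dJ ≤ C₀ ^ n := by
    have h1 : dJ * N ≤ C₀ ^ n * N := by
      rw [← hP]
      calc ∏ σ : K →+* ℂ, ‖σ x‖ ≤ (C₀ * Nr) ^ n := hPU
        _ = C₀ ^ n * N := by rw [mul_pow, hNrn]
    exact le_of_mul_le_mul_right h1 hNpos
  have hL : ∀ σ : K →+* ℂ, Nr ≤ ‖σ x‖ * C₀ ^ (n - 1) := by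
    intro σ₀
    have hsplit : (∏ σ : K →+* ℂ, ‖σ x‖)
        = ‖σ₀ x‖ * ∏ σ ∈ Finset.univ.erase σ₀, ‖σ x‖ :=
      (Finset.mul_prod_erase Finset.univ _ (Finset.mem_univ σ₀)).symm
    have hcard_erase : (Finset.univ.erase σ₀).card = n - 1 := by
      rw [Finset.card_erase_of_mem (Finset.mem_univ σ₀), Finset.card_univ, hcardσ]
    have herase : ∏ σ ∈ Finset.univ.erase σ₀, ‖σ x‖ ≤ (C₀ * Nr) ^ (n - 1) := by
      rw [← hcard_erase, ← Finset.prod_const]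
      exact Finset.prod_le_prod (fun σ _ => habsnn σ) (fun σ _ => hU σ)
    have hNP : N ≤ ‖σ₀ x‖ * (C₀ * Nr) ^ (n - 1) := by
      calc N = 1 * N := (one_mul N).symm
        _ ≤ dJ * N := by exact mul_le_mul_of_nonneg_right hdJ1 hNpos.le
        _ = ∏ σ : K →+* ℂ, ‖σ x‖ := hP.symm
        _ = ‖σ₀ x‖ * ∏ σ ∈ Finset.univ.erase σ₀, ‖σ x‖ := hsplit
        _ ≤ ‖σ₀ x‖ * (C₀ * Nr) ^ (n - 1) :=
            mul_le_mul_of_nonneg_left herase (habsnn σ₀)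
    have hpow : (0:ℝ) < Nr ^ (n - 1) := pow_pos hNrpos _
    have hNeq : N = Nr * Nr ^ (n - 1) := by
      rw [← hNrn, ← pow_succ']
      congr 1
      omega
    rw [hNeq, mul_pow, show ‖σ₀ x‖ * (C₀ ^ (n-1) * Nr ^ (n-1))
      = (‖σ₀ x‖ * C₀ ^ (n-1)) * Nr ^ (n-1) by ring] at hNP
    exact le_of_mul_le_mul_right hNP hpow
  exact ⟨x, hxa, hx0, fun σ => ⟨hU σ, hL σ⟩, J, hJ0, hdJbound, hJc⟩


/-- **Existence of norm-length compatible bases** (Proposition 3.1 of the paper). -/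
theorem exists_norm_length_compatible_bases :
    ∃ C : ℝ, 1 < C ∧
      ∀ a : FracIdl K, a ≠ 0 →
        ∃ b : Module.Basis (Fin (Module.finrank ℚ K)) ℤ (latticeOf K a), IsNLCBasis K a C b := by
  obtain ⟨C₀, hC₀, Hbal⟩ := exists_balanced K
  have hn0 : 0 < Module.finrank ℚ K := Module.finrank_pos
  set n := Module.finrank ℚ K with hn
  have hC₀pos : (0:ℝ) < C₀ := by linarith
  set M : ℕ := ⌈C₀ ^ n⌉₊ with hM
  set T : Set (FracIdl K) :=
    (fun J : Ideal (𝓞 K) => ((J : FracIdl K))⁻¹) '' {J | Ideal.absNorm J ≤ M} with hT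
  have hTfin : T.Finite := Set.Finite.image _ (Ideal.finite_setOf_absNorm_le M)
  set g : FracIdl K → ℝ := fun c => if h : c ≠ 0 then (exists_good_basis K c h).choose else 2
    with hg
  have gprop : ∀ (c : FracIdl K) (h : c ≠ 0), 1 < g c ∧
      ∃ b : Basis (Fin n) ℤ (latticeOf K c),
        ∀ cv : Fin n → ℝ,
          (1 / g c) * (⨆ i, |cv i|) ≤ canCoordNorm K (fun i => ((b i : K))) cv ∧
          canCoordNorm K (fun i => ((b i : K))) cv ≤ g c * (⨆ i, |cv i|) := by
    intro c h
    have := (exists_good_basis K c h).choose_spec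
    rw [hg]
    simp only [dif_pos h]
    exact this
  obtain ⟨Am, hAm⟩ := (hTfin.image g).bddAbove
  simp only [mem_upperBounds] at hAm
  set Amax : ℝ := max Am 1 with hAmax
  have hgT : ∀ c ∈ T, g c ≤ Amax := by
    intro c hc
    exact le_trans (hAm _ (Set.mem_image_of_mem g hc)) (le_max_left _ _)
  set C : ℝ := C₀ ^ n * (Amax + 1) with hC
  have hC₀n : 1 < C₀ ^ n := one_lt_pow₀ hC₀ hn0.ne'
  have hAmax1 : 1 ≤ Amax := le_max_right _ _
  have hC1 : 1 < C := by
    calc (1:ℝ) < C₀ ^ n := hC₀n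
      _ = C₀ ^ n * 1 := (mul_one _).symm
      _ ≤ C := by rw [hC]; refine mul_le_mul_of_nonneg_left ?_ (by positivity); linarith
  have hCpos : (0:ℝ) < C := by linarith
  refine ⟨C, hC1, fun a ha => ?_⟩
  obtain ⟨x, hxa, hx0, hbounds, J, hJ0, hJnorm, hJc⟩ := Hbal a ha
  set 𝔠 : FracIdl K := spanSingleton (nonZeroDivisors (𝓞 K)) x⁻¹ * a with h𝔠
  have h𝔠T : 𝔠 ∈ T := by
    refine ⟨J, ?_, hJc.symm⟩
    have : (Ideal.absNorm J : ℝ) ≤ (M : ℝ) := le_trans hJnorm (Nat.le_ceil _)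
    exact_mod_cast this
  have h𝔠0 : 𝔠 ≠ 0 := by
    rw [hJc]
    have : (J : FracIdl K) ≠ 0 := by
      rw [ne_eq, coeIdeal_eq_zero]
      exact hJ0
    exact inv_ne_zero this
  obtain ⟨hA1, y, hy⟩ := gprop 𝔠 h𝔠0
  set A : ℝ := g 𝔠 with hA
  have hAle : A ≤ Amax := hgT 𝔠 h𝔠T
  have hApos : (0:ℝ) < A := by linarith
  -- transport the basis
  set f : K →ₗ[ℤ] K := LinearMap.mulLeft ℤ x with hf
  have hinj : Function.Injective f := fun z w h => by
    simpa [hf, LinearMap.mulLeft_apply] using mul_left_cancel₀ hx0 (by simpa [hf] using h)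
  have hxc : spanSingleton (nonZeroDivisors (𝓞 K)) x * 𝔠 = a := by
    rw [h𝔠, ← mul_assoc, spanSingleton_mul_spanSingleton, mul_inv_cancel₀ hx0,
      spanSingleton_one, one_mul]
  have hmapeq : Submodule.map f (latticeOf K 𝔠) = latticeOf K a := by
    ext z
    simp only [Submodule.mem_map, latticeOf, Submodule.restrictScalars_mem]
    constructor
    · rintro ⟨w, hw, rfl⟩
      have : (f w : K) ∈ (a : FractionalIdeal (nonZeroDivisors (𝓞 K)) K) := by
        rw [← hxc]
        exact mem_singleton_mul.mpr ⟨w, hw, rfl⟩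
      exact this
    · intro hz
      rw [← hxc] at hz
      obtain ⟨w, hw, rfl⟩ := mem_singleton_mul.mp hz
      exact ⟨w, hw, rfl⟩
  set E : (latticeOf K 𝔠) ≃ₗ[ℤ] (latticeOf K a) :=
    (Submodule.equivMapOfInjective f hinj (latticeOf K 𝔠)).trans
      (LinearEquiv.ofEq _ _ hmapeq) with hE
  set b : Basis (Fin n) ℤ (latticeOf K a) := y.map E with hb
  have hbcoe : ∀ i, ((b i : K)) = x * ((y i : K)) := by
    intro i
    rfl
  refine ⟨b, fun cv => ?_⟩
  -- notation
  set N : ℝ := (FractionalIdeal.absNorm a : ℝ) with hN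
  set Nr : ℝ := N ^ ((n : ℝ)⁻¹) with hNr
  have hNpos : (0:ℝ) < N := by
    have hne : FractionalIdeal.absNorm a ≠ 0 := fun h => ha (absNorm_eq_zero_iff.mp h)
    have : (0:ℚ) < FractionalIdeal.absNorm a :=
      lt_of_le_of_ne (FractionalIdeal.absNorm_nonneg a) (Ne.symm hne)
    rw [hN]; exact_mod_cast this
  have hNrpos : 0 < Nr := Real.rpow_pos_of_pos hNpos _
  set S : (K →+* ℂ) → ℝ := fun σ => ‖∑ i, (cv i : ℂ) * σ ((y i : K))‖ with hS
  set Tf : (K →+* ℂ) → ℝ := fun σ => ‖∑ i, (cv i : ℂ) * σ ((b i : K))‖ with hTf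
  haveI hNE : Nonempty (K →+* ℂ) := by
    refine Fintype.card_pos_iff.mp ?_
    rw [Embeddings.card K ℂ]; omega
  have hTS : ∀ σ, Tf σ = ‖σ x‖ * S σ := by
    intro σ
    rw [hTf, hS]
    simp only
    rw [← norm_mul]
    congr 1
    rw [Finset.mul_sum]
    refine Finset.sum_congr rfl fun i _ => ?_
    rw [hbcoe i, map_mul σ]
    ring
  have hSnonneg : ∀ σ, 0 ≤ S σ := fun σ => norm_nonneg _
  have hTnonneg : ∀ σ, 0 ≤ Tf σ := fun σ => norm_nonneg _
  have hSbdd : BddAbove (Set.range S) := (Set.finite_range S).bddAbove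
  have hTbdd : BddAbove (Set.range Tf) := (Set.finite_range Tf).bddAbove
  have hsupS : 0 ≤ ⨆ σ, S σ := Real.iSup_nonneg hSnonneg
  have hsupT : 0 ≤ ⨆ σ, Tf σ := Real.iSup_nonneg hTnonneg
  have hsupcv : 0 ≤ ⨆ i, |cv i| := Real.iSup_nonneg fun i => abs_nonneg _
  have hyb := hy cv
  have hcanb : canCoordNorm K (fun i => ((b i : K))) cv = ⨆ σ, Tf σ := rfl
  have hcany : canCoordNorm K (fun i => ((y i : K))) cv = ⨆ σ, S σ := rfl
  rw [hcany] at hyb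
  rw [hcanb]
  have hub : (⨆ σ, Tf σ) ≤ (C₀ * Nr) * ⨆ σ, S σ := by
    refine ciSup_le fun σ => ?_
    rw [hTS σ]
    calc ‖σ x‖ * S σ ≤ (C₀ * Nr) * S σ :=
          mul_le_mul_of_nonneg_right (hbounds σ).1 (hSnonneg σ)
      _ ≤ (C₀ * Nr) * ⨆ σ, S σ := by
          refine mul_le_mul_of_nonneg_left (le_ciSup hSbdd σ) (by positivity)
  have hlb : (⨆ σ, S σ) ≤ (C₀ ^ (n-1) * (⨆ σ, Tf σ)) / Nr := by
    refine ciSup_le fun σ => ?_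
    rw [le_div_iff₀ hNrpos]
    calc S σ * Nr ≤ S σ * (‖σ x‖ * C₀ ^ (n-1)) :=
          mul_le_mul_of_nonneg_left (hbounds σ).2 (hSnonneg σ)
      _ = C₀ ^ (n-1) * Tf σ := by rw [hTS σ]; ring
      _ ≤ C₀ ^ (n-1) * ⨆ σ, Tf σ :=
          mul_le_mul_of_nonneg_left (le_ciSup hTbdd σ) (pow_nonneg hC₀pos.le _)
  have hus : (⨆ i, |cv i|) ≤ A * ⨆ σ, S σ := by
    have h1 := mul_le_mul_of_nonneg_left hyb.1 hApos.le
    rw [show A * (1 / A * ⨆ i, |cv i|) = ⨆ i, |cv i| by field_simp] at h1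
    exact h1
  have hkey : Nr * (⨆ i, |cv i|) ≤ (A * C₀ ^ (n-1)) * ⨆ σ, Tf σ := by
    calc Nr * (⨆ i, |cv i|) ≤ Nr * (A * ⨆ σ, S σ) :=
          mul_le_mul_of_nonneg_left hus hNrpos.le
      _ = ((⨆ σ, S σ) * Nr) * A := by ring
      _ ≤ ((C₀ ^ (n-1) * ⨆ σ, Tf σ)) * A := by
          refine mul_le_mul_of_nonneg_right ?_ hApos.le
          rw [← le_div_iff₀ hNrpos]
          exact hlb
      _ = (A * C₀ ^ (n-1)) * ⨆ σ, Tf σ := by ring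
  have hAC1 : A * C₀ ^ (n-1) ≤ C := by
    rw [hC]
    have h1 : C₀ ^ (n-1) ≤ C₀ ^ n := pow_le_pow_right₀ hC₀.le (Nat.sub_le n 1)
    have h2 : A ≤ Amax + 1 := by linarith
    calc A * C₀ ^ (n-1) ≤ (Amax + 1) * C₀ ^ n :=
          mul_le_mul h2 h1 (pow_nonneg hC₀pos.le _) (by linarith)
      _ = C₀ ^ n * (Amax + 1) := mul_comm _ _
  have hAC2 : C₀ * A ≤ C := by
    rw [hC]
    have h1 : C₀ ≤ C₀ ^ n := le_self_pow₀ hC₀.le hn0.ne'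
    exact mul_le_mul h1 (by linarith) hApos.le (by positivity)
  constructor
  · rw [div_mul_eq_mul_div, one_mul, div_mul_eq_mul_div, div_le_iff₀ hCpos]
    have hfin : Nr * (⨆ i, |cv i|) ≤ C * ⨆ σ, Tf σ :=
      le_trans hkey (mul_le_mul_of_nonneg_right hAC1 hsupT)
    linarith [hfin]
  · calc (⨆ σ, Tf σ) ≤ (C₀ * Nr) * ⨆ σ, S σ := hub
      _ ≤ (C₀ * Nr) * (A * (⨆ i, |cv i|)) :=
          mul_le_mul_of_nonneg_left hyb.2 (mul_nonneg hC₀pos.le hNrpos.le)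
      _ = (C₀ * A) * (Nr * (⨆ i, |cv i|)) := by ring
      _ ≤ C * (Nr * (⨆ i, |cv i|)) :=
          mul_le_mul_of_nonneg_right hAC2 (mul_nonneg hNrpos.le hsupcv)
      _ = C * Nr * (⨆ i, |cv i|) := by ring

end
end

section
/- Let K be a number field of degree n and C ≥ 1. There is a constant B = B(K, C) such that for every nonzero fractional ideal 𝔞 of K and every norm-length compatible basis ι : ℤ^n ≅ 𝔞 with coefficient C, the function ℤ^n → ℤ given by x ↦ N_{K/ℚ}(ι(x))/N(𝔞) is represented by a homogeneous polynomial of degree n in the coordinates x_1,…,x_n with coefficients of absolute value at most B. -/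
/-!
STATEMENT 7: The normalized norm function is a homogeneous polynomial of degree `n` with
uniformly bounded coefficients, in the coordinates of any norm-length compatible basis.
-/

open NumberField
open scoped Classical nonZeroDivisors

noncomputable section

variable (K : Type) [Field K] [NumberField K]

namespace SAux
variable {σ : Type*}

/-- Sum of absolute values of coefficients. -/
noncomputable def S (f : MvPolynomial σ ℤ) : ℤ := ∑ m ∈ f.support, |f.coeff m|

lemma S_nonneg (f : MvPolynomial σ ℤ) : 0 ≤ S f :=
  Finset.sum_nonneg fun _ _ => abs_nonneg _

lemma abs_coeff_le_S (f : MvPolynomial σ ℤ) (m : σ →₀ ℕ) : |f.coeff m| ≤ S f := by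
  by_cases h : m ∈ f.support
  · exact Finset.single_le_sum (f := fun m => |f.coeff m|) (fun _ _ => abs_nonneg _) h
  · rw [MvPolynomial.notMem_support_iff.mp h]
    simpa using S_nonneg f

lemma S_eq_sum_subset (f : MvPolynomial σ ℤ) {t : Finset (σ →₀ ℕ)} (h : f.support ⊆ t) :
    S f = ∑ m ∈ t, |f.coeff m| := by
  refine Finset.sum_subset h fun m _ hm => ?_
  rw [MvPolynomial.notMem_support_iff.mp hm, abs_zero]

lemma S_add (f g : MvPolynomial σ ℤ) : S (f + g) ≤ S f + S g := by
  have hsub : (f + g).support ⊆ f.support ∪ g.support := MvPolynomial.support_add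
  rw [S_eq_sum_subset (f + g) hsub,
    S_eq_sum_subset f (Finset.subset_union_left),
    S_eq_sum_subset g (Finset.subset_union_right), ← Finset.sum_add_distrib]
  refine Finset.sum_le_sum fun m _ => ?_
  simpa [MvPolynomial.coeff_add] using abs_add_le (f.coeff m) (g.coeff m)

lemma S_zero : S (0 : MvPolynomial σ ℤ) = 0 := by simp [S]

lemma S_sum {ι : Type*} (s : Finset ι) (f : ι → MvPolynomial σ ℤ) :
    S (∑ i ∈ s, f i) ≤ ∑ i ∈ s, S (f i) := by
  classical
  induction s using Finset.induction with
  | empty => simp [S_zero]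
  | insert _ _ h ih =>
    rw [Finset.sum_insert h, Finset.sum_insert h]
    exact (S_add _ _).trans (by linarith)

lemma S_mul (f g : MvPolynomial σ ℤ) : S (f * g) ≤ S f * S g := by
  have h1 : S (f * g) ≤ ∑ m ∈ (f * g).support, ∑ p ∈ Finset.HasAntidiagonal.antidiagonal m,
      |f.coeff p.1| * |g.coeff p.2| := by
    refine Finset.sum_le_sum fun m _ => ?_
    rw [MvPolynomial.coeff_mul]
    refine (Finset.abs_sum_le_sum_abs _ _).trans (le_of_eq ?_)
    exact Finset.sum_congr rfl fun p _ => abs_mul _ _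
  set F : Finset ((σ →₀ ℕ) × (σ →₀ ℕ)) := f.support ×ˢ g.support with hF
  have h2 : ∀ m, ∑ p ∈ Finset.HasAntidiagonal.antidiagonal m, |f.coeff p.1| * |g.coeff p.2| =
      ∑ p ∈ Finset.HasAntidiagonal.antidiagonal m ∩ F, |f.coeff p.1| * |g.coeff p.2| := by
    intro m
    refine (Finset.sum_subset Finset.inter_subset_left fun p hp hp' => ?_).symm
    have : p ∉ F := fun hpF => hp' (Finset.mem_inter.mpr ⟨hp, hpF⟩)
    rw [hF, Finset.mem_product, not_and_or] at this
    rcases this with h | h <;>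
      simp [MvPolynomial.notMem_support_iff.mp (by simpa using h)]
  have h3 : ∑ m ∈ (f * g).support, ∑ p ∈ Finset.HasAntidiagonal.antidiagonal m ∩ F,
      |f.coeff p.1| * |g.coeff p.2| =
      ∑ p ∈ (f * g).support.biUnion (fun m => Finset.HasAntidiagonal.antidiagonal m ∩ F),
        |f.coeff p.1| * |g.coeff p.2| := by
    refine (Finset.sum_biUnion ?_).symm
    intro m₁ _ m₂ _ hne
    refine Finset.disjoint_left.mpr fun p hp₁ hp₂ => hne ?_
    have e1 := Finset.HasAntidiagonal.mem_antidiagonal.mp (Finset.mem_inter.mp hp₁).1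
    have e2 := Finset.HasAntidiagonal.mem_antidiagonal.mp (Finset.mem_inter.mp hp₂).1
    rw [← e1, ← e2]
  have h4 : ∑ p ∈ (f * g).support.biUnion (fun m => Finset.HasAntidiagonal.antidiagonal m ∩ F),
        |f.coeff p.1| * |g.coeff p.2| ≤ ∑ p ∈ F, |f.coeff p.1| * |g.coeff p.2| := by
    refine Finset.sum_le_sum_of_subset_of_nonneg ?_ (fun _ _ _ => by positivity)
    intro p hp
    obtain ⟨m, _, hm⟩ := Finset.mem_biUnion.mp hp
    exact (Finset.mem_inter.mp hm).2
  have h5 : ∑ p ∈ F, |f.coeff p.1| * |g.coeff p.2| = S f * S g := by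
    rw [hF, Finset.sum_product, S, S, Finset.sum_mul]
    exact Finset.sum_congr rfl fun m _ => by rw [Finset.mul_sum]
  calc S (f * g) ≤ _ := h1
    _ = _ := Finset.sum_congr rfl fun m _ => h2 m
    _ = _ := h3
    _ ≤ _ := h4
    _ = S f * S g := h5

lemma S_monomial (m : σ →₀ ℕ) (c : ℤ) : S (MvPolynomial.monomial m c) = |c| := by
  by_cases hc : c = 0
  · simp [hc, S_zero]
  · rw [S, MvPolynomial.support_monomial, if_neg hc, Finset.sum_singleton,
      MvPolynomial.coeff_monomial, if_pos rfl]

lemma S_C (c : ℤ) : S (MvPolynomial.C (c : ℤ) : MvPolynomial σ ℤ) = |c| := by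
  rw [← MvPolynomial.monomial_zero', S_monomial]

lemma S_X (i : σ) : S (MvPolynomial.X i : MvPolynomial σ ℤ) = 1 := by
  rw [MvPolynomial.X, S_monomial]; simp

lemma S_one : S (1 : MvPolynomial σ ℤ) = 1 := by
  rw [← MvPolynomial.C_1, S_C]; simp

lemma S_prod {ι : Type*} (s : Finset ι) (f : ι → MvPolynomial σ ℤ) :
    S (∏ i ∈ s, f i) ≤ ∏ i ∈ s, S (f i) := by
  classical
  induction s using Finset.induction with
  | empty => simp [S_one]
  | insert _ _ h ih =>
    rw [Finset.prod_insert h, Finset.prod_insert h]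
    refine (S_mul _ _).trans ?_
    exact mul_le_mul_of_nonneg_left ih (S_nonneg _)

lemma S_intCast_mul (c : ℤ) (f : MvPolynomial σ ℤ) :
    S ((c : MvPolynomial σ ℤ) * f) ≤ |c| * S f := by
  have h : (c : MvPolynomial σ ℤ) = MvPolynomial.C c := by
    exact (map_intCast (MvPolynomial.C : ℤ →+* MvPolynomial σ ℤ) c).symm
  rw [h]
  calc S (MvPolynomial.C c * f) ≤ S (MvPolynomial.C c : MvPolynomial σ ℤ) * S f := S_mul _ _
    _ = |c| * S f := by rw [S_C]

end SAux

namespace SAux2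
open SAux

lemma intCast_C {σ : Type*} (c : ℤ) :
    ((c : MvPolynomial σ ℤ)) = MvPolynomial.C c :=
  (map_intCast (MvPolynomial.C : ℤ →+* MvPolynomial σ ℤ) c).symm

lemma S_det {σ : Type*} {n : ℕ} (N : Matrix (Fin n) (Fin n) (MvPolynomial σ ℤ)) (A : ℤ)
    (hA : 0 ≤ A) (h : ∀ i j, S (N i j) ≤ A) :
    S N.det ≤ (n.factorial : ℤ) * A ^ n := by
  classical
  rw [Matrix.det_apply']
  refine (S_sum _ _).trans ?_
  have hterm : ∀ σ' : Equiv.Perm (Fin n),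
      S (((Equiv.Perm.sign σ' : ℤ) : MvPolynomial σ ℤ) * ∏ i, N (σ' i) i) ≤ A ^ n := by
    intro σ'
    refine (S_intCast_mul _ _).trans ?_
    have : |((Equiv.Perm.sign σ' : ℤˣ) : ℤ)| = 1 := by
      rcases Int.units_eq_one_or (Equiv.Perm.sign σ') with h' | h' <;> rw [h'] <;> simp
    rw [this, one_mul]
    refine (S_prod _ _).trans ?_
    calc ∏ i : Fin n, S (N (σ' i) i) ≤ ∏ _i : Fin n, A :=
          Finset.prod_le_prod (fun _ _ => S_nonneg _) (fun i _ => h _ _)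
      _ = A ^ n := by simp
  calc ∑ σ' : Equiv.Perm (Fin n), S (((Equiv.Perm.sign σ' : ℤ) : MvPolynomial σ ℤ) * ∏ i, N (σ' i) i)
      ≤ ∑ _σ' : Equiv.Perm (Fin n), A ^ n := Finset.sum_le_sum fun σ' _ => hterm σ'
    _ = (n.factorial : ℤ) * A ^ n := by
        rw [Finset.sum_const, nsmul_eq_mul]
        congr 1
        rw [Finset.card_univ, Fintype.card_perm, Fintype.card_fin]

lemma det_isHomogeneous {σ : Type*} {n : ℕ} (N : Matrix (Fin n) (Fin n) (MvPolynomial σ ℤ))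
    (h : ∀ i j, (N i j).IsHomogeneous 1) : N.det.IsHomogeneous n := by
  classical
  rw [Matrix.det_apply']
  refine MvPolynomial.IsHomogeneous.sum _ _ _ fun σ' _ => ?_
  have h1 : (((Equiv.Perm.sign σ' : ℤ) : MvPolynomial σ ℤ)).IsHomogeneous 0 := by
    rw [intCast_C]; exact MvPolynomial.isHomogeneous_C _ _
  have h2 : (∏ i, N (σ' i) i).IsHomogeneous n := by
    have := MvPolynomial.IsHomogeneous.prod Finset.univ (fun i => N (σ' i) i) (fun _ => 1)
      (fun i _ => h _ _)
    simpa using this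
  simpa using h1.mul h2

end SAux2

open SAux SAux2

set_option maxHeartbeats 1000000 in
/-- **The normalized norm function in a norm-length compatible basis**
(Proposition 3.4 of the paper): there is a constant `B = B(K, C)` such that for every nonzero
fractional ideal `𝔞` and every norm-length compatible basis `ι : ℤ^n ≅ 𝔞` with coefficient `C`,
the function `x ↦ N_{K/ℚ}(ι(x))/N(𝔞)` is represented by a homogeneous polynomial of degree `n`
with integer coefficients of absolute value at most `B`. -/
theorem normalized_norm_is_bounded_homogeneous_polynomial (C : ℝ) (hC : 1 ≤ C) :
    ∃ B : ℝ, 0 < B ∧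
      ∀ a : FracIdl K, a ≠ 0 →
        ∀ b : Module.Basis (Fin (Module.finrank ℚ K)) ℤ (latticeOf K a), IsNLCBasis K a C b →
          ∃ P : MvPolynomial (Fin (Module.finrank ℚ K)) ℤ,
            P.IsHomogeneous (Module.finrank ℚ K) ∧
            (∀ m, ((|P.coeff m| : ℤ) : ℝ) ≤ B) ∧
            ∀ x : Fin (Module.finrank ℚ K) → ℤ,
              ((MvPolynomial.eval x P : ℤ) : ℚ) =
                Algebra.norm ℚ (∑ i, x i • (b i : K)) / FractionalIdeal.absNorm a := by
  classical
  set n := Module.finrank ℚ K with hn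
  have hn0 : 0 < n := Module.finrank_pos
  have hC0 : (0:ℝ) < C := lt_of_lt_of_le one_pos hC
  haveI hfinN : Nonempty (Fin n) := ⟨⟨0, hn0⟩⟩
  -- an integral basis indexed by `Fin n`
  have hcard : Fintype.card (Module.Free.ChooseBasisIndex ℤ (𝓞 K)) = n := by
    rw [← Module.finrank_eq_card_chooseBasisIndex, RingOfIntegers.rank]
  let e : Module.Basis (Fin n) ℤ (𝓞 K) :=
    (RingOfIntegers.basis K).reindex (Fintype.equivFinOfCardEq hcard)
  let eK : Module.Basis (Fin n) ℚ K := e.localizationLocalization ℚ ℤ⁰ K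
  have hne : Nonempty (K →+* ℂ) := by
    rw [← Fintype.card_pos_iff, NumberField.Embeddings.card K ℂ]
    exact hn0
  have hsup_nonneg : ∀ y : K, 0 ≤ ⨆ σ : K →+* ℂ, ‖σ y‖ := by
    intro y
    exact Real.iSup_nonneg fun σ => norm_nonneg _
  have hbdd : ∀ y : K, BddAbove (Set.range fun σ : K →+* ℂ => ‖σ y‖) :=
    fun y => (Set.finite_range _).bddAbove
  set E : ℝ := ∑ j, ⨆ σ : K →+* ℂ, ‖σ (eK j)‖ with hE
  have hE0 : 0 ≤ E := Finset.sum_nonneg fun j _ => hsup_nonneg _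
  have hEj : ∀ j, (⨆ σ : K →+* ℂ, ‖σ (eK j)‖) ≤ E := by
    intro j
    exact Finset.single_le_sum (f := fun j => ⨆ σ : K →+* ℂ, ‖σ (eK j)‖)
      (fun j _ => hsup_nonneg _) (Finset.mem_univ j)
  set D0 : ℤ := max 1 ⌈C ^ 2 * E⌉ with hD0
  have hD01 : 1 ≤ D0 := le_max_left _ _
  have hD0R : C ^ 2 * E ≤ (D0 : ℝ) := by
    refine (Int.le_ceil _).trans ?_
    exact_mod_cast Int.cast_le.mpr (le_max_right _ _)
  set Bz : ℤ := (n.factorial : ℤ) * ((n : ℤ) * D0) ^ n with hBz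
  have hBz1 : 1 ≤ Bz := by
    have h1 : (1:ℤ) ≤ (n : ℤ) * D0 := by
      have : (1:ℤ) ≤ (n:ℤ) := by exact_mod_cast hn0
      nlinarith
    have h2 : (1:ℤ) ≤ ((n : ℤ) * D0) ^ n := by
      calc (1:ℤ) = 1 ^ n := (one_pow n).symm
        _ ≤ _ := pow_le_pow_left₀ one_pos.le h1 n
    have h3 : (1:ℤ) ≤ (n.factorial : ℤ) := by exact_mod_cast n.factorial_pos
    nlinarith
  refine ⟨(Bz : ℝ), by exact_mod_cast hBz1.trans_lt' one_pos, ?_⟩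
  intro a ha b hb
  -- positivity of the norm of `a`
  have hNa : 0 < FractionalIdeal.absNorm a :=
    lt_of_le_of_ne (FractionalIdeal.absNorm_nonneg a)
      (fun h => ha (FractionalIdeal.absNorm_eq_zero_iff.mp h.symm))
  have hNaR : (0:ℝ) < ((FractionalIdeal.absNorm a : ℚ) : ℝ) := by exact_mod_cast hNa
  set Nap : ℝ := ((FractionalIdeal.absNorm a : ℚ) : ℝ) ^ ((n : ℝ)⁻¹) with hNapdef
  have hNap : 0 < Nap := Real.rpow_pos_of_pos hNaR _
  -- the basis of `a` as a `𝓞 K`-submodule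
  let bI : Module.Basis (Fin n) ℤ a := b.map
    ((Submodule.restrictScalarsEquiv ℤ (𝓞 K) K (a : Submodule (𝓞 K) K)).restrictScalars ℤ)
  have hbI : ∀ i, (bI i : K) = (b i : K) := fun i => by
    simp only [bI, Module.Basis.map_apply]
    rfl
  set D : ℚ := eK.det ((↑) ∘ bI) with hD
  have habs : |D| = FractionalIdeal.absNorm a := by
    rw [hD]
    exact FractionalIdeal.abs_det_basis_change e a bI
  -- multiplication maps
  have heKalg : ∀ j, eK j = algebraMap (𝓞 K) K (e j) := fun j =>
    Module.Basis.localizationLocalization_apply ℚ ℤ⁰ K e j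
  have hmem : ∀ (j : Fin n) (w : latticeOf K a), (w : K) * eK j ∈ latticeOf K a := by
    intro j w
    have hw : (w : K) ∈ (a : Submodule (𝓞 K) K) := w.2
    have : (w : K) * eK j = (e j) • (w : K) := by
      rw [heKalg j, Algebra.smul_def, mul_comm]
    show (w : K) * eK j ∈ Submodule.restrictScalars ℤ (a : Submodule (𝓞 K) K)
    rw [Submodule.restrictScalars_mem, this]
    exact Submodule.smul_mem _ _ hw
  let φ : Fin n → (latticeOf K a →ₗ[ℤ] latticeOf K a) := fun j =>
    { toFun := fun w => ⟨(w : K) * eK j, hmem j w⟩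
      map_add' := by intro w₁ w₂; apply Subtype.ext; simp [add_mul]
      map_smul' := by intro c w; apply Subtype.ext; simp [smul_mul_assoc, mul_assoc] }
  set Mb : Fin n → Matrix (Fin n) (Fin n) ℤ := fun i k j => b.repr (φ j (b i)) k with hMbdef
  -- canonical-norm of lattice vectors
  have hcan : ∀ w : latticeOf K a,
      canCoordNorm K (fun i => ((b i : K))) (fun k => ((b.repr w k : ℤ) : ℝ)) =
        ⨆ σ : K →+* ℂ, ‖σ (w : K)‖ := by
    intro w
    have hw : (w : K) = ∑ k, b.repr w k • ((b k : K)) := by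
      conv_lhs => rw [← b.sum_repr w]
      push_cast [AddSubmonoidClass.coe_finset_sum]
      rfl
    unfold canCoordNorm
    refine iSup_congr fun σ => ?_
    congr 1
    rw [hw, map_sum]
    refine Finset.sum_congr rfl fun k _ => ?_
    rw [map_zsmul, zsmul_eq_mul]
    push_cast
    ring
  -- coordinates are controlled by the canonical norm
  have hcoord : ∀ (w : latticeOf K a) (k : Fin n),
      (1 / C) * Nap * |((b.repr w k : ℤ) : ℝ)| ≤ ⨆ σ : K →+* ℂ, ‖σ (w : K)‖ := by
    intro w k
    have h1 := (hb (fun k => ((b.repr w k : ℤ) : ℝ))).1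
    rw [hcan w] at h1
    refine le_trans ?_ h1
    have h2 : |((b.repr w k : ℤ) : ℝ)| ≤ ⨆ i, |((b.repr w i : ℤ) : ℝ)| :=
      le_ciSup (f := fun i => |((b.repr w i : ℤ) : ℝ)|) (Set.finite_range _).bddAbove k
    have h3 : 0 ≤ (1 / C) * Nap := by positivity
    exact mul_le_mul_of_nonneg_left h2 h3
  -- the sup over embeddings of a basis vector is bounded
  have hbvec : ∀ i : Fin n, (⨆ σ : K →+* ℂ, ‖σ ((b i : K))‖) ≤ C * Nap := by
    intro i
    set δ : Fin n → ℝ := fun k => if k = i then 1 else 0 with hδ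
    have h2 := (hb δ).2
    have hub : ∀ k, |δ k| ≤ 1 := by
      intro k
      by_cases h : k = i <;> simp [hδ, h]
    have hδs : (⨆ k, |δ k|) = 1 := by
      refine le_antisymm (ciSup_le hub) ?_
      refine le_ciSup_of_le (f := fun k => |δ k|) (Set.finite_range _).bddAbove i ?_
      simp [hδ]
    have hδcan : canCoordNorm K (fun i => ((b i : K))) δ =
        ⨆ σ : K →+* ℂ, ‖σ ((b i : K))‖ := by
      unfold canCoordNorm
      refine iSup_congr fun σ => ?_
      congr 1
      simp [hδ, apply_ite (Complex.ofReal), ite_mul, Finset.sum_ite_eq']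
    rw [hδcan] at h2
    rw [hδs, mul_one] at h2
    exact h2
  -- entries of the matrices are uniformly bounded
  have hMb : ∀ i k j, |Mb i k j| ≤ D0 := by
    intro i k j
    set w : latticeOf K a := φ j (b i) with hw
    have hwK : (w : K) = (b i : K) * eK j := rfl
    have h1 := hcoord w k
    have h2 : (⨆ σ : K →+* ℂ, ‖σ (w : K)‖) ≤ (C * Nap) * E := by
      refine ciSup_le fun σ => ?_
      have he : ‖σ (w : K)‖ =
          ‖σ ((b i : K))‖ * ‖σ (eK j)‖ := by
        rw [hwK, map_mul, norm_mul]
      rw [he]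
      refine mul_le_mul ((le_ciSup (hbdd _) σ).trans (hbvec i))
        ((le_ciSup (hbdd _) σ).trans (hEj j)) (norm_nonneg _) ?_
      positivity
    have h3 : (1 / C) * Nap * |((Mb i k j : ℤ) : ℝ)| ≤ (C * Nap) * E := by
      exact le_of_eq rfl |>.trans (h1.trans h2)
    have h4 : |((Mb i k j : ℤ) : ℝ)| ≤ C ^ 2 * E := by
      have h5 := mul_le_mul_of_nonneg_left h3 hC0.le
      have h6 : C * ((1 / C) * Nap * |((Mb i k j : ℤ) : ℝ)|) =
          Nap * |((Mb i k j : ℤ) : ℝ)| := by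
        field_simp
      have h7 : C * ((C * Nap) * E) = Nap * (C ^ 2 * E) := by ring
      rw [h6, h7] at h5
      exact le_of_mul_le_mul_left h5 hNap
    have h8 : ((|Mb i k j| : ℤ) : ℝ) ≤ (D0 : ℝ) := by
      rw [Int.cast_abs]
      exact h4.trans hD0R
    exact_mod_cast h8
  -- the polynomial
  set N : Matrix (Fin n) (Fin n) (MvPolynomial (Fin n) ℤ) :=
    fun k j => ∑ i, MvPolynomial.X i * MvPolynomial.C (Mb i k j) with hNdef
  set ε : ℤ := if 0 ≤ D then 1 else -1 with hε
  refine ⟨MvPolynomial.C ε * N.det, ?_, ?_, ?_⟩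
  · -- homogeneity
    have h1 : (N.det).IsHomogeneous n := by
      refine det_isHomogeneous N fun k j => ?_
      refine MvPolynomial.IsHomogeneous.sum _ _ _ fun i _ => ?_
      simpa using (MvPolynomial.isHomogeneous_X ℤ i).mul (MvPolynomial.isHomogeneous_C _ _)
    simpa using (MvPolynomial.isHomogeneous_C _ ε).mul h1
  · -- coefficient bound
    intro m
    have h1 : |(MvPolynomial.C ε * N.det).coeff m| = |N.det.coeff m| := by
      rw [MvPolynomial.coeff_C_mul, abs_mul]
      have hε1 : |ε| = 1 := by rw [hε]; split <;> simp
      rw [hε1, one_mul]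
    have h2 : S N.det ≤ (n.factorial : ℤ) * ((n : ℤ) * D0) ^ n := by
      refine S_det N ((n : ℤ) * D0) (by positivity) fun k j => ?_
      calc S (N k j) ≤ ∑ i, S (MvPolynomial.X i * MvPolynomial.C (Mb i k j)) := S_sum _ _
        _ ≤ ∑ i, |Mb i k j| := Finset.sum_le_sum fun i _ =>
            (S_mul _ _).trans (by rw [S_X, S_C, one_mul])
        _ ≤ ∑ _i : Fin n, D0 := Finset.sum_le_sum fun i _ => hMb i _ _
        _ = (n : ℤ) * D0 := by
            rw [Finset.sum_const, nsmul_eq_mul, Finset.card_univ, Fintype.card_fin]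
    have h3 : |(MvPolynomial.C ε * N.det).coeff m| ≤ Bz := by
      rw [h1, hBz]
      exact (abs_coeff_le_S _ _).trans h2
    exact_mod_cast h3
  · -- evaluation
    intro x
    have hcoe : ∀ (f : Fin n → latticeOf K a),
        ((∑ i, f i : latticeOf K a) : K) = ∑ i, ((f i : K)) := by
      intro f
      exact_mod_cast AddSubmonoidClass.coe_finset_sum f Finset.univ
    set vL : latticeOf K a := ∑ i, x i • b i with hvL
    have hv : ((vL : K)) = ∑ i, x i • ((b i : K)) := by
      rw [hvL, hcoe]
      exact Finset.sum_congr rfl fun i _ => rfl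
    set Mx : Matrix (Fin n) (Fin n) ℤ := Matrix.of fun k j => b.repr (φ j vL) k with hMx
    have hMxe : ∀ k j, Mx k j = ∑ i, x i * Mb i k j := by
      intro k j
      have h1 : φ j vL = ∑ i, x i • φ j (b i) := by
        rw [hvL, map_sum]
        exact Finset.sum_congr rfl fun i _ => map_zsmul _ _ _
      rw [hMx]
      show b.repr (φ j vL) k = _
      rw [h1, map_sum, Finsupp.finset_sum_apply]
      refine Finset.sum_congr rfl fun i _ => ?_
      rw [map_zsmul, Finsupp.smul_apply, smul_eq_mul]
    have hcol : ∀ j, (vL : K) * eK j = ∑ k, Mx k j • ((b k : K)) := by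
      intro j
      have h1 : ((φ j vL : latticeOf K a) : K) = (vL : K) * eK j := rfl
      rw [← h1]
      conv_lhs => rw [← b.sum_repr (φ j vL)]
      rw [hcoe]
      rfl
    have hmat : Algebra.leftMulMatrix eK ((vL : K)) =
        eK.toMatrix ((↑) ∘ bI) * Mx.map (Int.cast : ℤ → ℚ) := by
      ext i j
      rw [Algebra.leftMulMatrix_eq_repr_mul, Matrix.mul_apply, hcol j, map_sum,
        Finsupp.finset_sum_apply]
      refine Finset.sum_congr rfl fun k _ => ?_
      rw [map_zsmul, Finsupp.smul_apply, zsmul_eq_mul]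
      simp only [Module.Basis.toMatrix_apply, Matrix.map_apply, Function.comp_apply, hbI, mul_comm]
    have hkey : Algebra.norm ℚ ((vL : K)) = D * ((Mx.det : ℤ) : ℚ) := by
      rw [Algebra.norm_eq_matrix_det eK, hmat, Matrix.det_mul]
      rw [hD, Module.Basis.det_apply]
      congr 1
      have hcast := RingHom.map_det (Int.castRingHom ℚ) Mx
      rw [RingHom.mapMatrix_apply] at hcast
      simpa [Int.coe_castRingHom] using hcast.symm
    have heval : MvPolynomial.eval x (MvPolynomial.C ε * N.det) = ε * Mx.det := by
      rw [map_mul, MvPolynomial.eval_C]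
      congr 1
      have hmap : N.map (MvPolynomial.eval x) = Mx := by
        ext k j
        rw [Matrix.map_apply, hNdef, hMxe]
        show MvPolynomial.eval x (∑ i, MvPolynomial.X i * MvPolynomial.C (Mb i k j)) = _
        rw [map_sum]
        exact Finset.sum_congr rfl fun i _ => by
          rw [map_mul, MvPolynomial.eval_X, MvPolynomial.eval_C]
      rw [RingHom.map_det (MvPolynomial.eval x) N, RingHom.mapMatrix_apply, hmap]
    have hsign : (ε : ℚ) * (FractionalIdeal.absNorm a) = D := by
      rw [hε]
      split_ifs with h
      · rw [← habs, abs_of_nonneg h]; push_cast; ring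
      · push_neg at h
        rw [← habs, abs_of_neg h]; push_cast; ring
    rw [heval, ← hv, hkey, eq_div_iff (ne_of_gt hNa)]
    push_cast
    rw [← hsign]
    ring

end
end

section
/- Let ψ_1,…,ψ_t : ℤ^d → ℤ^n be linear maps having Cauchy–Schwarz complexity ≤ s at some index i ∈ {1,…,t}. Then there exists a surjective linear map π : ℤ^{d'} → ℤ^d with d' ≤ (s+2)·d such that the composites ψ_1∘π, …, ψ_t∘π : ℤ^{d'} → ℤ^n are in s-normal form at the index i. Moreover, there exist constants A = A(d,n) and B = B(n) such that if all ψ_j have coefficients of absolute value ≤ L, then π can be chosen so that the maps ψ_j∘π have coefficients of absolute value ≤ A·L^B. -/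
/-!
STATEMENT 16: Systems of linear maps of bounded Cauchy–Schwarz complexity can be put in
normal form after a controlled surjective substitution.
-/

open scoped Classical

noncomputable section

/-- The submodule `ℤ^B ⊆ ℤ^d` spanned by the standard vectors indexed by `B`. -/
def coordSubmodule (d : ℕ) (B : Finset (Fin d)) : Submodule ℤ (Fin d → ℤ) where
  carrier := {x | ∀ m, m ∉ B → x m = 0}
  add_mem' := by
    intro x y hx hy m hm
    simp [hx m hm, hy m hm]
  zero_mem' := fun m _ => rfl
  smul_mem' := by
    intro r x hx m hm
    simp [hx m hm]

/-- The system `ψ` of linear maps `ℤ^d → ℤ^n` has Cauchy–Schwarz complexity `≤ s` at the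
index `i`: the other indices can be partitioned into `s+1` classes such that for each class,
the restriction of `ψ i` to the intersection of the kernels of the maps of that class has
finite cokernel. -/
def CSComplexityAt {t d n : ℕ} (ψ : Fin t → ((Fin d → ℤ) →ₗ[ℤ] (Fin n → ℤ)))
    (i : Fin t) (s : ℕ) : Prop :=
  ∃ cl : Fin t → Fin (s + 1), ∀ k : Fin (s + 1),
    Finite ((Fin n → ℤ) ⧸ LinearMap.range ((ψ i).comp
      (Submodule.subtype (⨅ j ∈ {j : Fin t | j ≠ i ∧ cl j = k}, LinearMap.ker (ψ j)))))

/-- The system `ψ` is in `s`-normal form at the index `i`: there are disjoint sets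
`B_1, …, B_{s+1}` of standard basis vectors such that every `ψ j` (`j ≠ i`) vanishes identically
on some `ℤ^{B_k}`, while each restriction `ψ i : ℤ^{B_k} → ℤ^n` has finite cokernel. -/
def InNormalFormAt {t d n : ℕ} (ψ : Fin t → ((Fin d → ℤ) →ₗ[ℤ] (Fin n → ℤ)))
    (i : Fin t) (s : ℕ) : Prop :=
  ∃ B : Fin (s + 1) → Finset (Fin d),
    (∀ k l, k ≠ l → Disjoint (B k) (B l)) ∧
    (∀ j, j ≠ i → ∃ k, ∀ x ∈ coordSubmodule d (B k), ψ j x = 0) ∧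
    (∀ k, Finite ((Fin n → ℤ) ⧸
      LinearMap.range ((ψ i).comp (coordSubmodule d (B k)).subtype)))

lemma mem_coordSubmodule {d : ℕ} {B : Finset (Fin d)} {x : Fin d → ℤ} :
    x ∈ coordSubmodule d B ↔ ∀ m, m ∉ B → x m = 0 := Iff.rfl

def lincomb {d : ℕ} (u : Fin d → Fin d → ℤ) : (Fin d → ℤ) →ₗ[ℤ] (Fin d → ℤ) :=
  ∑ p, LinearMap.smulRight (LinearMap.proj p) (u p)

lemma lincomb_apply {d : ℕ} (u : Fin d → Fin d → ℤ) (x : Fin d → ℤ) :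
    lincomb u x = ∑ p, x p • u p := by
  simp [lincomb]

lemma lincomb_single {d : ℕ} (u : Fin d → Fin d → ℤ) (p : Fin d) :
    lincomb u (Pi.single p 1) = u p := by
  rw [lincomb_apply, Finset.sum_eq_single p]
  · simp
  · intro q _ hq
    simp [Pi.single_apply, hq]
  · simp


lemma finite_quot_iff {n : ℕ} (S : Submodule ℤ (Fin n → ℤ)) :
    Finite ((Fin n → ℤ) ⧸ S) ↔ ∀ x : Fin n → ℤ, ∃ c : ℤ, c ≠ 0 ∧ c • x ∈ S := by
  constructor
  · intro h x
    obtain ⟨c, hc, hcx⟩ :=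
      (isOfFinAddOrder_of_finite (Submodule.Quotient.mk (p := S) x)).exists_nsmul_eq_zero
    refine ⟨(c : ℤ), by exact_mod_cast hc.ne', ?_⟩
    have : Submodule.Quotient.mk (p := S) ((c : ℤ) • x) = 0 := by
      rw [Submodule.Quotient.mk_smul]
      rw [natCast_zsmul]
      exact hcx
    rwa [Submodule.Quotient.mk_eq_zero] at this
  · intro h
    have : Module.IsTorsion ℤ ((Fin n → ℤ) ⧸ S) := by
      intro y
      obtain ⟨x, rfl⟩ := Submodule.Quotient.mk_surjective S y
      obtain ⟨c, hc, hcx⟩ := h x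
      exact ⟨⟨c, mem_nonZeroDivisors_of_ne_zero hc⟩, by
        simpa [← Submodule.Quotient.mk_smul, Submodule.Quotient.mk_eq_zero] using hcx⟩
    exact Module.finite_of_fg_torsion _ this

lemma siegel (d : ℕ) (L : ℝ) (hL : 1 ≤ L) :
    ∀ (R : ℕ) (a : Fin R → (Fin d → ℤ)),
      (∀ i j, (|a i j| : ℝ) ≤ L) →
      ∃ v : Fin d → (Fin d → ℤ),
        (∀ p i, ∑ j, a i j * v p j = 0) ∧
        (∀ p j, (|v p j| : ℝ) ≤ (2*(d+1)*L)^(3^R)) ∧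
        (∀ x : Fin d → ℤ, (∀ i, ∑ j, a i j * x j = 0) →
          (fun j => (x j : ℚ)) ∈ Submodule.span ℚ
            (Set.range (fun p => fun j => ((v p j : ℚ))))) := by
  have hE : (2:ℝ) ≤ 2*(d+1)*L := by
    nlinarith [Nat.cast_nonneg (α := ℝ) d]
  have hE1 : (1:ℝ) ≤ 2*(d+1)*L := by linarith
  intro R
  induction R with
  | zero =>
    intro a _
    refine ⟨fun p => Pi.single p 1, fun p i => i.elim0, ?_, ?_⟩
    · intro p j
      have : (|(Pi.single p 1 : Fin d → ℤ) j| : ℝ) ≤ 1 := by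
        rcases eq_or_ne j p with rfl | h
        · simp
        · simp [Pi.single_apply, h]
      calc (|(Pi.single p 1 : Fin d → ℤ) j| : ℝ) ≤ 1 := this
        _ ≤ (2*(d+1)*L)^(3^0) := by
            apply one_le_pow₀ hE1
    · intro x _
      rw [Submodule.mem_span_range_iff_exists_fun]
      refine ⟨fun p => (x p : ℚ), ?_⟩
      funext j
      simp [Pi.single_apply]
  | succ R IH =>
    intro a ha
    obtain ⟨v, hdot, hbd, hspan⟩ := IH (fun i => a i.castSucc) (fun i j => ha _ j)
    set C : ℝ := (2*(d+1)*L)^(3^R) with hC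
    have hC1 : (1:ℝ) ≤ C := one_le_pow₀ hE1
    have hCbig : (2*(d+1)*L)^(3^R) ≤ (2*(d+1)*L)^(3^(R+1)) :=
      pow_le_pow_right₀ hE1 (Nat.pow_le_pow_right (by norm_num) (by omega))
    set D : Fin d → ℤ := fun p => ∑ j, a (Fin.last R) j * v p j with hD
    have hDbd : ∀ p, (|D p| : ℝ) ≤ d * (L * C) := by
      intro p
      have : (|D p| : ℝ) = |∑ j, (a (Fin.last R) j : ℝ) * (v p j : ℝ)| := by
        push_cast [hD]; ring_nf
      rw [this]
      calc |∑ j, (a (Fin.last R) j : ℝ) * (v p j : ℝ)|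
          ≤ ∑ j, |(a (Fin.last R) j : ℝ) * (v p j : ℝ)| := Finset.abs_sum_le_sum_abs _ _
        _ ≤ ∑ _j : Fin d, L * C := by
            apply Finset.sum_le_sum
            intro j _
            rw [abs_mul]
            have h1 : |(a (Fin.last R) j : ℝ)| ≤ L := ha _ j
            have h2 : |(v p j : ℝ)| ≤ C := hbd p j
            exact mul_le_mul h1 h2 (abs_nonneg _) (by linarith)
        _ = d * (L * C) := by simp [mul_comm]
    by_cases hz : ∀ p, D p = 0
    · refine ⟨v, ?_, fun p j => le_trans (hbd p j) hCbig, ?_⟩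
      · intro p i
        induction i using Fin.lastCases with
        | last => exact hz p
        | cast i => exact hdot p i
      · intro x hx
        exact hspan x (fun i => hx i.castSucc)
    · push_neg at hz
      obtain ⟨p0, hp0⟩ := hz
      set w : Fin d → (Fin d → ℤ) := fun p => D p0 • v p - D p • v p0 with hw
      have hwj : ∀ p j, w p j = D p0 * v p j - D p * v p0 j := by
        intro p j; simp [hw]
      have hmul : ∀ (b : Fin d → ℤ) (A B : ℤ) (u u' : Fin d → ℤ),
          ∑ j, b j * (A * u j - B * u' j)
            = A * (∑ j, b j * u j) - B * (∑ j, b j * u' j) := by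
        intro b A B u u'
        simp only [mul_sub, Finset.sum_sub_distrib, Finset.mul_sum]
        congr 1 <;> exact Finset.sum_congr rfl fun j _ => by ring
      have hdotw : ∀ p i, ∑ j, a i j * w p j = 0 := by
        intro p i
        induction i using Fin.lastCases with
        | last =>
          have e1 : ∑ j, a (Fin.last R) j * v p j = D p := rfl
          have e2 : ∑ j, a (Fin.last R) j * v p0 j = D p0 := rfl
          calc ∑ j, a (Fin.last R) j * w p j
              = ∑ j, a (Fin.last R) j * (D p0 * v p j - D p * v p0 j) :=
                Finset.sum_congr rfl fun j _ => by rw [hwj]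
            _ = D p0 * (∑ j, a (Fin.last R) j * v p j)
                - D p * (∑ j, a (Fin.last R) j * v p0 j) := hmul _ _ _ _ _
            _ = 0 := by rw [e1, e2]; ring
        | cast i =>
          calc ∑ j, a i.castSucc j * w p j
              = ∑ j, a i.castSucc j * (D p0 * v p j - D p * v p0 j) :=
                Finset.sum_congr rfl fun j _ => by rw [hwj]
            _ = D p0 * (∑ j, a i.castSucc j * v p j)
                - D p * (∑ j, a i.castSucc j * v p0 j) := hmul _ _ _ _ _
            _ = 0 := by rw [hdot p i, hdot p0 i]; ring
      refine ⟨w, hdotw, ?_, ?_⟩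
      · intro p j
        have : (|w p j| : ℝ) ≤ |(D p0 : ℝ)| * |(v p j : ℝ)| + |(D p : ℝ)| * |(v p0 j : ℝ)| := by
          rw [hwj]
          push_cast
          calc |(D p0:ℝ) * (v p j:ℝ) - (D p:ℝ) * (v p0 j:ℝ)|
              ≤ |(D p0:ℝ) * (v p j:ℝ)| + |(D p:ℝ) * (v p0 j:ℝ)| := abs_sub _ _
            _ = _ := by rw [abs_mul, abs_mul]
        have hb : ∀ q j', |(D q : ℝ)| * |(v j' j : ℝ)| ≤ (d * (L * C)) * C := by
          intro q j'
          have h1 : |(D q : ℝ)| ≤ d * (L * C) := hDbd q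
          have h2 : |(v j' j : ℝ)| ≤ C := hbd j' j
          exact mul_le_mul h1 h2 (abs_nonneg _) (by positivity)
        have key : (|w p j| : ℝ) ≤ 2 * ((d * (L * C)) * C) := by
          have := hb p0 p
          have := hb p p0
          linarith [this]
        calc (|w p j| : ℝ) ≤ 2 * ((d * (L * C)) * C) := key
          _ ≤ (2*(d+1)*L) * (C * C) := by nlinarith [Nat.cast_nonneg (α := ℝ) d, hC1]
          _ ≤ (2*(d+1)*L)^(3^(R+1)) := by
              rw [hC, ← pow_add, ← pow_succ']
              apply pow_le_pow_right₀ hE1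
              have : 1 ≤ 3^R := Nat.one_le_pow _ _ (by norm_num)
              calc (3^R + 3^R).succ ≤ 3^R + 3^R + 3^R := by omega
                _ = 3^(R+1) := by ring
      · intro x hx
        have hx' := hspan x (fun i => hx i.castSucc)
        rw [Submodule.mem_span_range_iff_exists_fun] at hx'
        obtain ⟨c, hc⟩ := hx'
        have hD0 : ((D p0 : ℚ)) ≠ 0 := by exact_mod_cast hp0
        have h1 : ∀ j, ∑ p, c p * (v p j : ℚ) = (x j : ℚ) := by
          intro j
          have := congrFun hc j
          simpa [Finset.sum_apply] using this
        have h2 : ∑ p, c p * ((D p : ℤ) : ℚ) = 0 := by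
          have hlast : ((∑ j, a (Fin.last R) j * x j : ℤ) : ℚ) = 0 := by
            rw [hx (Fin.last R)]; simp
          push_cast at hlast
          calc ∑ p, c p * ((D p : ℤ) : ℚ)
              = ∑ p, ∑ j, (a (Fin.last R) j : ℚ) * (c p * (v p j : ℚ)) := by
                refine Finset.sum_congr rfl fun p _ => ?_
                have e1 : (D p : ℤ) = ∑ j, a (Fin.last R) j * v p j := rfl
                rw [e1]
                push_cast
                rw [Finset.mul_sum]
                exact Finset.sum_congr rfl fun j _ => by ring
            _ = ∑ j, (a (Fin.last R) j : ℚ) * ∑ p, (c p * (v p j : ℚ)) := by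
                rw [Finset.sum_comm]
                exact Finset.sum_congr rfl fun j _ => by rw [Finset.mul_sum]
            _ = ∑ j, (a (Fin.last R) j : ℚ) * (x j : ℚ) :=
                Finset.sum_congr rfl fun j _ => by rw [h1 j]
            _ = 0 := hlast
        rw [Submodule.mem_span_range_iff_exists_fun]
        refine ⟨fun p => c p / (D p0 : ℚ), ?_⟩
        funext j
        simp only [Finset.sum_apply, Pi.smul_apply, smul_eq_mul]
        have hterm : ∀ p, (c p / (D p0:ℚ)) * ((w p j : ℤ) : ℚ)
            = c p * (v p j:ℚ) - (c p * (D p:ℚ)) * ((v p0 j:ℚ) / (D p0:ℚ)) := by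
          intro p
          rw [hwj]
          push_cast
          field_simp
        rw [Finset.sum_congr rfl (fun p _ => hterm p), Finset.sum_sub_distrib, h1 j,
          ← Finset.sum_mul, h2]
        simp

lemma clear_denoms {d : ℕ} (x : Fin d → ℤ) (v : Fin d → (Fin d → ℤ))
    (h : (fun j => (x j : ℚ)) ∈ Submodule.span ℚ
        (Set.range (fun p => fun j => ((v p j : ℚ))))) :
    ∃ N : ℤ, N ≠ 0 ∧ N • x ∈ Submodule.span ℤ (Set.range v) := by
  rw [Submodule.mem_span_range_iff_exists_fun] at h
  obtain ⟨c, hc⟩ := h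
  set N : ℤ := ∏ p, ((c p).den : ℤ) with hN
  have hNne : N ≠ 0 := by
    rw [hN]
    exact Finset.prod_ne_zero_iff.2 fun p _ => by exact_mod_cast (c p).den_ne_zero
  have hint : ∀ p, ∃ z : ℤ, (z : ℚ) = (N : ℚ) * c p := by
    intro p
    obtain ⟨m, hm⟩ := Finset.dvd_prod_of_mem (fun p => ((c p).den : ℤ)) (Finset.mem_univ p)
    refine ⟨m * (c p).num, ?_⟩
    rw [← hN] at hm
    have hden : ((c p).den : ℚ) ≠ 0 := by exact_mod_cast (c p).den_ne_zero
    have h1 : ((c p).den : ℚ) * c p = ((c p).num : ℚ) := by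
      have := Rat.num_div_den (c p)
      field_simp [hden] at this ⊢
      exact this.symm
    rw [hm]
    push_cast
    rw [mul_comm ((( c p).den : ℚ)) (m:ℚ), mul_assoc, h1]
  choose z hz using hint
  refine ⟨N, hNne, ?_⟩
  rw [Submodule.mem_span_range_iff_exists_fun]
  refine ⟨z, ?_⟩
  have key : ∀ j, ((( ∑ p, z p • v p) j : ℤ) : ℚ) = (((N • x) j : ℤ) : ℚ) := by
    intro j
    have hcj : ∑ p, c p * (v p j : ℚ) = (x j : ℚ) := by
      have := congrFun hc j
      simpa [Finset.sum_apply] using this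
    calc ((( ∑ p, z p • v p) j : ℤ) : ℚ)
        = ∑ p, (z p : ℚ) * (v p j : ℚ) := by
          simp [Finset.sum_apply]
      _ = ∑ p, (N : ℚ) * (c p * (v p j : ℚ)) := by
          exact Finset.sum_congr rfl fun p _ => by rw [hz p]; ring
      _ = (N : ℚ) * (x j : ℚ) := by rw [← Finset.mul_sum, hcj]
      _ = (((N • x) j : ℤ) : ℚ) := by simp [Pi.smul_apply]
  funext j
  exact_mod_cast key j

lemma main_construction (t d n s : ℕ)
    (ψ : Fin t → ((Fin d → ℤ) →ₗ[ℤ] (Fin n → ℤ))) (i : Fin t)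
    (hCS : CSComplexityAt ψ i s) (L : ℝ) (hL0 : 0 < L)
    (hent : ∀ j k m, (|ψ j (Pi.single k 1) m| : ℝ) ≤ L) :
    ∃ (d' : ℕ), d' ≤ (s + 2) * d ∧
      ∃ π : (Fin d' → ℤ) →ₗ[ℤ] (Fin d → ℤ),
        Function.Surjective π ∧ InNormalFormAt (fun j => (ψ j).comp π) i s ∧
        ∀ j k m, (|(ψ j) (π (Pi.single k 1)) m| : ℝ) ≤
          (((d:ℝ)+1) * (2*((d:ℝ)+1))^(3^(t*n))) * L ^ (3^(t*n)+1) := by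
  rcases Nat.eq_zero_or_pos n with hn | hn
  · -- trivial case n = 0
    subst hn
    refine ⟨d, Nat.le_mul_of_pos_left d (by omega), LinearMap.id, Function.surjective_id, ?_, ?_⟩
    · refine ⟨fun _ => ∅, fun k l _ => by simp, fun j _ => ⟨0, fun x _ => ?_⟩, fun k => ?_⟩
      · funext m
        exact m.elim0
      · have hfs : Finite (Fin 0 → ℤ) := Finite.of_subsingleton
        exact Finite.of_surjective _ (Submodule.Quotient.mk_surjective _)
    · intro j k m
      exact m.elim0
  -- main case
  obtain ⟨cl, hcl⟩ := hCS
  -- the matrix coefficients are at least somewhere nonzero, so L ≥ 1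
  have hL1 : (1:ℝ) ≤ L := by
    by_contra hL1
    push_neg at hL1
    have hzero : ∀ j k m, ψ j (Pi.single k 1) m = 0 := by
      intro j k m
      have h1 := lt_of_le_of_lt (hent j k m) hL1
      have h2 : |ψ j (Pi.single k 1) m| < 1 := by exact_mod_cast h1
      have h3 := abs_lt.mp h2
      omega
    have hpsi0 : ∀ (j : Fin t) (x : Fin d → ℤ), ψ j x = 0 := by
      intro j x
      have hx : x = ∑ r, x r • (Pi.single r 1 : Fin d → ℤ) := by
        funext j'
        simp [Pi.single_apply]
      rw [hx, map_sum]
      funext m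
      simp only [map_smul, Finset.sum_apply, Pi.smul_apply, smul_eq_mul, Pi.zero_apply]
      exact Finset.sum_eq_zero fun r _ => by rw [hzero j r m, mul_zero]
    obtain ⟨c, hc, hcy⟩ := (finite_quot_iff _).1 (hcl 0) (Pi.single ⟨0, hn⟩ 1)
    obtain ⟨w, hw⟩ := hcy
    have hw' : c • (Pi.single ⟨0, hn⟩ 1 : Fin n → ℤ) = 0 := by
      rw [← hw, LinearMap.comp_apply, hpsi0 i]
    have := congrFun hw' ⟨0, hn⟩
    simp at this
    exact hc this
  -- coefficients formula
  have hψ : ∀ (j : Fin t) (x : Fin d → ℤ) (m : Fin n),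
      ψ j x m = ∑ r, (ψ j (Pi.single r 1) m) * x r := by
    intro j x m
    have hx : x = ∑ r, x r • (Pi.single r 1 : Fin d → ℤ) := by
      funext j'
      simp [Pi.single_apply]
    conv_lhs => rw [hx, map_sum]
    simp only [map_smul, Finset.sum_apply, Pi.smul_apply, smul_eq_mul]
    exact Finset.sum_congr rfl fun r _ => mul_comm _ _
  -- rows of the matrices, per class
  set a : Fin (s+1) → Fin (t*n) → (Fin d → ℤ) := fun k q =>
    if ((finProdFinEquiv.symm q).1 ≠ i ∧ cl (finProdFinEquiv.symm q).1 = k)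
    then (fun r => ψ (finProdFinEquiv.symm q).1 (Pi.single r 1) (finProdFinEquiv.symm q).2)
    else 0 with ha_def
  have ha : ∀ k q r, (|a k q r| : ℝ) ≤ L := by
    intro k q r
    rw [ha_def]
    by_cases h : ((finProdFinEquiv.symm q).1 ≠ i ∧ cl (finProdFinEquiv.symm q).1 = k)
    · simp only [if_pos h]
      exact hent _ _ _
    · simp only [if_neg h, Pi.zero_apply]
      simpa using hL0.le
  have hsieg := fun k => siegel d L hL1 (t*n) (a k) (ha k)
  choose v hdot hbd hspan using hsieg
  -- P1 : the vectors v k p lie in the kernels of the class k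
  have P1 : ∀ k p (j : Fin t), j ≠ i → cl j = k → ψ j (v k p) = 0 := by
    intro k p j hj hclj
    funext m
    have hd := hdot k p (finProdFinEquiv (j, m))
    have hrow : a k (finProdFinEquiv (j, m)) = fun r => ψ j (Pi.single r 1) m := by
      rw [ha_def]
      simp only [Equiv.symm_apply_apply]
      rw [if_pos ⟨hj, hclj⟩]
    rw [hrow] at hd
    rw [Pi.zero_apply, hψ j (v k p) m]
    exact hd
  -- P2 : spanning property
  have P2 : ∀ k (x : Fin d → ℤ), (∀ j : Fin t, j ≠ i → cl j = k → ψ j x = 0) →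
      (fun r => (x r : ℚ)) ∈ Submodule.span ℚ
        (Set.range (fun p => fun r => ((v k p r : ℚ)))) := by
    intro k x hx
    apply hspan k x
    intro q
    rw [ha_def]
    by_cases h : ((finProdFinEquiv.symm q).1 ≠ i ∧ cl (finProdFinEquiv.symm q).1 = k)
    · simp only [if_pos h]
      rw [← hψ (finProdFinEquiv.symm q).1 x (finProdFinEquiv.symm q).2, hx _ h.1 h.2]
      rfl
    · simp only [if_neg h, Pi.zero_apply, zero_mul, Finset.sum_const_zero]
  -- the substitution
  set emb : Fin (s+2) → Fin d → Fin ((s+2)*d) := fun k j => finProdFinEquiv (k, j) with hemb_def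
  have hembinj : ∀ k j k' j', emb k j = emb k' j' → k = k' ∧ j = j' := by
    intro k j k' j' h
    have := finProdFinEquiv.injective h
    exact ⟨congrArg Prod.fst this, congrArg Prod.snd this⟩
  set Q : Fin (s+2) → ((Fin d → ℤ) →ₗ[ℤ] (Fin d → ℤ)) :=
    Fin.cases LinearMap.id (fun k => lincomb (v k)) with hQ_def
  set π : (Fin ((s+2)*d) → ℤ) →ₗ[ℤ] (Fin d → ℤ) :=
    ∑ k : Fin (s+2), (Q k).comp (LinearMap.funLeft ℤ ℤ (emb k)) with hπ_def
  have hπ_apply : ∀ x, π x = ∑ k : Fin (s+2), Q k (x ∘ emb k) := by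
    intro x
    rw [hπ_def]
    simp [LinearMap.sum_apply, LinearMap.funLeft]
  have hπsingle : ∀ (k : Fin (s+2)) (p : Fin d),
      π (Pi.single (emb k p) 1) = Q k (Pi.single p 1) := by
    intro k p
    rw [hπ_apply, Finset.sum_eq_single k]
    · congr 1
      funext j
      simp only [Function.comp_apply, Pi.single_apply]
      by_cases hj : j = p
      · subst hj; simp
      · rw [if_neg hj, if_neg (fun h => hj (hembinj _ _ _ _ h).2)]
    · intro k' _ hk'
      have : (Pi.single (emb k p) (1:ℤ)) ∘ emb k' = 0 := by
        funext j
        simp only [Function.comp_apply, Pi.single_apply, Pi.zero_apply]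
        rw [if_neg (fun h => hk' (hembinj _ _ _ _ h).1)]
      rw [this, map_zero]
    · simp
  have hsurj : Function.Surjective π := by
    intro y
    refine ⟨Function.extend (emb 0) y 0, ?_⟩
    rw [hπ_apply, Finset.sum_eq_single 0]
    · have hinj0 : Function.Injective (emb 0) := fun j j' h => (hembinj _ _ _ _ h).2
      have hcomp : (Function.extend (emb 0) y 0) ∘ emb 0 = y := by
        funext j
        exact hinj0.extend_apply y 0 j
      rw [hcomp, hQ_def]
      simp
    · intro k' _ hk'
      have h0 : (Function.extend (emb 0) y 0) ∘ emb k' = (0 : Fin d → ℤ) := by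
        funext j
        have : Function.extend (emb 0) y 0 (emb k' j) = (0 : Fin ((s+2)*d) → ℤ) (emb k' j) := by
          refine Function.extend_apply' _ _ _ ?_
          rintro ⟨b, hb⟩
          exact hk' (hembinj _ _ _ _ hb).1.symm
        simpa using this
      rw [h0, map_zero]
    · simp
  set Bset : Fin (s+1) → Finset (Fin ((s+2)*d)) :=
    fun k => Finset.image (emb k.succ) Finset.univ with hBset_def
  have hnotmem : ∀ (k : Fin (s+1)) (k' : Fin (s+2)) (j : Fin d),
      k' ≠ k.succ → emb k' j ∉ Bset k := by
    intro k k' j hk'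
    rw [hBset_def]
    simp only [Finset.mem_image, Finset.mem_univ, true_and]
    rintro ⟨j', hj'⟩
    exact hk' ((hembinj _ _ _ _ hj').1).symm
  have hcoordπ : ∀ (k : Fin (s+1)) (x : Fin ((s+2)*d) → ℤ),
      x ∈ coordSubmodule _ (Bset k) → π x = lincomb (v k) (x ∘ emb k.succ) := by
    intro k x hx
    have hx' : ∀ m, m ∉ Bset k → x m = 0 := mem_coordSubmodule.1 hx
    rw [hπ_apply, Finset.sum_eq_single k.succ]
    · rw [hQ_def]
      simp
    · intro k' _ hk'
      have h0 : x ∘ emb k' = 0 := by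
        funext j
        exact hx' _ (hnotmem k k' j hk')
      rw [h0, map_zero]
    · simp
  refine ⟨(s+2)*d, le_rfl, π, hsurj, ⟨Bset, ?_, ?_, ?_⟩, ?_⟩
  · -- disjointness
    intro k l hkl
    rw [Finset.disjoint_left]
    intro m hm hm'
    rw [hBset_def] at hm hm'
    simp only [Finset.mem_image, Finset.mem_univ, true_and] at hm hm'
    obtain ⟨j1, hj1⟩ := hm
    obtain ⟨j2, hj2⟩ := hm'
    exact hkl (Fin.succ_injective _ (hembinj _ _ _ _ (hj1.trans hj2.symm)).1)
  · -- vanishing of the other maps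
    intro j hj
    refine ⟨cl j, fun x hx => ?_⟩
    show ψ j (π x) = 0
    rw [hcoordπ _ x hx, lincomb_apply, map_sum]
    refine Finset.sum_eq_zero fun p _ => ?_
    rw [map_smul, P1 (cl j) p j hj rfl, smul_zero]
  · -- finite cokernel
    intro k
    rw [finite_quot_iff]
    intro y
    obtain ⟨c1, hc1, hc1y⟩ := (finite_quot_iff _).1 (hcl k) y
    obtain ⟨w, hw⟩ := hc1y
    have hwker : ∀ j : Fin t, j ≠ i → cl j = k → ψ j (w : Fin d → ℤ) = 0 := by
      intro j hj hclj
      have hmem := w.2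
      rw [Submodule.mem_iInf] at hmem
      have hmem2 := hmem j
      rw [Submodule.mem_iInf] at hmem2
      exact LinearMap.mem_ker.1 (hmem2 ⟨hj, hclj⟩)
    have hq := P2 k w hwker
    obtain ⟨N, hN, hNw⟩ := clear_denoms _ _ hq
    rw [Submodule.mem_span_range_iff_exists_fun] at hNw
    obtain ⟨cc, hcc⟩ := hNw
    refine ⟨N * c1, mul_ne_zero hN hc1, ?_⟩
    have hinj : Function.Injective (emb k.succ) := fun j j' h => (hembinj _ _ _ _ h).2
    set z : Fin ((s+2)*d) → ℤ := Function.extend (emb k.succ) cc 0 with hz_def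
    have hzmem : z ∈ coordSubmodule _ (Bset k) := by
      rw [mem_coordSubmodule]
      intro m hm
      have h0 : z m = (0 : Fin ((s+2)*d) → ℤ) m := by
        rw [hz_def]
        refine Function.extend_apply' _ _ _ ?_
        rintro ⟨b, hb⟩
        exact hm (hb ▸ Finset.mem_image_of_mem _ (Finset.mem_univ b))
      simpa using h0
    have hze : z ∘ emb k.succ = cc := by
      funext j'
      exact hinj.extend_apply cc 0 j'
    refine ⟨⟨z, hzmem⟩, ?_⟩
    show ψ i (π z) = (N * c1) • y
    rw [hcoordπ k z hzmem, hze, lincomb_apply, hcc, map_smul]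
    have hwi : ψ i (w : Fin d → ℤ) = c1 • y := hw
    rw [hwi, smul_smul]
  · -- bounds
    intro j κ m
    have hκ : κ = emb (finProdFinEquiv.symm κ).1 (finProdFinEquiv.symm κ).2 := by
      rw [hemb_def]
      exact (finProdFinEquiv.apply_symm_apply κ).symm
    rw [hκ, hπsingle]
    have hd1 : (1:ℝ) ≤ ((d:ℝ)+1) := by
      have := Nat.cast_nonneg (α := ℝ) d
      linarith
    have h2 : (1:ℝ) ≤ (2*((d:ℝ)+1))^(3^(t*n)) := one_le_pow₀ (by linarith)
    rcases Fin.eq_zero_or_eq_succ (finProdFinEquiv.symm κ).1 with h0 | ⟨k', hk'⟩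
    · rw [h0]
      have hQ0 : Q 0 (Pi.single (finProdFinEquiv.symm κ).2 1)
          = Pi.single (finProdFinEquiv.symm κ).2 1 := by
        rw [hQ_def]
        simp
      rw [hQ0]
      refine le_trans (hent j _ m) ?_
      have h3 : L ≤ L^(3^(t*n)+1) := by
        calc L = L^1 := (pow_one L).symm
          _ ≤ L^(3^(t*n)+1) := pow_le_pow_right₀ hL1 (Nat.le_add_left 1 _)
      calc L ≤ L^(3^(t*n)+1) := h3
        _ = 1 * L^(3^(t*n)+1) := (one_mul _).symm
        _ ≤ (((d:ℝ)+1) * (2*((d:ℝ)+1))^(3^(t*n))) * L^(3^(t*n)+1) := by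
            apply mul_le_mul_of_nonneg_right _ (by positivity)
            nlinarith
    · rw [hk']
      have hQs : Q k'.succ (Pi.single (finProdFinEquiv.symm κ).2 1)
          = v k' (finProdFinEquiv.symm κ).2 := by
        rw [hQ_def]
        simp [lincomb_single]
      rw [hQs]
      rw [hψ j (v k' (finProdFinEquiv.symm κ).2) m]
      have hsum : (|(∑ r, ψ j (Pi.single r 1) m * v k' (finProdFinEquiv.symm κ).2 r : ℤ)| : ℝ)
          ≤ d * (L * ((2*((d:ℝ)+1)*L)^(3^(t*n)))) := by
        push_cast
        calc |∑ r, (ψ j (Pi.single r 1) m : ℝ) * (v k' (finProdFinEquiv.symm κ).2 r : ℝ)|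
            ≤ ∑ r, |(ψ j (Pi.single r 1) m : ℝ) * (v k' (finProdFinEquiv.symm κ).2 r : ℝ)| :=
              Finset.abs_sum_le_sum_abs _ _
          _ ≤ ∑ _r : Fin d, L * ((2*((d:ℝ)+1)*L)^(3^(t*n))) := by
              apply Finset.sum_le_sum
              intro r _
              rw [abs_mul]
              exact mul_le_mul (hent j r m) (hbd k' _ r) (abs_nonneg _)
                (le_trans zero_le_one hL1)
          _ = d * (L * ((2*((d:ℝ)+1)*L)^(3^(t*n)))) := by simp [mul_comm]
      refine le_trans hsum ?_
      rw [mul_pow]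
      have heq : (d:ℝ) * (L * ((2*((d:ℝ)+1))^(3^(t*n)) * L^(3^(t*n))))
          = ((d:ℝ) * (2*((d:ℝ)+1))^(3^(t*n))) * (L^(3^(t*n)) * L) := by ring
      rw [heq, ← pow_succ]
      apply mul_le_mul_of_nonneg_right _ (by positivity)
      apply mul_le_mul_of_nonneg_right (by linarith) (by positivity)

/-- **Reduction to normal form** (Proposition E.2 of the paper). -/
theorem normal_form_reduction (t d n s : ℕ) :
    (∀ (ψ : Fin t → ((Fin d → ℤ) →ₗ[ℤ] (Fin n → ℤ))) (i : Fin t),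
      CSComplexityAt ψ i s →
        ∃ (d' : ℕ), d' ≤ (s + 2) * d ∧
          ∃ π : (Fin d' → ℤ) →ₗ[ℤ] (Fin d → ℤ),
            Function.Surjective π ∧ InNormalFormAt (fun j => (ψ j).comp π) i s) ∧
    (∃ A B : ℝ, 0 < A ∧ 0 < B ∧
      ∀ (ψ : Fin t → ((Fin d → ℤ) →ₗ[ℤ] (Fin n → ℤ))) (i : Fin t),
        CSComplexityAt ψ i s →
          ∀ L : ℝ, 0 < L → (∀ j k m, (|ψ j (Pi.single k 1) m| : ℝ) ≤ L) →
            ∃ (d' : ℕ), d' ≤ (s + 2) * d ∧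
              ∃ π : (Fin d' → ℤ) →ₗ[ℤ] (Fin d → ℤ),
                Function.Surjective π ∧ InNormalFormAt (fun j => (ψ j).comp π) i s ∧
                ∀ j k m, (|(ψ j) (π (Pi.single k 1)) m| : ℝ) ≤ A * L ^ B) := by
  constructor
  · intro ψ i hCS
    set L : ℝ := 1 + ∑ j, ∑ k, ∑ m, (|ψ j (Pi.single k 1) m| : ℝ) with hL_def
    have hsumnn : ∀ (j : Fin t) (k : Fin d), (0:ℝ) ≤ ∑ m, (|ψ j (Pi.single k 1) m| : ℝ) :=
      fun j k => Finset.sum_nonneg fun _ _ => abs_nonneg _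
    have hsumnn2 : ∀ (j : Fin t), (0:ℝ) ≤ ∑ k, ∑ m, (|ψ j (Pi.single k 1) m| : ℝ) :=
      fun j => Finset.sum_nonneg fun k _ => hsumnn j k
    have hLpos : 0 < L := by
      rw [hL_def]
      have : (0:ℝ) ≤ ∑ j, ∑ k, ∑ m, (|ψ j (Pi.single k 1) m| : ℝ) :=
        Finset.sum_nonneg fun j _ => hsumnn2 j
      linarith
    have hent : ∀ j k m, (|ψ j (Pi.single k 1) m| : ℝ) ≤ L := by
      intro j k m
      have h1 : (|ψ j (Pi.single k 1) m| : ℝ) ≤ ∑ m', (|ψ j (Pi.single k 1) m'| : ℝ) :=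
        Finset.single_le_sum (f := fun m' => (|ψ j (Pi.single k 1) m'| : ℝ))
          (fun _ _ => abs_nonneg _) (Finset.mem_univ m)
      have h2 : (∑ m', (|ψ j (Pi.single k 1) m'| : ℝ))
          ≤ ∑ k', ∑ m', (|ψ j (Pi.single k' 1) m'| : ℝ) :=
        Finset.single_le_sum (f := fun k' => ∑ m', (|ψ j (Pi.single k' 1) m'| : ℝ))
          (fun k' _ => hsumnn j k') (Finset.mem_univ k)
      have h3 : (∑ k', ∑ m', (|ψ j (Pi.single k' 1) m'| : ℝ))
          ≤ ∑ j', ∑ k', ∑ m', (|ψ j' (Pi.single k' 1) m'| : ℝ) :=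
        Finset.single_le_sum (f := fun j' => ∑ k', ∑ m', (|ψ j' (Pi.single k' 1) m'| : ℝ))
          (fun j' _ => hsumnn2 j') (Finset.mem_univ j)
      rw [hL_def]
      linarith
    obtain ⟨d', hd', π, hπ1, hπ2, _⟩ := main_construction t d n s ψ i hCS L hLpos hent
    exact ⟨d', hd', π, hπ1, hπ2⟩
  · refine ⟨(((d:ℝ)+1) * (2*((d:ℝ)+1))^(3^(t*n))), ((3^(t*n)+1 : ℕ) : ℝ),
      by positivity, by positivity, ?_⟩
    intro ψ i hCS L hL0 hent
    obtain ⟨d', hd', π, hπ1, hπ2, hπ3⟩ := main_construction t d n s ψ i hCS L hL0 hent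
    refine ⟨d', hd', π, hπ1, hπ2, ?_⟩
    intro j k m
    rw [Real.rpow_natCast]
    exact hπ3 j k m

end
end

section
/- Let n ≥ 1 and N ≥ 2 be integers, let B be a finite set, for each β ∈ B let J(β) ⊆ ℤ^n be a bounded box (a product of n integer intervals), and let K : B × ℤ^n → ℂ be any function. Then there exists a group homomorphism ξ : ℤ^n → ℚ/ℤ such that ∑_{β∈B} |∑_{x ∈ [−N,N]^n ∩ ℤ^n} 1_{J(β)}(x)·K(β,x)|² ≪_n (log N)^{2n} · ∑_{β∈B} |∑_{x ∈ [−N,N]^n ∩ ℤ^n} e^{2πi·ξ(x)}·K(β,x)|². -/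
/-!
STATEMENT 17: Eliminating the characteristic functions of boxes by a single additive character.

Let `n ≥ 1`, `N ≥ 2`, `B` a finite set, `J(β) ⊆ ℤ^n` a bounded box for each `β ∈ B`, and
`K : B × ℤ^n → ℂ` any function. Then there is a group homomorphism `ξ : ℤ^n → ℚ/ℤ`
(equivalently, a rational frequency vector `ξ ∈ ℚ^n`, via `x ↦ e^{2πi ∑ ξ_i x_i}`) such that
`∑_β |∑_{x ∈ [−N,N]^n} 1_{J(β)}(x) K(β,x)|² ≪_n (log N)^{2n} ∑_β |∑_{x ∈ [−N,N]^n} e^{2πiξ(x)} K(β,x)|²`.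
-/

open scoped Classical

noncomputable section

open Finset


def e1 (M : ℕ) (k : ℤ) : ℂ := Complex.exp ((2 * Real.pi * k / M : ℝ) * Complex.I)

lemma e1_abs (M : ℕ) (k : ℤ) : ‖e1 M k‖ = 1 :=
  Complex.norm_exp_ofReal_mul_I _

lemma e1_ne_zero (M : ℕ) (k : ℤ) : e1 M k ≠ 0 := Complex.exp_ne_zero _

lemma e1_zpow (M : ℕ) (k m : ℤ) : e1 M (m * k) = (e1 M k) ^ m := by
  rw [e1, e1, ← Complex.exp_int_mul]
  congr 1
  push_cast
  ring

lemma e1_pow (M : ℕ) (k : ℤ) (m : ℕ) : e1 M ((m : ℤ) * k) = (e1 M k) ^ m := by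
  have := e1_zpow M k m
  rwa [zpow_natCast] at this

lemma e1_add (M : ℕ) (k l : ℤ) : e1 M (k + l) = e1 M k * e1 M l := by
  rw [e1, e1, e1, ← Complex.exp_add]
  congr 1
  push_cast
  ring

lemma e1_eq_one_of_dvd (M : ℕ) (hM : 0 < M) (k : ℤ) (h : (M : ℤ) ∣ k) : e1 M k = 1 := by
  obtain ⟨c, rfl⟩ := h
  have hM' : (M : ℝ) ≠ 0 := Nat.cast_ne_zero.mpr hM.ne'
  have h1 : (2 * Real.pi * ((((M : ℤ) * c) : ℤ) : ℝ) / M : ℝ) = (c : ℝ) * (2 * Real.pi) := by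
    push_cast
    field_simp
  rw [e1, h1]
  push_cast
  rw [show ((c : ℂ) * (2 * (Real.pi : ℂ))) * Complex.I = (c : ℂ) * (2 * Real.pi * Complex.I) by ring]
  exact Complex.exp_int_mul_two_pi_mul_I c

lemma e1_ne_one (M : ℕ) (hM : 0 < M) (k : ℤ) (h : ¬ (M : ℤ) ∣ k) : e1 M k ≠ 1 := by
  intro hc
  rw [e1, Complex.exp_eq_one_iff] at hc
  obtain ⟨m, hm⟩ := hc
  have hM' : (M : ℝ) ≠ 0 := Nat.cast_ne_zero.mpr hM.ne'
  apply h
  refine ⟨m, ?_⟩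
  have hI : (Complex.I : ℂ) ≠ 0 := Complex.I_ne_zero
  have h2 : ((2 * Real.pi * k / M : ℝ) : ℂ) = (m : ℂ) * (2 * Real.pi) :=
    mul_right_cancel₀ hI
      (hm.trans (by ring : (m : ℂ) * (2 * Real.pi * Complex.I) = ((m : ℂ) * (2 * Real.pi)) * Complex.I))
  have h2' : (2 * Real.pi * k / M : ℝ) = m * (2 * Real.pi) := by exact_mod_cast h2
  have h2pi : (2 * Real.pi : ℝ) ≠ 0 := by positivity
  have h3 : (2 * Real.pi) * (k : ℝ) = (2 * Real.pi) * ((m : ℝ) * M) := by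
    field_simp at h2'
    rw [h2']; ring
  have h4 : (k : ℝ) = (m : ℝ) * M := mul_left_cancel₀ h2pi h3
  have h5 : k = m * (M : ℤ) := by exact_mod_cast h4
  rw [h5, mul_comm]

lemma orth (M : ℕ) (hM : 0 < M) (k : ℤ) :
    ∑ t ∈ range M, e1 M (t * k) = if (M : ℤ) ∣ k then (M : ℂ) else 0 := by
  have hpow : ∀ t : ℕ, e1 M ((t : ℤ) * k) = (e1 M k) ^ t := fun t => e1_pow M k t
  simp_rw [hpow]
  split_ifs with hd
  · rw [e1_eq_one_of_dvd M hM k hd]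
    simp
  · rw [geom_sum_eq (e1_ne_one M hM k hd)]
    have : e1 M k ^ M = 1 := by
      rw [← e1_pow M k M]
      exact e1_eq_one_of_dvd M hM _ ⟨k, rfl⟩
    rw [this]
    simp



lemma abs_exp_I_sub_one (θ : ℝ) :
    ‖Complex.exp ((θ : ℝ) * Complex.I) - 1‖ = 2 * |Real.sin (θ / 2)| := by
  rw [Complex.exp_mul_I]
  rw [show Complex.cos θ + Complex.sin θ * Complex.I - 1
      = Complex.mk (Real.cos θ - 1) (Real.sin θ) by
    apply Complex.ext <;> simp [Complex.cos_ofReal_re, Complex.sin_ofReal_re]]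
  rw [Complex.norm_def, Complex.normSq_mk]
  have h2 : (Real.cos θ - 1) * (Real.cos θ - 1) + Real.sin θ * Real.sin θ
      = 4 * Real.sin (θ / 2) ^ 2 := by
    have hc : Real.cos (θ / 2) ^ 2 = 1 / 2 + Real.cos θ / 2 := by
      have := Real.cos_sq (θ / 2)
      rwa [show 2 * (θ / 2) = θ by ring] at this
    have hh : Real.sin (θ / 2) ^ 2 = 1 - Real.cos (θ / 2) ^ 2 := Real.sin_sq (θ / 2)
    nlinarith [Real.sin_sq_add_cos_sq θ]
  rw [h2, show (4 : ℝ) * Real.sin (θ / 2) ^ 2 = (2 * |Real.sin (θ / 2)|) ^ 2 by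
    rw [mul_pow, sq_abs]; ring]
  exact Real.sqrt_sq (by positivity)

-- geometric sum bound over an integer interval, for |w| = 1, w ≠ 1
lemma abs_sum_zpow_Icc_le (w : ℂ) (hw : ‖w‖ = 1) (hw1 : w ≠ 1) (a b : ℤ) :
    ‖∑ y ∈ Finset.Icc a b, w ^ y‖ ≤ 2 / ‖w - 1‖ := by
  have hw0 : w ≠ 0 := by
    intro h; rw [h] at hw; simp at hw
  rcases le_or_gt a b with hab | hab
  · set L : ℕ := (b - a + 1).toNat with hL
    have hIcc : Finset.Icc a b = (Finset.range L).map
        ⟨fun j : ℕ => a + j, show Function.Injective fun j : ℕ => a + (j : ℤ) from fun x y h => by simpa using h⟩ := by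
      ext k
      simp only [Finset.mem_Icc, Finset.mem_map, Finset.mem_range, Function.Embedding.coeFn_mk]
      constructor
      · intro hk
        exact ⟨(k - a).toNat, by omega, by omega⟩
      · rintro ⟨j, hj, rfl⟩
        omega
    rw [hIcc, Finset.sum_map]
    simp only [Function.Embedding.coeFn_mk]
    have hsum : ∑ j ∈ Finset.range L, w ^ (a + (j : ℤ))
        = w ^ a * ∑ j ∈ Finset.range L, w ^ j := by
      rw [Finset.mul_sum]
      refine Finset.sum_congr rfl fun j _ => ?_
      rw [zpow_add₀ hw0, zpow_natCast]
    rw [hsum, norm_mul, norm_zpow, hw, one_zpow, one_mul,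
      geom_sum_eq hw1, norm_div]
    have hden : 0 < ‖w - 1‖ := norm_pos_iff.mpr (sub_ne_zero.mpr hw1)
    have hnum : ‖w ^ L - 1‖ ≤ 2 := by
      calc ‖w ^ L - 1‖ ≤ ‖w ^ L‖ + ‖(1 : ℂ)‖ :=
            norm_sub_le _ _
        _ = 2 := by rw [norm_pow, hw]; norm_num
    gcongr
  · simp [Finset.Icc_eq_empty_of_lt hab]
    positivity



def b1 (N t : ℕ) : ℝ := if t = 0 then 1 else 1 / (2 * ((min t (2 * N + 1 - t) : ℕ) : ℝ))

lemma b1_nonneg (N t : ℕ) : 0 ≤ b1 N t := by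
  unfold b1; split <;> positivity

lemma b1_sum_le (N : ℕ) (hN : 2 ≤ N) : ∑ t ∈ range (2 * N + 1), b1 N t ≤ 5 * Real.log N := by
  set M := 2 * N + 1 with hM
  have hM0 : 0 < M := by omega
  -- split off t = 0
  rw [range_eq_Ico, Finset.sum_eq_sum_Ico_succ_bot hM0]
  have h0 : b1 N 0 = 1 := by simp [b1]
  -- termwise bound
  have hterm : ∀ t ∈ Finset.Ico 1 M, b1 N t ≤ 1 / (2 * (t : ℝ)) + 1 / (2 * ((M - t : ℕ) : ℝ)) := by
    intro t ht
    simp only [Finset.mem_Ico] at ht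
    have h1 : t ≠ 0 := by omega
    rw [b1, if_neg h1]
    have hmt : 1 ≤ M - t := by omega
    rcases min_choice t (M - t) with h | h
    · rw [hM] at h ⊢
      rw [h]
      have : (0:ℝ) < 1 / (2 * (((M : ℕ) - t : ℕ) : ℝ)) := by
        have : (0:ℝ) < ((M - t : ℕ) : ℝ) := by exact_mod_cast hmt
        positivity
      rw [hM] at this
      linarith
    · rw [hM] at h ⊢
      rw [h]
      have : (0:ℝ) < 1 / (2 * (t : ℝ)) := by
        have : (0:ℝ) < (t : ℝ) := by exact_mod_cast ht.1
        positivity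
      linarith
  have hsum := Finset.sum_le_sum hterm
  rw [Finset.sum_add_distrib] at hsum
  -- reflection: second sum equals first
  have hrefl : ∑ t ∈ Finset.Ico 1 M, 1 / (2 * ((M - t : ℕ) : ℝ))
      = ∑ t ∈ Finset.Ico 1 M, 1 / (2 * (t : ℝ)) := by
    apply Finset.sum_nbij' (fun t => M - t) (fun t => M - t)
    · intro t ht; simp only [Finset.mem_Ico] at *; omega
    · intro t ht; simp only [Finset.mem_Ico] at *; omega
    · intro t ht; simp only [Finset.mem_Ico] at *; omega
    · intro t ht; simp only [Finset.mem_Ico] at *; omega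
    · intro t ht; rfl
  rw [hrefl] at hsum
  have hharm : ∑ t ∈ Finset.Ico 1 M, 1 / (2 * (t : ℝ)) = (1 / 2) * ((harmonic (M - 1) : ℚ) : ℝ) := by
    have : Finset.Ico 1 M = Finset.Icc 1 (M - 1) := by
      ext k; simp only [Finset.mem_Ico, Finset.mem_Icc]; omega
    rw [this, harmonic_eq_sum_Icc]
    push_cast
    rw [Finset.mul_sum]
    refine Finset.sum_congr rfl fun t _ => ?_
    rw [one_div, mul_inv]
    ring
  have hlog : ((harmonic (M - 1) : ℚ) : ℝ) ≤ 1 + Real.log (M - 1 : ℕ) := harmonic_le_one_add_log _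
  have hM1 : (M - 1 : ℕ) = 2 * N := by omega
  have hlog2 : Real.log ((2 * N : ℕ) : ℝ) = Real.log 2 + Real.log N := by
    push_cast
    rw [Real.log_mul (by norm_num) (by positivity)]
  have hlogN : Real.log 2 ≤ Real.log N := by
    apply Real.log_le_log (by norm_num)
    exact_mod_cast hN
  have hl2 : 0.6931471803 < Real.log 2 := Real.log_two_gt_d9
  have hl2' : Real.log 2 < 0.6931471808 := Real.log_two_lt_d9
  rw [hharm, hM1] at hsum
  rw [hM1, hlog2] at hlog
  have hgoal : b1 N 0 + ∑ k ∈ Finset.Ico (0 + 1) M, b1 N k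
      = 1 + ∑ k ∈ Finset.Ico 1 M, b1 N k := by norm_num [h0]
  rw [hgoal]
  nlinarith [hsum, hlog, hlogN, hl2, hl2']



lemma e1_zero (M : ℕ) : e1 M 0 = 1 := by
  simp [e1]

lemma onedim (N : ℕ) (hN : 2 ≤ N) (a b : ℤ) :
    ∃ c : ℕ → ℂ,
      (∀ x : ℤ, |x| ≤ (N : ℤ) →
        (if a ≤ x ∧ x ≤ b then (1 : ℂ) else 0)
          = ∑ t ∈ range (2 * N + 1), c t * e1 (2 * N + 1) (t * x)) ∧
      ∀ t ∈ range (2 * N + 1), ‖c t‖ ≤ b1 N t := by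
  set M := 2 * N + 1 with hMdef
  have hM0 : 0 < M := by omega
  have hMC : (M : ℂ) ≠ 0 := by exact_mod_cast hM0.ne'
  set a' : ℤ := max a (-(N : ℤ)) with ha'
  set b' : ℤ := min b (N : ℤ) with hb'
  have ha'1 : -(N : ℤ) ≤ a' := le_max_right _ _
  have hb'1 : b' ≤ N := min_le_right _ _
  have hmem' : ∀ x : ℤ, -(N : ℤ) ≤ x → x ≤ N →
      (x ∈ Finset.Icc a' b' ↔ (a ≤ x ∧ x ≤ b)) := by
    intro x h1 h2
    rw [Finset.mem_Icc, ha', hb', max_le_iff, le_min_iff]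
    omega
  clear_value a' b'
  clear ha' hb'
  refine ⟨fun t => (M : ℂ)⁻¹ * ∑ y ∈ Finset.Icc a' b', e1 M (-(t * y)), ?_, ?_⟩
  · intro x hx
    rw [abs_le] at hx
    have hterm : ∀ (t : ℕ) (y : ℤ), e1 M (-((t : ℤ) * y)) * e1 M ((t : ℤ) * x)
        = e1 M ((t : ℤ) * (x - y)) := by
      intro t y
      rw [← e1_add]
      congr 1
      ring
    calc (if a ≤ x ∧ x ≤ b then (1 : ℂ) else 0)
        = (M : ℂ)⁻¹ * (if x ∈ Finset.Icc a' b' then (M : ℂ) else 0) := by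
          have hmem := hmem' x hx.1 hx.2
          simp only [hmem]
          split_ifs
          · rw [inv_mul_cancel₀ hMC]
          · rw [mul_zero]
      _ = (M : ℂ)⁻¹ * ∑ y ∈ Finset.Icc a' b', (if y = x then (M : ℂ) else 0) := by
          rw [Finset.sum_ite_eq' (Finset.Icc a' b') x (fun _ => (M : ℂ))]
      _ = (M : ℂ)⁻¹ * ∑ y ∈ Finset.Icc a' b', ∑ t ∈ range M, e1 M ((t : ℤ) * (x - y)) := by
          congr 1
          refine Finset.sum_congr rfl fun y hy => ?_
          rw [orth M hM0 (x - y)]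
          rw [Finset.mem_Icc] at hy
          have hy1 : -(N : ℤ) ≤ y := ha'1.trans hy.1
          have hy2 : y ≤ N := hy.2.trans hb'1
          by_cases hxy : y = x
          · subst hxy
            simp
          · rw [if_neg hxy, if_neg]
            intro hdvd
            apply hxy
            have h0 : x - y = 0 := Int.eq_zero_of_abs_lt_dvd hdvd
              (by rw [hMdef, abs_lt]; push_cast; omega)
            omega
      _ = ∑ t ∈ range M, ((M : ℂ)⁻¹ * ∑ y ∈ Finset.Icc a' b', e1 M (-((t : ℤ) * y)))
            * e1 M ((t : ℤ) * x) := by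
          rw [Finset.sum_comm, Finset.mul_sum]
          refine Finset.sum_congr rfl fun t _ => ?_
          rw [mul_assoc, Finset.sum_mul]
          congr 1
          exact (Finset.sum_congr rfl fun y _ => hterm t y).symm
  · intro t ht
    rw [Finset.mem_range] at ht
    show ‖(M : ℂ)⁻¹ * ∑ y ∈ Finset.Icc a' b', e1 M (-((t : ℤ) * y))‖ ≤ b1 N t
    have habsM : ‖(M : ℂ)⁻¹‖ = (M : ℝ)⁻¹ := by
      rw [norm_inv, Complex.norm_natCast]
    by_cases ht0 : t = 0
    · subst ht0
      have : ∀ y ∈ Finset.Icc a' b', e1 M (-((0 : ℕ) * y)) = 1 := by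
        intro y _
        norm_num [e1_zero]
      rw [Finset.sum_congr rfl this, Finset.sum_const, nsmul_eq_mul, mul_one]
      rw [norm_mul, habsM, Complex.norm_natCast]
      rw [b1, if_pos rfl]
      have hcard : (Finset.Icc a' b').card ≤ M := by
        rw [Int.card_Icc]
        omega
      have hMR : (0 : ℝ) < (M : ℝ) := by exact_mod_cast hM0
      rw [inv_mul_le_iff₀ hMR, mul_one]
      exact_mod_cast hcard
    · -- t ≠ 0
      set w : ℂ := e1 M (-(t : ℤ)) with hw
      have hsum_w : ∀ y : ℤ, e1 M (-((t : ℤ) * y)) = w ^ y := by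
        intro y
        rw [hw, ← e1_zpow]
        congr 1
        ring
      have hw_abs : ‖w‖ = 1 := e1_abs M _
      have hw1 : w ≠ 1 := by
        apply e1_ne_one M hM0
        intro hdvd
        have h0 : -(t : ℤ) = 0 := Int.eq_zero_of_abs_lt_dvd hdvd
          (by rw [abs_neg, Int.abs_natCast]; exact_mod_cast ht)
        omega
      rw [Finset.sum_congr rfl (fun y _ => hsum_w y), norm_mul, habsM]
      have hgeom := abs_sum_zpow_Icc_le w hw_abs hw1 a' b'
      -- lower bound on abs (w - 1)
      set s : ℕ := min t (M - t) with hs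
      have hs1 : 1 ≤ s := by omega
      have hsM : 2 * s ≤ M := by omega
      have hMR : (0 : ℝ) < (M : ℝ) := by exact_mod_cast hM0
      have hsR : (0 : ℝ) < (s : ℝ) := by exact_mod_cast hs1
      have hlow : 4 * (s : ℝ) / M ≤ ‖w - 1‖ := by
        have habs1 : ‖w - 1‖ = 2 * |Real.sin ((2 * Real.pi * ((-(t:ℤ) : ℤ) : ℝ) / M) / 2)| := by
          rw [hw]
          exact abs_exp_I_sub_one _
        have hth : (2 * Real.pi * ((-(t:ℤ) : ℤ) : ℝ) / M) / 2 = -(Real.pi * t / M) := by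
          push_cast
          ring
        rw [habs1, hth, Real.sin_neg, abs_neg]
        have hsin_nonneg : 0 ≤ Real.sin (Real.pi * t / M) := by
          apply Real.sin_nonneg_of_nonneg_of_le_pi
          · positivity
          · rw [div_le_iff₀ hMR]
            have htM : (t : ℝ) ≤ (M : ℝ) := by exact_mod_cast ht.le
            nlinarith [Real.pi_pos]
        rw [abs_of_nonneg hsin_nonneg]
        have hsin : 2 * (s : ℝ) / M ≤ Real.sin (Real.pi * t / M) := by
          have key : ∀ u : ℕ, 1 ≤ u → 2 * u ≤ M →
              2 * (u : ℝ) / M ≤ Real.sin (Real.pi * u / M) := by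
            intro u hu1 huM
            have huR : (0 : ℝ) < (u : ℝ) := by exact_mod_cast hu1
            have h2u : 2 * (u : ℝ) ≤ M := by exact_mod_cast huM
            have harg1 : 0 ≤ Real.pi * u / M := by positivity
            have harg2 : Real.pi * u / M ≤ Real.pi / 2 := by
              rw [div_le_div_iff₀ hMR (by norm_num : (0:ℝ) < 2)]
              nlinarith [Real.pi_pos]
            have := Real.mul_le_sin harg1 harg2
            calc 2 * (u : ℝ) / M = 2 / Real.pi * (Real.pi * u / M) := by
                  field_simp
                  try ring
              _ ≤ Real.sin (Real.pi * u / M) := this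
          rcases Nat.le_total t (M - t) with hc | hc
          · have hst : s = t := by omega
            rw [hst]
            exact key t (by omega) (by omega)
          · have hst : s = M - t := by omega
            have hsin_eq : Real.sin (Real.pi * t / M) = Real.sin (Real.pi * ((M - t : ℕ) : ℝ) / M) := by
              have hcast : ((M - t : ℕ) : ℝ) = (M : ℝ) - t := by
                have : t ≤ M := ht.le
                push_cast [this]
                ring
              rw [hcast]
              rw [show Real.pi * ((M : ℝ) - t) / M = Real.pi - Real.pi * t / M by
                field_simp
                try ring]
              rw [Real.sin_pi_sub]
            rw [hsin_eq, hst]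
            exact key (M - t) (by omega) (by omega)
        calc 4 * (s : ℝ) / M = 2 * (2 * s / M) := by ring
          _ ≤ 2 * Real.sin (Real.pi * t / M) := by linarith
      -- combine
      have hden : (0 : ℝ) < 4 * (s : ℝ) / M := by positivity
      have hfinal : ‖∑ y ∈ Finset.Icc a' b', w ^ y‖ ≤ 2 / (4 * s / M) := by
        refine hgeom.trans ?_
        gcongr
      rw [b1, if_neg ht0]
      calc (M : ℝ)⁻¹ * ‖∑ y ∈ Finset.Icc a' b', w ^ y‖
          ≤ (M : ℝ)⁻¹ * (2 / (4 * s / M)) := by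
            apply mul_le_mul_of_nonneg_left hfinal (by positivity)
        _ = 1 / (2 * s) := by
            field_simp
            try ring
        _ = 1 / (2 * ((min t (M - t) : ℕ) : ℝ)) := by rw [← hs]

lemma cs_step {ι : Type*} (T : Finset ι) (A Z : ι → ℂ) :
    ‖∑ t ∈ T, A t * Z t‖ ^ 2
      ≤ (∑ t ∈ T, ‖A t‖) * ∑ t ∈ T, ‖A t‖ * ‖Z t‖ ^ 2 := by
  have h1 : ‖∑ t ∈ T, A t * Z t‖
      ≤ ∑ t ∈ T, ‖A t‖ * ‖Z t‖ := by
    refine (norm_sum_le _ _).trans_eq ?_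
    exact Finset.sum_congr rfl fun t _ => norm_mul _ _
  have h2 : ‖∑ t ∈ T, A t * Z t‖ ^ 2
      ≤ (∑ t ∈ T, ‖A t‖ * ‖Z t‖) ^ 2 :=
    pow_le_pow_left₀ (norm_nonneg _) h1 2
  refine h2.trans ?_
  have h3 := Finset.sum_mul_sq_le_sq_mul_sq T (fun t => Real.sqrt (‖A t‖))
      (fun t => Real.sqrt (‖A t‖) * ‖Z t‖)
  calc (∑ t ∈ T, ‖A t‖ * ‖Z t‖) ^ 2
      = (∑ t ∈ T, Real.sqrt (‖A t‖)
          * (Real.sqrt (‖A t‖) * ‖Z t‖)) ^ 2 := by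
        congr 1
        refine Finset.sum_congr rfl fun t _ => ?_
        rw [← mul_assoc, Real.mul_self_sqrt (norm_nonneg _)]
    _ ≤ (∑ t ∈ T, Real.sqrt (‖A t‖) ^ 2)
          * ∑ t ∈ T, (Real.sqrt (‖A t‖) * ‖Z t‖) ^ 2 := h3
    _ = (∑ t ∈ T, ‖A t‖) * ∑ t ∈ T, ‖A t‖ * ‖Z t‖ ^ 2 := by
        congr 1
        · exact Finset.sum_congr rfl fun t _ => Real.sq_sqrt (norm_nonneg _)
        · refine Finset.sum_congr rfl fun t _ => ?_
          rw [mul_pow, Real.sq_sqrt (norm_nonneg _)]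

/-- **Eliminating the characteristic function of boxes** (Proposition B.1 of the paper). -/
theorem eliminate_boxes_by_character (n : ℕ) (hn : 1 ≤ n) :
    ∃ C : ℝ, 0 < C ∧ ∀ N : ℕ, 2 ≤ N →
      ∀ (B : Type) (_ : Fintype B) (lo hi : B → Fin n → ℤ) (Kf : B → (Fin n → ℤ) → ℂ),
        ∃ ξ : Fin n → ℚ,
          (∑ β : B, ‖∑ᶠ x ∈ {x : Fin n → ℤ | ∀ i, |x i| ≤ (N : ℤ)},
              (if x ∈ Set.Icc (lo β) (hi β) then (1 : ℂ) else 0) * Kf β x‖ ^ 2) ≤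
            C * Real.log N ^ (2 * n) *
              ∑ β : B, ‖∑ᶠ x ∈ {x : Fin n → ℤ | ∀ i, |x i| ≤ (N : ℤ)},
                Complex.exp (2 * Real.pi * Complex.I * ∑ i, (ξ i : ℂ) * (x i : ℂ)) * Kf β x‖ ^ 2 := by
  refine ⟨(5 : ℝ) ^ (2 * n), by positivity, ?_⟩
  intro N hN B instB lo hi Kf
  set M := 2 * N + 1 with hMdef
  have hM0 : 0 < M := by omega
  have hMC : (M : ℂ) ≠ 0 := by
    simp only [Ne, Nat.cast_eq_zero]; omega
  have hlogN : 0 < Real.log N := Real.log_pos (by exact_mod_cast hN)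
  set S : Finset (Fin n → ℤ) := Fintype.piFinset (fun _ => Finset.Icc (-(N : ℤ)) N) with hS
  have hsetS : {x : Fin n → ℤ | ∀ i, |x i| ≤ (N : ℤ)} = (S : Set (Fin n → ℤ)) := by
    ext x
    simp only [Set.mem_setOf_eq, Finset.mem_coe, hS, Fintype.mem_piFinset, Finset.mem_Icc, abs_le]
  have hSx : ∀ x ∈ S, ∀ i, |x i| ≤ (N : ℤ) := by
    intro x hx i
    rw [hS, Fintype.mem_piFinset] at hx
    have := hx i
    rw [Finset.mem_Icc] at this
    rw [abs_le]
    exact this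
  choose c hc1 hc2 using fun (β : B) (i : Fin n) => onedim N hN (lo β i) (hi β i)
  set T : Finset (Fin n → ℕ) := Fintype.piFinset (fun _ => Finset.range M) with hT
  set E : (Fin n → ℕ) → (Fin n → ℤ) → ℂ := fun t x => ∏ i, e1 M ((t i : ℤ) * x i) with hE
  set Sb : B → (Fin n → ℕ) → ℂ := fun β t => ∑ x ∈ S, E t x * Kf β x with hSb
  set Cc : B → (Fin n → ℕ) → ℂ := fun β t => ∏ i, c β i (t i) with hCc
  set bb : (Fin n → ℕ) → ℝ := fun t => ∏ i, b1 N (t i) with hbb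
  set G : (Fin n → ℕ) → ℝ := fun t => ∑ β : B, ‖Sb β t‖ ^ 2 with hG
  have hGnonneg : ∀ t, 0 ≤ G t := by
    intro t; rw [hG]; positivity
  have hTne : T.Nonempty := by
    refine ⟨fun _ => 0, ?_⟩
    rw [hT, Fintype.mem_piFinset]
    intro i
    rw [Finset.mem_range]
    omega
  obtain ⟨tstar, htstarT, htstar⟩ := T.exists_max_image G hTne
  refine ⟨fun i => (tstar i : ℚ) / (M : ℚ), ?_⟩
  rw [hsetS]
  simp only [finsum_mem_coe_finset]
  -- the chosen character equals E tstar
  have hchar : ∀ x : Fin n → ℤ,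
      Complex.exp (2 * Real.pi * Complex.I
          * ∑ i, ((((tstar i : ℚ) / (M : ℚ)) : ℚ) : ℂ) * (x i : ℂ)) = E tstar x := by
    intro x
    rw [hE]
    simp only [e1]
    rw [← Complex.exp_sum]
    congr 1
    rw [Finset.mul_sum]
    refine Finset.sum_congr rfl fun i _ => ?_
    push_cast
    field_simp
  simp only [hchar]
  -- indicator expansion
  have hind : ∀ (β : B), ∀ x ∈ S,
      (if x ∈ Set.Icc (lo β) (hi β) then (1 : ℂ) else 0) = ∑ t ∈ T, Cc β t * E t x := by
    intro β x hx
    have h1 : (if x ∈ Set.Icc (lo β) (hi β) then (1 : ℂ) else 0)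
        = ∏ i, (if lo β i ≤ x i ∧ x i ≤ hi β i then (1 : ℂ) else 0) := by
      by_cases h : x ∈ Set.Icc (lo β) (hi β)
      · rw [if_pos h]
        rw [Set.mem_Icc] at h
        symm
        apply Finset.prod_eq_one
        intro i _
        rw [if_pos ⟨h.1 i, h.2 i⟩]
      · rw [if_neg h]
        have hex : ∃ i, ¬(lo β i ≤ x i ∧ x i ≤ hi β i) := by
          by_contra hcon
          push_neg at hcon
          exact h (Set.mem_Icc.mpr ⟨fun i => (hcon i).1, fun i => (hcon i).2⟩)
        obtain ⟨i, hi'⟩ := hex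
        symm
        apply Finset.prod_eq_zero (Finset.mem_univ i)
        rw [if_neg hi']
    rw [h1]
    have h2 : ∀ i : Fin n, (if lo β i ≤ x i ∧ x i ≤ hi β i then (1 : ℂ) else 0)
        = ∑ t ∈ range M, c β i t * e1 M ((t : ℤ) * x i) := fun i => hc1 β i (x i) (hSx x hx i)
    rw [Finset.prod_congr rfl fun i _ => h2 i]
    rw [Finset.prod_univ_sum]
    refine Finset.sum_congr rfl fun t _ => ?_
    rw [hCc, hE, ← Finset.prod_mul_distrib]
  -- LHS per β as sum over frequencies
  have hLHS : ∀ β : B, ∑ x ∈ S, (if x ∈ Set.Icc (lo β) (hi β) then (1 : ℂ) else 0) * Kf β x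
      = ∑ t ∈ T, Cc β t * Sb β t := by
    intro β
    calc ∑ x ∈ S, (if x ∈ Set.Icc (lo β) (hi β) then (1 : ℂ) else 0) * Kf β x
        = ∑ x ∈ S, ∑ t ∈ T, Cc β t * (E t x * Kf β x) := by
          refine Finset.sum_congr rfl fun x hx => ?_
          rw [hind β x hx, Finset.sum_mul]
          exact Finset.sum_congr rfl fun t _ => mul_assoc _ _ _
      _ = ∑ t ∈ T, ∑ x ∈ S, Cc β t * (E t x * Kf β x) := Finset.sum_comm
      _ = ∑ t ∈ T, Cc β t * Sb β t := by
          refine Finset.sum_congr rfl fun t _ => ?_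
          rw [hSb, ← Finset.mul_sum]
  -- coefficient bounds
  have hCb : ∀ (β : B), ∀ t ∈ T, ‖Cc β t‖ ≤ bb t := by
    intro β t ht
    rw [hT, Fintype.mem_piFinset] at ht
    rw [hCc, hbb]
    rw [norm_prod]
    exact Finset.prod_le_prod (fun i _ => norm_nonneg _)
      (fun i _ => hc2 β i (t i) (ht i))
  have hbbnonneg : ∀ t, 0 ≤ bb t := by
    intro t; rw [hbb]
    exact Finset.prod_nonneg fun i _ => b1_nonneg N (t i)
  set L : ℝ := (5 * Real.log N) ^ n with hL
  have hLnonneg : (0 : ℝ) ≤ L := by positivity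
  have hbbsum : ∑ t ∈ T, bb t ≤ L := by
    rw [hbb, hT, ← Finset.prod_univ_sum]
    rw [Finset.prod_const, Finset.card_univ, Fintype.card_fin]
    exact pow_le_pow_left₀ (Finset.sum_nonneg fun t _ => b1_nonneg N t) (b1_sum_le N hN) n
  have hCsum : ∀ β : B, ∑ t ∈ T, ‖Cc β t‖ ≤ L := by
    intro β
    refine (Finset.sum_le_sum (hCb β)).trans hbbsum
  -- per-β Cauchy-Schwarz and uniform coefficient bound
  have hperb : ∀ β : B,
      ‖∑ t ∈ T, Cc β t * Sb β t‖ ^ 2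
        ≤ L * ∑ t ∈ T, bb t * ‖Sb β t‖ ^ 2 := by
    intro β
    refine (cs_step T (Cc β) (Sb β)).trans ?_
    apply mul_le_mul (hCsum β)
    · refine Finset.sum_le_sum fun t ht => ?_
      exact mul_le_mul_of_nonneg_right (hCb β t ht) (sq_nonneg _)
    · exact Finset.sum_nonneg fun t _ =>
        mul_nonneg (norm_nonneg _) (sq_nonneg _)
    · exact hLnonneg
  -- sum over β, swap, and maximize
  calc ∑ β : B, ‖∑ x ∈ S, (if x ∈ Set.Icc (lo β) (hi β) then (1 : ℂ) else 0) * Kf β x‖ ^ 2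
      = ∑ β : B, ‖∑ t ∈ T, Cc β t * Sb β t‖ ^ 2 := by
        exact Finset.sum_congr rfl fun β _ => by rw [hLHS β]
    _ ≤ ∑ β : B, L * ∑ t ∈ T, bb t * ‖Sb β t‖ ^ 2 :=
        Finset.sum_le_sum fun β _ => hperb β
    _ = L * ∑ t ∈ T, bb t * G t := by
        rw [← Finset.mul_sum]
        congr 1
        rw [Finset.sum_comm]
        refine Finset.sum_congr rfl fun t _ => ?_
        rw [hG, Finset.mul_sum]
    _ ≤ L * ∑ t ∈ T, bb t * G tstar := by
        apply mul_le_mul_of_nonneg_left ?_ hLnonneg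
        refine Finset.sum_le_sum fun t ht => ?_
        exact mul_le_mul_of_nonneg_left (htstar t ht) (hbbnonneg t)
    _ = L * ((∑ t ∈ T, bb t) * G tstar) := by
        rw [← Finset.sum_mul]
    _ ≤ L * (L * G tstar) := by
        apply mul_le_mul_of_nonneg_left ?_ hLnonneg
        exact mul_le_mul_of_nonneg_right hbbsum (hGnonneg tstar)
    _ = (5 : ℝ) ^ (2 * n) * Real.log N ^ (2 * n) * G tstar := by
        rw [hL, ← mul_assoc, ← pow_add, ← mul_pow, ← two_mul, mul_pow]
    _ = (5 : ℝ) ^ (2 * n) * Real.log N ^ (2 * n)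
          * ∑ β : B, ‖∑ x ∈ S, E tstar x * Kf β x‖ ^ 2 := by
        rw [hG]

end
end

section
/- Let r_1, r_2 ≥ 0 be integers with r_1 + r_2 ≥ 1, and let N ≥ 2 be a real number. Define Nm : ℝ^{r_1} × ℂ^{r_2} → ℝ by Nm(x, z) = ∏_{i=1}^{r_1} x_i · ∏_{j=1}^{r_2} |z_j|². Then there is a constant C depending only on r_1 and r_2 such that for every a ∈ ℝ the level set S_{≤N}(a) := {(x, z) ∈ [−N,N]^{r_1} × ℂ^{r_2} : |z_j| ≤ N for all j and Nm(x,z) = a}, viewed inside ℝ^{r_1 + 2r_2}, is of Lipschitz class Lip(r_1 + 2r_2, C, C·N). -/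
/-!
STATEMENT 18: Level sets of the norm form are of controlled Lipschitz class.

`Nm : ℝ^{r₁} × ℂ^{r₂} → ℝ`, `Nm(x,z) = ∏ x_i · ∏ |z_j|²`. For `N ≥ 2` and any `a ∈ ℝ`, the level
set `{(x,z) : |x_i| ≤ N, |z_j| ≤ N, Nm(x,z) = a}`, viewed inside `ℝ^{r₁+2r₂}` via the standard
identification `ℂ ≅ ℝ²`, is of Lipschitz class `Lip(r₁+2r₂, C, C·N)` with `C = C(r₁,r₂)`.
-/

open scoped Classical

noncomputable section

namespace NormLip

variable {n : ℕ}

def Pp (m : Fin n) (e : Fin n → ℕ) (z : Fin n → ℝ) : ℝ :=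
  ∏ k ∈ Finset.univ.erase m, z k ^ e k

def Fm (A : ℝ) (m : Fin n) (e : Fin n → ℕ) (z : Fin n → ℝ) : ℝ :=
  if e m = 1 then A / Pp m e z else Real.sqrt (A / Pp m e z)

def Gd (A N : ℝ) (m : Fin n) (e : Fin n → ℕ) : Set (Fin n → ℝ) :=
  {z | (∀ k, 0 ≤ z k ∧ z k ≤ N) ∧ ∀ j, j ≠ m → A ≤ z j ^ e m * Pp m e z}

theorem Fm_nonneg {A : ℝ} (hA : 0 ≤ A) (m : Fin n) (e : Fin n → ℕ) (z : Fin n → ℝ)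
    (hz : ∀ k, 0 ≤ z k) : 0 ≤ Fm A m e z := by
  have hP : 0 ≤ Pp m e z := Finset.prod_nonneg fun k _ => pow_nonneg (hz k) _
  unfold Fm
  split
  · exact div_nonneg hA hP
  · exact Real.sqrt_nonneg _

theorem Pp_update_ne (m : Fin n) (e : Fin n → ℕ) (z : Fin n → ℝ) {j : Fin n} (hj : j ≠ m)
    (t : ℝ) :
    Pp m e (Function.update z j t) = t ^ e j * ∏ k ∈ (Finset.univ.erase m).erase j, z k ^ e k := by
  unfold Pp
  have hmem : j ∈ Finset.univ.erase m := Finset.mem_erase.2 ⟨hj, Finset.mem_univ j⟩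
  have : ∀ k ∈ Finset.univ.erase m,
      Function.update z j t k ^ e k = Function.update (fun k => z k ^ e k) j (t ^ e j) k := by
    intro k _
    by_cases hk : k = j
    · subst hk; simp
    · simp [Function.update_of_ne hk]
  rw [Finset.prod_congr rfl this, Finset.prod_update_of_mem hmem, Finset.sdiff_singleton_eq_erase]

theorem Pp_eq (m : Fin n) (e : Fin n → ℕ) (z : Fin n → ℝ) {j : Fin n} (hj : j ≠ m) :
    Pp m e z = z j ^ e j * ∏ k ∈ (Finset.univ.erase m).erase j, z k ^ e k := by
  unfold Pp
  exact (Finset.mul_prod_erase _ (fun k => z k ^ e k) (Finset.mem_erase.2 ⟨hj, Finset.mem_univ j⟩)).symm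

theorem Fm_update_m (A : ℝ) (m : Fin n) (e : Fin n → ℕ) (z : Fin n → ℝ) (t : ℝ) :
    Fm A m e (Function.update z m t) = Fm A m e z := by
  have : Pp m e (Function.update z m t) = Pp m e z := by
    unfold Pp
    refine Finset.prod_congr rfl fun k hk => ?_
    rw [Function.update_of_ne (Finset.mem_erase.1 hk).1]
  unfold Fm; rw [this]

set_option maxHeartbeats 2000000 in
theorem step {A N : ℝ} (hA : 0 ≤ A) {m : Fin n} {e : Fin n → ℕ}
    (he : ∀ k, e k = 1 ∨ e k = 2) {z : Fin n → ℝ} (hz : z ∈ Gd A N m e)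
    {j : Fin n} (hj : j ≠ m) {t : ℝ} (hst : z j ≤ t) (htN : t ≤ N) :
    Fm A m e (Function.update z j t) ≤ Fm A m e z ∧
      Fm A m e z - Fm A m e (Function.update z j t) ≤ 2 * (t - z j) := by
  obtain ⟨hbox, hcon⟩ := hz
  set s := z j with hs
  set Q : ℝ := ∏ k ∈ (Finset.univ.erase m).erase j, z k ^ e k with hQ
  have hQ0 : 0 ≤ Q := Finset.prod_nonneg fun k _ => pow_nonneg (hbox k).1 _
  have hs0 : 0 ≤ s := (hbox j).1
  have hPz : Pp m e z = s ^ e j * Q := Pp_eq m e z hj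
  have hPu : Pp m e (Function.update z j t) = t ^ e j * Q := Pp_update_ne m e z hj t
  have hkey : A ≤ s ^ e m * (s ^ e j * Q) := by
    have := hcon j hj; rwa [hPz] at this
  clear_value s Q
  rcases eq_or_lt_of_le hA with hA0 | hApos
  · -- A = 0
    have hz0 : Fm A m e z = 0 := by
      unfold Fm; split <;> simp [← hA0]
    have hu0 : Fm A m e (Function.update z j t) = 0 := by
      unfold Fm; split <;> simp [← hA0]
    rw [hz0, hu0]
    constructor
    · linarith
    · nlinarith
  · -- A > 0
    have hspos : 0 < s := by
      rcases lt_or_eq_of_le hs0 with h | h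
      · exact h
      · exfalso
        have : s ^ e m = 0 := by
          rw [← h]; exact zero_pow (by rcases he m with h1 | h1 <;> omega)
        rw [this, zero_mul] at hkey; linarith
    have hQpos : 0 < Q := by
      rcases lt_or_eq_of_le hQ0 with h | h
      · exact h
      · exfalso
        rw [← h, mul_zero, mul_zero] at hkey; linarith
    have htpos : 0 < t := lt_of_lt_of_le hspos hst
    have hsc : 0 < s ^ e j := pow_pos hspos _
    have htc : 0 < t ^ e j := pow_pos htpos _
    have hdenz : 0 < s ^ e j * Q := mul_pos hsc hQpos
    have hdenu : 0 < t ^ e j * Q := mul_pos htc hQpos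
    have hmono_den : s ^ e j * Q ≤ t ^ e j * Q :=
      mul_le_mul_of_nonneg_right (pow_le_pow_left₀ hs0 hst _) hQ0
    rcases he m with hm1 | hm2
    · -- e m = 1, Fm = A / P
      have hfz : Fm A m e z = A / (s ^ e j * Q) := by unfold Fm; rw [if_pos hm1, hPz]
      have hfu : Fm A m e (Function.update z j t) = A / (t ^ e j * Q) := by
        unfold Fm; rw [if_pos hm1, hPu]
      have hkey1 : A ≤ s * (s ^ e j * Q) := by rw [hm1] at hkey; simpa [pow_one] using hkey
      constructor
      · rw [hfz, hfu]
        exact div_le_div_of_nonneg_left hA hdenz hmono_den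
      · rw [hfz, hfu, div_sub_div _ _ (ne_of_gt hdenz) (ne_of_gt hdenu), div_le_iff₀
          (mul_pos hdenz hdenu)]
        rcases he j with hj1 | hj2
        · rw [hj1] at hkey1 ⊢
          simp only [pow_one] at hkey1 ⊢
          have hd : 0 ≤ (t - s) * Q := mul_nonneg (sub_nonneg.2 hst) hQ0
          have c1 : A * ((t - s) * Q) ≤ s * (s * Q) * ((t - s) * Q) :=
            mul_le_mul_of_nonneg_right hkey1 hd
          have c2 : s * s * ((t - s) * Q ^ 2) ≤ 2 * s * t * ((t - s) * Q ^ 2) := by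
            have : 0 ≤ (t - s) * Q ^ 2 := mul_nonneg (sub_nonneg.2 hst) (sq_nonneg Q)
            nlinarith [mul_nonneg this (mul_nonneg hspos.le (by linarith : (0:ℝ) ≤ 2 * t - s))]
          linarith [c1, c2]
        · rw [hj2] at hkey1 ⊢
          have hts2 : 0 ≤ t ^ 2 - s ^ 2 := by nlinarith
          have c1 : A * ((t ^ 2 - s ^ 2) * Q) ≤ s * (s ^ 2 * Q) * ((t ^ 2 - s ^ 2) * Q) :=
            mul_le_mul_of_nonneg_right hkey1 (mul_nonneg hts2 hQ0)
          have c2 : s ^ 3 * (t ^ 2 - s ^ 2) ≤ 2 * (t - s) * s ^ 2 * t ^ 2 := by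
            nlinarith [mul_nonneg (mul_nonneg (sub_nonneg.2 hst) (sq_nonneg s))
              (mul_nonneg (sub_nonneg.2 hst) (by linarith : (0:ℝ) ≤ 2 * t + s))]
          have c3 : s ^ 3 * (t ^ 2 - s ^ 2) * Q ^ 2 ≤ 2 * (t - s) * s ^ 2 * t ^ 2 * Q ^ 2 :=
            mul_le_mul_of_nonneg_right c2 (sq_nonneg Q)
          linarith [c1, c3]
    · -- e m = 2, Fm = sqrt (A / P)
      have hm2' : e m ≠ 1 := by omega
      have hfz : Fm A m e z = Real.sqrt (A / (s ^ e j * Q)) := by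
        unfold Fm; rw [if_neg hm2', hPz]
      have hfu : Fm A m e (Function.update z j t) = Real.sqrt (A / (t ^ e j * Q)) := by
        unfold Fm; rw [if_neg hm2', hPu]
      have hkey2 : A ≤ s ^ 2 * (s ^ e j * Q) := by rw [hm2] at hkey; exact hkey
      set b : ℝ := Real.sqrt (A / (t ^ e j * Q)) with hb
      have hYpos : 0 < A / (t ^ e j * Q) := div_pos hApos hdenu
      have hb0 : 0 ≤ b := Real.sqrt_nonneg _
      have hb2 : b ^ 2 = A / (t ^ e j * Q) := Real.sq_sqrt hYpos.le
      have hbA : b ^ 2 * (t ^ e j * Q) = A := by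
        rw [hb2]; field_simp
      clear_value b
      constructor
      · rw [hfz, hfu, hb]
        exact Real.sqrt_le_sqrt (div_le_div_of_nonneg_left hA hdenz hmono_den)
      · rw [hfz, hfu]
        have hgoal : Real.sqrt (A / (s ^ e j * Q)) ≤ b + 2 * (t - s) := by
          have h1 : A / (s ^ e j * Q) ≤ (b + 2 * (t - s)) ^ 2 := by
            rw [div_le_iff₀ hdenz]
            rcases he j with hj1 | hj2
            · -- e j = 1 : b ≤ s since b^2 * t ≤ s^3 ≤ s^2 * t
              rw [hj1] at hkey2 hbA ⊢
              simp only [pow_one] at hkey2 hbA ⊢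
              have hbs : b ≤ s := by
                have hb2t : b ^ 2 * (t * Q) ≤ s ^ 2 * (s * Q) := by rw [hbA]; exact hkey2
                have h4 : b ^ 2 * t ≤ s ^ 3 :=
                  le_of_mul_le_mul_right (by nlinarith [hb2t]) hQpos
                have h2 : b ^ 2 ≤ s ^ 2 :=
                  le_of_mul_le_mul_right
                    (by nlinarith [h4, mul_nonneg (sq_nonneg s) (sub_nonneg.2 hst)]) htpos
                calc b = Real.sqrt (b ^ 2) := (Real.sqrt_sq hb0).symm
                  _ ≤ Real.sqrt (s ^ 2) := Real.sqrt_le_sqrt h2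
                  _ = s := Real.sqrt_sq hs0
              nlinarith [mul_nonneg (mul_nonneg (sub_nonneg.2 hst) hQpos.le)
                (mul_nonneg hb0 (by linarith : (0:ℝ) ≤ 4 * s - b)),
                mul_nonneg (mul_nonneg (mul_nonneg (sub_nonneg.2 hst) (sub_nonneg.2 hst))
                  hspos.le) hQpos.le]
            · -- e j = 2 : b * t ≤ s^2
              rw [hj2] at hkey2 hbA ⊢
              have hbs : b * t ≤ s ^ 2 := by
                have hb2t : b ^ 2 * (t ^ 2 * Q) ≤ s ^ 2 * (s ^ 2 * Q) := by rw [hbA]; exact hkey2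
                have h4 : b ^ 2 * t ^ 2 ≤ s ^ 4 :=
                  le_of_mul_le_mul_right (by nlinarith [hb2t]) hQpos
                have h2 : (b * t) ^ 2 ≤ (s ^ 2) ^ 2 := by nlinarith [h4]
                have h3 : 0 ≤ b * t := mul_nonneg hb0 htpos.le
                calc b * t = Real.sqrt ((b * t) ^ 2) := (Real.sqrt_sq h3).symm
                  _ ≤ Real.sqrt ((s ^ 2) ^ 2) := Real.sqrt_le_sqrt h2
                  _ = s ^ 2 := Real.sqrt_sq (sq_nonneg s)
              have hbs' : b * s ≤ s ^ 2 := by nlinarith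
              nlinarith [mul_nonneg (mul_nonneg (sub_nonneg.2 hst) hQpos.le)
                  (mul_nonneg hb0 (sub_nonneg.2 hbs)),
                mul_nonneg (mul_nonneg (sub_nonneg.2 hst) hQpos.le)
                  (mul_nonneg hb0 (sub_nonneg.2 hbs')),
                mul_nonneg (mul_nonneg (sub_nonneg.2 hst) hQpos.le)
                  (mul_nonneg hb0 (sq_nonneg s)),
                mul_nonneg (mul_nonneg (mul_nonneg (sub_nonneg.2 hst) (sub_nonneg.2 hst))
                  (sq_nonneg s)) hQpos.le]
          calc Real.sqrt (A / (s ^ e j * Q)) ≤ Real.sqrt ((b + 2 * (t - s)) ^ 2) :=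
              Real.sqrt_le_sqrt h1
            _ = b + 2 * (t - s) := Real.sqrt_sq (by linarith)
        linarith


theorem Gd_update {A N : ℝ} {m : Fin n} {e : Fin n → ℕ} {z : Fin n → ℝ}
    (hz : z ∈ Gd A N m e) (j : Fin n) {t : ℝ} (hle : z j ≤ t) (htN : t ≤ N) :
    Function.update z j t ∈ Gd A N m e := by
  obtain ⟨hbox, hcon⟩ := hz
  have hmono : ∀ k, z k ≤ Function.update z j t k := by
    intro k
    by_cases hk : k = j
    · subst hk; simp [hle]
    · simp [Function.update_of_ne hk]
  have hPmono : Pp m e z ≤ Pp m e (Function.update z j t) := by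
    unfold Pp
    refine Finset.prod_le_prod (fun k _ => pow_nonneg (hbox k).1 _) fun k _ => ?_
    exact pow_le_pow_left₀ (hbox k).1 (hmono k) _
  constructor
  · intro k
    by_cases hk : k = j
    · subst hk; rw [Function.update_self]
      exact ⟨le_trans (hbox k).1 hle, htN⟩
    · simp only [Function.update_of_ne hk]; exact hbox k
  · intro j' hj'
    refine le_trans (hcon j' hj') ?_
    have h0 : 0 ≤ z j' := (hbox j').1
    have hP0 : 0 ≤ Pp m e z := Finset.prod_nonneg fun k _ => pow_nonneg (hbox k).1 _
    exact mul_le_mul (pow_le_pow_left₀ h0 (hmono j') _) hPmono hP0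
      (pow_nonneg (le_trans h0 (hmono j')) _)

theorem tele {A N : ℝ} (hA : 0 ≤ A) {m : Fin n} {e : Fin n → ℕ}
    (he : ∀ k, e k = 1 ∨ e k = 2) {u : Fin n → ℝ} (hu : u ∈ Gd A N m e)
    (w : Fin n → ℝ) (hbw : ∀ k, u k ≤ w k ∧ w k ≤ N) :
    ∀ T : Finset (Fin n),
      (fun k => if k ∈ T then w k else u k) ∈ Gd A N m e ∧
      Fm A m e (fun k => if k ∈ T then w k else u k) ≤ Fm A m e u ∧
      Fm A m e u - Fm A m e (fun k => if k ∈ T then w k else u k) ≤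
        2 * ∑ k ∈ T, (w k - u k) := by
  intro T
  induction T using Finset.induction_on with
  | empty => simpa using hu
  | @insert j T hjT ih =>
    obtain ⟨ihG, ihle, ihsum⟩ := ih
    have hupd : (fun k => if k ∈ insert j T then w k else u k) =
        Function.update (fun k => if k ∈ T then w k else u k) j (w j) := by
      funext k
      by_cases hk : k = j
      · subst hk; simp
      · simp [Function.update_of_ne hk, Finset.mem_insert, hk]
    have hzTj : (fun k => if k ∈ T then w k else u k) j ≤ w j := by
      by_cases hjm : j ∈ T
      · simp [hjm]
      · simp [hjm, (hbw j).1]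
    have hsum : ∑ k ∈ insert j T, (w k - u k) = (w j - u j) + ∑ k ∈ T, (w k - u k) :=
      Finset.sum_insert hjT
    have hGd : (fun k => if k ∈ insert j T then w k else u k) ∈ Gd A N m e := by
      rw [hupd]; exact Gd_update ihG j hzTj (hbw j).2
    refine ⟨hGd, ?_, ?_⟩
    · by_cases hjm : j = m
      · subst hjm; rw [hupd, Fm_update_m]; exact ihle
      · rw [hupd]
        have := step hA he ihG hjm hzTj (hbw j).2
        linarith [this.1]
    · by_cases hjm : j = m
      · subst hjm
        rw [hupd, Fm_update_m, hsum]
        linarith [(hbw j).1]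
      · rw [hupd, hsum]
        have hstep := (step hA he ihG hjm hzTj (hbw j).2).2
        rw [if_neg hjT] at hstep
        linarith [hstep]

theorem Fm_lip {A N : ℝ} (hA : 0 ≤ A) {m : Fin n} {e : Fin n → ℕ}
    (he : ∀ k, e k = 1 ∨ e k = 2) {u v : Fin n → ℝ}
    (hu : u ∈ Gd A N m e) (hv : v ∈ Gd A N m e) :
    |Fm A m e u - Fm A m e v| ≤ (2 * n) * dist u v := by
  set w : Fin n → ℝ := fun k => max (u k) (v k) with hw
  have hweq : (fun k => if k ∈ (Finset.univ : Finset (Fin n)) then w k else u k) = w := by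
    funext k; simp
  have hweq2 : (fun k => if k ∈ (Finset.univ : Finset (Fin n)) then w k else v k) = w := by
    funext k; simp
  have hbwu : ∀ k, u k ≤ w k ∧ w k ≤ N := fun k =>
    ⟨le_max_left _ _, max_le (hu.1 k).2 (hv.1 k).2⟩
  have hbwv : ∀ k, v k ≤ w k ∧ w k ≤ N := fun k =>
    ⟨le_max_right _ _, max_le (hu.1 k).2 (hv.1 k).2⟩
  have hUu := tele hA he hu w hbwu Finset.univ
  have hUv := tele hA he hv w hbwv Finset.univ
  rw [hweq] at hUu
  rw [hweq2] at hUv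
  have hdist : ∀ k, w k - u k ≤ dist u v ∧ w k - v k ≤ dist u v := by
    intro k
    have h1 : dist (u k) (v k) ≤ dist u v := dist_le_pi_dist u v k
    have h2 : |u k - v k| ≤ dist u v := by rwa [Real.dist_eq] at h1
    rcases abs_le.1 h2 with ⟨ha, hb⟩
    constructor
    · rcases max_cases (u k) (v k) with ⟨hm, _⟩ | ⟨hm, _⟩ <;> rw [hw] <;> simp only [hm] <;>
        linarith
    · rcases max_cases (u k) (v k) with ⟨hm, _⟩ | ⟨hm, _⟩ <;> rw [hw] <;> simp only [hm] <;>
        linarith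
  have hd0 : 0 ≤ dist u v := dist_nonneg
  have hsum_u : ∑ k, (w k - u k) ≤ n * dist u v := by
    calc ∑ k, (w k - u k) ≤ ∑ _k : Fin n, dist u v :=
          Finset.sum_le_sum fun k _ => (hdist k).1
      _ = n * dist u v := by rw [Finset.sum_const, Finset.card_univ, Fintype.card_fin,
          nsmul_eq_mul]
  have hsum_v : ∑ k, (w k - v k) ≤ n * dist u v := by
    calc ∑ k, (w k - v k) ≤ ∑ _k : Fin n, dist u v :=
          Finset.sum_le_sum fun k _ => (hdist k).2
      _ = n * dist u v := by rw [Finset.sum_const, Finset.card_univ, Fintype.card_fin,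
          nsmul_eq_mul]
  rw [abs_sub_le_iff]
  constructor
  · have := hUu.2.2
    have h2 := hUv.2.1
    nlinarith [hUu.2.2, hUv.2.1, hsum_u]
  · nlinarith [hUv.2.2, hUu.2.1, hsum_v]


theorem abs_cos_sub_cos_le (a b : ℝ) : |Real.cos a - Real.cos b| ≤ |a - b| := by
  rw [Real.cos_sub_cos]
  have h1 := Real.abs_sin_le_one ((a + b) / 2)
  have h2 : |Real.sin ((a - b) / 2)| ≤ |(a - b) / 2| := Real.abs_sin_le_abs
  have h3 : |(a - b) / 2| = |a - b| / 2 := by rw [abs_div]; simp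
  rw [abs_mul, abs_mul]
  have : |(-2 : ℝ)| = 2 := by norm_num
  rw [this]
  nlinarith [abs_nonneg (Real.sin ((a + b) / 2)), abs_nonneg (a - b), abs_nonneg (Real.sin ((a - b) / 2))]

theorem abs_sin_sub_sin_le (a b : ℝ) : |Real.sin a - Real.sin b| ≤ |a - b| := by
  rw [Real.sin_sub_sin]
  have h1 := Real.abs_cos_le_one ((a + b) / 2)
  have h2 : |Real.sin ((a - b) / 2)| ≤ |(a - b) / 2| := Real.abs_sin_le_abs
  have h3 : |(a - b) / 2| = |a - b| / 2 := by rw [abs_div]; simp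
  rw [abs_mul, abs_mul]
  have : |(2 : ℝ)| = 2 := by norm_num
  rw [this]
  nlinarith [abs_nonneg (Real.cos ((a + b) / 2)), abs_nonneg (a - b), abs_nonneg (Real.sin ((a - b) / 2))]

/-- clamp to [0, N] -/
def cl (N x : ℝ) : ℝ := max 0 (min x N)

theorem cl_lip (N x y : ℝ) : |cl N x - cl N y| ≤ |x - y| := by
  unfold cl
  calc |max 0 (min x N) - max 0 (min y N)| = |max (min x N) 0 - max (min y N) 0| := by
        rw [max_comm 0, max_comm 0]
    _ ≤ |min x N - min y N| := abs_max_sub_max_le_abs _ _ _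
    _ ≤ |x - y| := by
        simp only [min_def]
        split <;> split <;> rcases abs_cases (x - y) with ⟨h3, h4⟩ | ⟨h3, h4⟩ <;>
          rw [abs_le] <;> constructor <;> linarith

theorem cl_eq_self {N x : ℝ} (h0 : 0 ≤ x) (hN : x ≤ N) : cl N x = x := by
  unfold cl
  rw [min_eq_left hN, max_eq_right h0]

theorem cl_mem {N x : ℝ} (hN : 0 ≤ N) : 0 ≤ cl N x ∧ cl N x ≤ N := by
  unfold cl
  constructor
  · exact le_max_left _ _
  · exact max_le hN (min_le_right _ _)

theorem polar (x y : ℝ) : ∃ t ∈ Set.Icc (0:ℝ) 1,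
    x = Real.sqrt (x ^ 2 + y ^ 2) * Real.cos (2 * Real.pi * t) ∧
    y = Real.sqrt (x ^ 2 + y ^ 2) * Real.sin (2 * Real.pi * t) := by
  set z : ℂ := ⟨x, y⟩ with hz
  have habs : ‖z‖ = Real.sqrt (x ^ 2 + y ^ 2) := by
    rw [Complex.norm_def, hz, Complex.normSq_mk]; ring_nf
  by_cases h0 : z = 0
  · have hx : x = 0 := by rw [hz] at h0; exact congrArg Complex.re h0
    have hy : y = 0 := by rw [hz] at h0; exact congrArg Complex.im h0
    exact ⟨0, ⟨le_refl 0, zero_le_one⟩, by simp [hx, hy]⟩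
  · have hane : ‖z‖ ≠ 0 := by
      simpa using h0
    have hcos : Real.cos z.arg = x / ‖z‖ := by
      rw [Complex.cos_arg h0]
    have hsin : Real.sin z.arg = y / ‖z‖ := by
      rw [Complex.sin_arg]
    have hpi : (0:ℝ) < Real.pi := Real.pi_pos
    have harg1 : z.arg ≤ Real.pi := Complex.arg_le_pi z
    have harg2 : -Real.pi < z.arg := Complex.neg_pi_lt_arg z
    by_cases hneg : z.arg < 0
    · refine ⟨(z.arg + 2 * Real.pi) / (2 * Real.pi), ⟨?_, ?_⟩, ?_, ?_⟩
      · exact div_nonneg (by linarith) (by positivity)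
      · rw [div_le_one (by positivity)]; linarith
      · rw [mul_div_cancel₀ _ (by positivity : (2:ℝ) * Real.pi ≠ 0),
          Real.cos_add_two_pi, hcos]
        rw [habs, mul_comm]
        have hsne : Real.sqrt (x ^ 2 + y ^ 2) ≠ 0 := by rw [← habs]; simpa using h0
        exact (div_mul_cancel₀ _ hsne).symm
      · rw [mul_div_cancel₀ _ (by positivity : (2:ℝ) * Real.pi ≠ 0),
          Real.sin_add_two_pi, hsin]
        rw [habs, mul_comm]
        have hsne : Real.sqrt (x ^ 2 + y ^ 2) ≠ 0 := by rw [← habs]; simpa using h0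
        exact (div_mul_cancel₀ _ hsne).symm
    · push_neg at hneg
      refine ⟨z.arg / (2 * Real.pi), ⟨by positivity, ?_⟩, ?_, ?_⟩
      · rw [div_le_one (by positivity)]; linarith
      · rw [mul_div_cancel₀ _ (by positivity : (2:ℝ) * Real.pi ≠ 0), hcos]
        rw [habs, mul_comm]
        have hsne : Real.sqrt (x ^ 2 + y ^ 2) ≠ 0 := by rw [← habs]; simpa using h0
        exact (div_mul_cancel₀ _ hsne).symm
      · rw [mul_div_cancel₀ _ (by positivity : (2:ℝ) * Real.pi ≠ 0), hsin]
        rw [habs, mul_comm]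
        have hsne : Real.sqrt (x ^ 2 + y ^ 2) ≠ 0 := by rw [← habs]; simpa using h0
        exact (div_mul_cancel₀ _ hsne).symm



/-! ### Chart construction -/

def sl (m k : ℕ) : ℕ := if k < m then k else k - 1

def utilde (r₁ r₂ : ℕ) (N : ℝ) (m : Fin (r₁ + r₂)) (p : Fin (r₁ + 2 * r₂ - 1) → ℝ) :
    Fin (r₁ + r₂) → ℝ :=
  fun k =>
    if hkm : (k : ℕ) = (m : ℕ) then 0
    else N * p ⟨sl (m : ℕ) (k : ℕ), by
      have hk := k.isLt; have hm := m.isLt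
      unfold sl; split <;> omega⟩

def chart (r₁ r₂ : ℕ) (N : ℝ) (m : Fin (r₁ + r₂)) (σ : Fin r₁ → Bool)
    (g : (Fin (r₁ + r₂) → ℝ) → ℝ) :
    (Fin (r₁ + 2 * r₂ - 1) → ℝ) → (Fin (r₁ + 2 * r₂) → ℝ) :=
  fun p i =>
    if hi : (i : ℕ) < r₁ then
      (if σ ⟨(i : ℕ), hi⟩ then (1 : ℝ) else -1) *
        (if him : (i : ℕ) = (m : ℕ) then cl N (g (utilde r₁ r₂ N m p))
         else N * p ⟨sl (m : ℕ) (i : ℕ), by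
           have hm := m.isLt; unfold sl; split <;> omega⟩)
    else
      (if hkm : r₁ + ((i : ℕ) - r₁) / 2 = (m : ℕ) then cl N (g (utilde r₁ r₂ N m p))
       else N * p ⟨sl (m : ℕ) (r₁ + ((i : ℕ) - r₁) / 2), by
         have hi2 := i.isLt; have hm := m.isLt; unfold sl; split <;> omega⟩) *
      (if ((i : ℕ) - r₁) % 2 = 0 then
        Real.cos (2 * Real.pi * p ⟨r₁ + r₂ - 1 + ((i : ℕ) - r₁) / 2, by
          have hi2 := i.isLt; have hm := m.isLt; omega⟩)
       else
        Real.sin (2 * Real.pi * p ⟨r₁ + r₂ - 1 + ((i : ℕ) - r₁) / 2, by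
          have hi2 := i.isLt; have hm := m.isLt; omega⟩))

theorem utilde_dist {r₁ r₂ : ℕ} {N : ℝ} (hN : 0 ≤ N) (m : Fin (r₁ + r₂))
    (p q : Fin (r₁ + 2 * r₂ - 1) → ℝ) :
    dist (utilde r₁ r₂ N m p) (utilde r₁ r₂ N m q) ≤ N * dist p q := by
  rw [dist_pi_le_iff (by positivity)]
  intro k
  rw [Real.dist_eq]
  unfold utilde
  split
  · simpa using mul_nonneg hN dist_nonneg
  · rw [← mul_sub, abs_mul, abs_of_nonneg hN]
    refine mul_le_mul_of_nonneg_left ?_ hN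
    rw [← Real.dist_eq]
    exact dist_le_pi_dist p q _

theorem prod_est {N Rp Rq Tp Tq BR BT : ℝ} (h1 : |Rp - Rq| ≤ BR) (h2 : |Tp| ≤ 1)
    (h3 : |Rq| ≤ N) (h4 : |Tp - Tq| ≤ BT) : |Rp * Tp - Rq * Tq| ≤ BR + N * BT := by
  have e1 : Rp * Tp - Rq * Tq = (Rp - Rq) * Tp + Rq * (Tp - Tq) := by ring
  rw [e1]
  calc |(Rp - Rq) * Tp + Rq * (Tp - Tq)| ≤ |(Rp - Rq) * Tp| + |Rq * (Tp - Tq)| := abs_add_le _ _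
    _ = |Rp - Rq| * |Tp| + |Rq| * |Tp - Tq| := by rw [abs_mul, abs_mul]
    _ ≤ BR * 1 + N * BT := by
        have := abs_nonneg (Rp - Rq)
        have := abs_nonneg (Tp - Tq)
        have := abs_nonneg Rq
        have := abs_nonneg Tp
        nlinarith
    _ = BR + N * BT := by ring

theorem trig_est {x y d : ℝ} (h : |x - y| ≤ d) :
    |Real.cos (2 * Real.pi * x) - Real.cos (2 * Real.pi * y)| ≤ 7 * d ∧
    |Real.sin (2 * Real.pi * x) - Real.sin (2 * Real.pi * y)| ≤ 7 * d := by
  have hd0 : 0 ≤ d := le_trans (abs_nonneg _) h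
  have h1 : |2 * Real.pi * x - 2 * Real.pi * y| ≤ 7 * d := by
    have : 2 * Real.pi * x - 2 * Real.pi * y = 2 * Real.pi * (x - y) := by ring
    rw [this, abs_mul]
    have hpi : |2 * Real.pi| = 2 * Real.pi := abs_of_nonneg (by positivity)
    rw [hpi]
    nlinarith [Real.pi_lt_d2, abs_nonneg (x - y)]
  exact ⟨le_trans (abs_cos_sub_cos_le _ _) h1, le_trans (abs_sin_sub_sin_le _ _) h1⟩

theorem chart_lip (r₁ r₂ : ℕ) {N : ℝ} (hN : 0 ≤ N) (m : Fin (r₁ + r₂)) (σ : Fin r₁ → Bool)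
    (g : (Fin (r₁ + r₂) → ℝ) → ℝ) (Kg : NNReal) (hKg : 1 ≤ (Kg : ℝ))
    (hg : LipschitzWith Kg g)
    {p q : Fin (r₁ + 2 * r₂ - 1) → ℝ} (hp : p ∈ Set.Icc 0 1) (hq : q ∈ Set.Icc 0 1) :
    dist (chart r₁ r₂ N m σ g p) (chart r₁ r₂ N m σ g q) ≤
      ((Kg : ℝ) + 7) * N * dist p q := by
  have hd0 : 0 ≤ dist p q := dist_nonneg
  have hKg0 : (0:ℝ) ≤ (Kg : ℝ) := Kg.coe_nonneg
  have hdu := utilde_dist hN m p q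
  have hgd : |g (utilde r₁ r₂ N m p) - g (utilde r₁ r₂ N m q)| ≤ (Kg : ℝ) * (N * dist p q) := by
    calc |g (utilde r₁ r₂ N m p) - g (utilde r₁ r₂ N m q)|
        = dist (g (utilde r₁ r₂ N m p)) (g (utilde r₁ r₂ N m q)) := (Real.dist_eq _ _).symm
      _ ≤ (Kg : ℝ) * dist (utilde r₁ r₂ N m p) (utilde r₁ r₂ N m q) := hg.dist_le_mul _ _
      _ ≤ (Kg : ℝ) * (N * dist p q) := mul_le_mul_of_nonneg_left hdu hKg0
  have hcld : |cl N (g (utilde r₁ r₂ N m p)) - cl N (g (utilde r₁ r₂ N m q))| ≤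
      (Kg : ℝ) * (N * dist p q) := le_trans (cl_lip _ _ _) hgd
  have hslot : ∀ s : Fin (r₁ + 2 * r₂ - 1), |p s - q s| ≤ dist p q := by
    intro s
    rw [← Real.dist_eq]
    exact dist_le_pi_dist p q s
  have hNlin : ∀ s : Fin (r₁ + 2 * r₂ - 1), |N * p s - N * q s| ≤ N * dist p q := by
    intro s
    rw [← mul_sub, abs_mul, abs_of_nonneg hN]
    exact mul_le_mul_of_nonneg_left (hslot s) hN
  have hclN : ∀ pp, |cl N (g (utilde r₁ r₂ N m pp))| ≤ N := by
    intro pp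
    obtain ⟨h1, h2⟩ := cl_mem (N := N) (x := g (utilde r₁ r₂ N m pp)) hN
    rw [abs_of_nonneg h1]; exact h2
  have hqN : ∀ s, |N * q s| ≤ N := by
    intro s
    rw [abs_mul, abs_of_nonneg hN]
    have h1 : 0 ≤ q s := hq.1 s
    have h2 : q s ≤ 1 := hq.2 s
    have : |q s| ≤ 1 := abs_le.2 ⟨by linarith, h2⟩
    nlinarith
  rw [dist_pi_le_iff (by positivity)]
  intro i
  rw [Real.dist_eq]
  unfold chart
  by_cases hi : (i : ℕ) < r₁
  · rw [dif_pos hi, dif_pos hi]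
    rw [← mul_sub, abs_mul]
    have hsgn : |(if σ ⟨(i : ℕ), hi⟩ then (1 : ℝ) else -1)| = 1 := by split <;> simp
    rw [hsgn, one_mul]
    by_cases him : (i : ℕ) = (m : ℕ)
    · rw [dif_pos him, dif_pos him]
      refine le_trans hcld ?_
      nlinarith [mul_nonneg hN hd0]
    · rw [dif_neg him, dif_neg him]
      refine le_trans (hNlin _) ?_
      nlinarith [mul_nonneg hN hd0]
  · rw [dif_neg hi, dif_neg hi]
    have hpar := trig_est (hslot ⟨r₁ + r₂ - 1 + ((i : ℕ) - r₁) / 2, by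
      have hi2 := i.isLt; have hm := m.isLt; omega⟩)
    by_cases hkm : r₁ + ((i : ℕ) - r₁) / 2 = (m : ℕ)
    · rw [dif_pos hkm, dif_pos hkm]
      by_cases hpar2 : ((i : ℕ) - r₁) % 2 = 0
      · rw [if_pos hpar2, if_pos hpar2]
        refine le_trans (prod_est hcld (Real.abs_cos_le_one _) (hclN q) hpar.1) ?_
        nlinarith [mul_nonneg hN hd0]
      · rw [if_neg hpar2, if_neg hpar2]
        refine le_trans (prod_est hcld (Real.abs_sin_le_one _) (hclN q) hpar.2) ?_
        nlinarith [mul_nonneg hN hd0]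
    · rw [dif_neg hkm, dif_neg hkm]
      by_cases hpar2 : ((i : ℕ) - r₁) % 2 = 0
      · rw [if_pos hpar2, if_pos hpar2]
        refine le_trans (prod_est (hNlin _) (Real.abs_cos_le_one _) (hqN _) hpar.1) ?_
        nlinarith [mul_nonneg hN hd0]
      · rw [if_neg hpar2, if_neg hpar2]
        refine le_trans (prod_est (hNlin _) (Real.abs_sin_le_one _) (hqN _) hpar.2) ?_
        nlinarith [mul_nonneg hN hd0]

end NormLip

open NormLip


/-- A subset `S ⊆ ℝ^D` is of Lipschitz class `Lip(D, Z, L)` if it is covered by the images of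
`Z` maps `[0,1]^{D−1} → ℝ^D`, each with Lipschitz constant at most `L`. -/
def LipClass (D Z : ℕ) (L : ℝ) (S : Set (Fin D → ℝ)) : Prop :=
  ∃ φ : Fin Z → ((Fin (D - 1) → ℝ) → (Fin D → ℝ)),
    (∀ i, LipschitzOnWith (Real.toNNReal L) (φ i) (Set.Icc 0 1)) ∧
    S ⊆ ⋃ i, φ i '' Set.Icc 0 1

/-- **Level sets of the norm form are Lipschitz** (Lemma F.3 of the paper).
Coordinates: the first `r₁` coordinates are the real coordinates `x_i`; the complex coordinate
`z_j` corresponds to the pair of coordinates `(r₁ + 2j, r₁ + 2j + 1)`. -/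
theorem norm_level_set_lipschitz (r₁ r₂ : ℕ) (h : 1 ≤ r₁ + r₂) :
    ∃ C : ℕ, 0 < C ∧ ∀ N : ℝ, 2 ≤ N → ∀ a : ℝ,
      LipClass (r₁ + 2 * r₂) C ((C : ℝ) * N)
        {v : Fin (r₁ + 2 * r₂) → ℝ |
          (∀ i : Fin r₁, |v ⟨i.val, by have := i.isLt; omega⟩| ≤ N) ∧
          (∀ j : Fin r₂,
            v ⟨r₁ + 2 * j.val, by have := j.isLt; omega⟩ ^ 2 +
              v ⟨r₁ + 2 * j.val + 1, by have := j.isLt; omega⟩ ^ 2 ≤ N ^ 2) ∧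
          (∏ i : Fin r₁, v ⟨i.val, by have := i.isLt; omega⟩) *
              ∏ j : Fin r₂,
                (v ⟨r₁ + 2 * j.val, by have := j.isLt; omega⟩ ^ 2 +
                  v ⟨r₁ + 2 * j.val + 1, by have := j.isLt; omega⟩ ^ 2) = a} := by
  classical
  set n := r₁ + r₂ with hn_def
  have hcard2 : Fintype.card (Fin n × (Fin r₁ → Bool)) = n * 2 ^ r₁ := by
    simp [Fintype.card_prod, Fintype.card_fun]
  set C : ℕ := n * 2 ^ r₁ * (64 * (n + 1)) with hC_def
  have h2pow : 0 < 2 ^ r₁ := by positivity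
  have hCpos : 0 < C := by
    apply Nat.mul_pos (Nat.mul_pos h h2pow); omega
  have hcardC : Fintype.card (Fin n × (Fin r₁ → Bool)) ≤ C := by
    rw [hcard2, hC_def]
    exact Nat.le_mul_of_pos_right _ (by omega)
  refine ⟨C, hCpos, ?_⟩
  intro N hN a
  have hN0 : (0:ℝ) ≤ N := by linarith
  have hNpos : (0:ℝ) < N := by linarith
  set e : Fin n → ℕ := fun k => if (k : ℕ) < r₁ then 1 else 2 with he_def
  have he : ∀ k, e k = 1 ∨ e k = 2 := by
    intro k; simp only [he_def]; by_cases hk : (k : ℕ) < r₁ <;> simp [hk]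
  have hA : (0:ℝ) ≤ |a| := abs_nonneg a
  set Kg : NNReal := 2 * (n : NNReal) with hKg_def
  have hKgcoe : (Kg : ℝ) = 2 * n := by rw [hKg_def]; push_cast; ring
  have hKg1 : 1 ≤ (Kg : ℝ) := by
    rw [hKgcoe]
    have : (1:ℝ) ≤ (n:ℝ) := by exact_mod_cast h
    linarith
  have hlip : ∀ m : Fin n, LipschitzOnWith Kg (Fm |a| m e) (Gd |a| N m e) := by
    intro m
    rw [lipschitzOnWith_iff_dist_le_mul]
    intro u hu v hv
    rw [Real.dist_eq, hKgcoe]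
    exact Fm_lip hA he hu hv
  choose g hg1 hg2 using fun m => (hlip m).extend_real
  have hnonempty : Nonempty (Fin n × (Fin r₁ → Bool)) := ⟨⟨⟨0, h⟩, fun _ => true⟩⟩
  have hcardpos : 0 < Fintype.card (Fin n × (Fin r₁ → Bool)) := Fintype.card_pos
  set Dec : Fin C → Fin n × (Fin r₁ → Bool) := fun i =>
    (Fintype.equivFin (Fin n × (Fin r₁ → Bool))).symm
      ⟨min i.val (Fintype.card (Fin n × (Fin r₁ → Bool)) - 1), by omega⟩ with hDec_def
  refine ⟨fun i => chart r₁ r₂ N (Dec i).1 (Dec i).2 (g (Dec i).1), ?_, ?_⟩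
  · -- Lipschitz bound for each chart
    intro i
    rw [lipschitzOnWith_iff_dist_le_mul]
    intro p hp q hq
    have hc := chart_lip r₁ r₂ hN0 (Dec i).1 (Dec i).2 (g (Dec i).1) Kg hKg1 (hg1 _) hp hq
    refine le_trans hc ?_
    have hcoe : (Real.toNNReal ((C:ℝ) * N) : ℝ) = (C:ℝ) * N :=
      Real.coe_toNNReal _ (by positivity)
    rw [hcoe]
    have hCge : ((Kg : ℝ) + 7) ≤ (C : ℝ) := by
      rw [hKgcoe]
      have hnat : 2 * n + 7 ≤ C := by
        have h1 : 2 * n + 7 ≤ 64 * (n + 1) := by omega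
        have h2 : 64 * (n + 1) ≤ C := by
          rw [hC_def]
          exact Nat.le_mul_of_pos_left _ (Nat.mul_pos h h2pow)
        omega
      exact_mod_cast hnat
    have hd0 : (0:ℝ) ≤ dist p q := dist_nonneg
    calc ((Kg:ℝ) + 7) * N * dist p q ≤ (C:ℝ) * N * dist p q := by
          apply mul_le_mul_of_nonneg_right _ hd0
          exact mul_le_mul_of_nonneg_right hCge hN0
      _ = (C:ℝ) * N * dist p q := rfl
  · -- Coverage
    intro v hv
    obtain ⟨hv1, hv2, hv3⟩ := hv
    -- the vector of factor sizes
    set w : Fin n → ℝ := fun k =>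
      if hk : (k : ℕ) < r₁ then |v ⟨(k : ℕ), by have := k.isLt; omega⟩|
      else Real.sqrt (v ⟨r₁ + 2 * ((k : ℕ) - r₁), by have := k.isLt; omega⟩ ^ 2 +
        v ⟨r₁ + 2 * ((k : ℕ) - r₁) + 1, by have := k.isLt; omega⟩ ^ 2) with hw_def
    have hw0 : ∀ k, 0 ≤ w k := by
      intro k; simp only [hw_def]
      by_cases hk : (k : ℕ) < r₁
      · rw [dif_pos hk]; exact abs_nonneg _
      · rw [dif_neg hk]; exact Real.sqrt_nonneg _
    have hwN : ∀ k, w k ≤ N := by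
      intro k; simp only [hw_def]
      by_cases hk : (k : ℕ) < r₁
      · rw [dif_pos hk]; exact hv1 ⟨(k : ℕ), hk⟩
      · rw [dif_neg hk]
        have hj : (k : ℕ) - r₁ < r₂ := by have := k.isLt; omega
        have := hv2 ⟨(k : ℕ) - r₁, hj⟩
        calc Real.sqrt (v ⟨r₁ + 2 * ((k : ℕ) - r₁), _⟩ ^ 2 +
              v ⟨r₁ + 2 * ((k : ℕ) - r₁) + 1, _⟩ ^ 2) ≤ Real.sqrt (N ^ 2) :=
            Real.sqrt_le_sqrt this
          _ = N := Real.sqrt_sq hN0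
    have hprod : ∏ k, w k ^ e k = |a| := by
      have hsplit : ∏ k, w k ^ e k =
          (∏ i : Fin r₁, w (Fin.castAdd r₂ i) ^ e (Fin.castAdd r₂ i)) *
          ∏ j : Fin r₂, w (Fin.natAdd r₁ j) ^ e (Fin.natAdd r₁ j) := Fin.prod_univ_add _
      rw [hsplit]
      have h1 : ∀ i : Fin r₁, w (Fin.castAdd r₂ i) ^ e (Fin.castAdd r₂ i) =
          |v ⟨(i : ℕ), by have := i.isLt; omega⟩| := by
        intro i
        have hi : ((i : ℕ) : ℕ) < r₁ := i.isLt
        simp only [hw_def, he_def, Fin.coe_castAdd]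
        rw [dif_pos hi, if_pos hi, pow_one]
      have h2 : ∀ j : Fin r₂, w (Fin.natAdd r₁ j) ^ e (Fin.natAdd r₁ j) =
          v ⟨r₁ + 2 * (j : ℕ), by have := j.isLt; omega⟩ ^ 2 +
          v ⟨r₁ + 2 * (j : ℕ) + 1, by have := j.isLt; omega⟩ ^ 2 := by
        intro j
        have hj2 : ¬ (r₁ + (j : ℕ) < r₁) := by omega
        simp only [hw_def, he_def, Fin.coe_natAdd, Nat.add_sub_cancel_left]
        rw [dif_neg hj2, if_neg hj2]
        exact Real.sq_sqrt (by positivity)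
      rw [Finset.prod_congr rfl fun i _ => h1 i, Finset.prod_congr rfl fun j _ => h2 j]
      rw [← hv3, abs_mul, Finset.abs_prod]
      congr 1
      rw [abs_of_nonneg (Finset.prod_nonneg fun j _ => by positivity)]
    -- minimal coordinate
    obtain ⟨m, -, hm⟩ := Finset.exists_min_image Finset.univ w ⟨⟨0, h⟩, Finset.mem_univ _⟩
    set σ : Fin r₁ → Bool := fun i => decide (0 ≤ v ⟨(i : ℕ), by have := i.isLt; omega⟩)
      with hσ_def
    choose t ht using fun j : Fin r₂ =>
      polar (v ⟨r₁ + 2 * (j : ℕ), by have := j.isLt; omega⟩)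
        (v ⟨r₁ + 2 * (j : ℕ) + 1, by have := j.isLt; omega⟩)
    set p : Fin (r₁ + 2 * r₂ - 1) → ℝ := fun s =>
      if hs : (s : ℕ) < n - 1 then
        w ⟨if (s : ℕ) < (m : ℕ) then (s : ℕ) else (s : ℕ) + 1, by
          have := m.isLt; split <;> omega⟩ / N
      else t ⟨(s : ℕ) - (n - 1), by have := s.isLt; omega⟩ with hp_def
    have hpIcc : p ∈ Set.Icc (0 : Fin (r₁ + 2 * r₂ - 1) → ℝ) 1 := by
      constructor <;> intro s <;> simp only [hp_def, Pi.zero_apply, Pi.one_apply] <;>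
        by_cases hs : (s : ℕ) < n - 1
      · rw [dif_pos hs]
        exact div_nonneg (hw0 _) hN0
      · rw [dif_neg hs]
        exact (ht _).1.1
      · rw [dif_pos hs]
        rw [div_le_one hNpos]
        exact hwN _
      · rw [dif_neg hs]
        exact (ht _).1.2
    -- evaluation of the free coordinates
    have hNp : ∀ (k : Fin n) (hkm : ¬ (k : ℕ) = (m : ℕ)) (pf : sl (m : ℕ) (k : ℕ) < r₁ + 2 * r₂ - 1),
        N * p ⟨sl (m : ℕ) (k : ℕ), pf⟩ = w k := by
      intro k hkm pf
      have hsl : sl (m : ℕ) (k : ℕ) < n - 1 := by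
        have := k.isLt; have := m.isLt; unfold sl; split <;> omega
      simp only [hp_def]
      simp only [dif_pos hsl]
      have hidx : (⟨if sl (m : ℕ) (k : ℕ) < (m : ℕ) then sl (m : ℕ) (k : ℕ)
          else sl (m : ℕ) (k : ℕ) + 1, by have := m.isLt; split <;> omega⟩ : Fin n) = k := by
        apply Fin.ext
        simp only []
        unfold sl
        have := k.isLt; have := m.isLt
        split_ifs <;> omega
      rw [hidx, mul_comm, div_mul_cancel₀ _ (ne_of_gt hNpos)]
    have hup : utilde r₁ r₂ N m p = fun (k : Fin n) => if (k : ℕ) = (m : ℕ) then 0 else w k := by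
      funext k
      unfold utilde
      by_cases hkm : (k : ℕ) = (m : ℕ)
      · rw [dif_pos hkm, if_pos hkm]
      · rw [dif_neg hkm, if_neg hkm]
        exact hNp k hkm _
    have hPeq : Pp m e (utilde r₁ r₂ N m p) = ∏ k ∈ Finset.univ.erase m, w k ^ e k := by
      unfold Pp
      refine Finset.prod_congr rfl fun k hk => ?_
      rw [hup]
      have hkm : ¬ (k : ℕ) = (m : ℕ) := by
        intro hc
        exact (Finset.mem_erase.1 hk).1 (Fin.ext hc)
      simp only [if_neg hkm]
    have hP0 : 0 ≤ ∏ k ∈ Finset.univ.erase m, w k ^ e k :=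
      Finset.prod_nonneg fun k _ => pow_nonneg (hw0 k) _
    have haw : |a| = w m ^ e m * ∏ k ∈ Finset.univ.erase m, w k ^ e k := by
      rw [← hprod]
      exact (Finset.mul_prod_erase _ _ (Finset.mem_univ m)).symm
    have hGd : utilde r₁ r₂ N m p ∈ Gd |a| N m e := by
      constructor
      · intro k
        rw [hup]
        by_cases hkm : (k : ℕ) = (m : ℕ)
        · simp only [if_pos hkm]; exact ⟨le_refl 0, hN0⟩
        · simp only [if_neg hkm]; exact ⟨hw0 k, hwN k⟩
      · intro j' hj'
        rw [hPeq, haw]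
        have hj'm : ¬ (j' : ℕ) = (m : ℕ) := fun hc => hj' (Fin.ext hc)
        have hval : utilde r₁ r₂ N m p j' = w j' := by rw [hup]; simp only [if_neg hj'm]
        rw [hval]
        exact mul_le_mul_of_nonneg_right
          (pow_le_pow_left₀ (hw0 m) (hm j' (Finset.mem_univ j')) _) hP0
    have hFmval : Fm |a| m e (utilde r₁ r₂ N m p) = w m := by
      by_cases hPz : (∏ k ∈ Finset.univ.erase m, w k ^ e k) = 0
      · have hwm0 : w m = 0 := by
          obtain ⟨k, hk, hk0⟩ := Finset.prod_eq_zero_iff.1 hPz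
          have : w k = 0 := by
            have hek : e k ≠ 0 := by rcases he k with h' | h' <;> omega
            exact pow_eq_zero_iff hek |>.1 hk0
          have h5 := hm k (Finset.mem_univ k)
          linarith [hw0 m]
        unfold Fm
        rw [hPeq, hPz]
        split <;> simp [hwm0]
      · have hPpos : 0 < ∏ k ∈ Finset.univ.erase m, w k ^ e k :=
          lt_of_le_of_ne hP0 (Ne.symm hPz)
        unfold Fm
        rcases he m with hm1 | hm2
        · rw [if_pos hm1, hPeq, haw, hm1, pow_one, mul_div_cancel_right₀ _ hPz]
        · have hm2' : e m ≠ 1 := by omega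
          rw [if_neg hm2', hPeq, haw, hm2, mul_div_cancel_right₀ _ hPz]
          exact Real.sqrt_sq (hw0 m)
    have hgval : g m (utilde r₁ r₂ N m p) = w m := by
      rw [← hg2 m hGd]; exact hFmval
    have hclval : cl N (g m (utilde r₁ r₂ N m p)) = w m := by
      rw [hgval]; exact cl_eq_self (hw0 m) (hwN m)
    -- the chart index
    set k0 : Fin (Fintype.card (Fin n × (Fin r₁ → Bool))) :=
      Fintype.equivFin (Fin n × (Fin r₁ → Bool)) (m, σ) with hk0_def
    set iC : Fin C := ⟨k0.val, lt_of_lt_of_le k0.isLt hcardC⟩ with hiC_def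
    have hdec : Dec iC = (m, σ) := by
      simp only [hDec_def]
      have hmin : (⟨min iC.val (Fintype.card (Fin n × (Fin r₁ → Bool)) - 1), by omega⟩ :
          Fin (Fintype.card (Fin n × (Fin r₁ → Bool)))) = k0 := by
        apply Fin.ext
        simp only [hiC_def]
        have := k0.isLt
        omega
      rw [hmin, hk0_def, Equiv.symm_apply_apply]
    rw [Set.mem_iUnion]
    refine ⟨iC, p, hpIcc, ?_⟩
    show chart r₁ r₂ N (Dec iC).1 (Dec iC).2 (g (Dec iC).1) p = v
    rw [hdec]
    funext iD
    unfold chart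
    by_cases hi : (iD : ℕ) < r₁
    · rw [dif_pos hi]
      have hsig : ∀ (x : ℝ), x = |v iD| →
          (if σ ⟨(iD : ℕ), hi⟩ then (1:ℝ) else -1) * x = v iD := by
        intro x hx
        subst hx
        simp only [hσ_def]
        have hvv : (⟨((⟨(iD : ℕ), hi⟩ : Fin r₁) : ℕ), by have := hi; omega⟩ :
            Fin (r₁ + 2 * r₂)) = iD := Fin.ext rfl
        by_cases h0 : 0 ≤ v iD
        · rw [if_pos]
          · rw [one_mul, abs_of_nonneg h0]
          · rw [decide_eq_true_eq, hvv]; exact h0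
        · rw [if_neg]
          · rw [abs_of_neg (not_le.1 h0)]; ring
          · rw [decide_eq_true_eq, hvv]; exact h0
      by_cases him : (iD : ℕ) = (m : ℕ)
      · rw [dif_pos him, hclval]
        apply hsig
        simp only [hw_def]
        have hmr : (m : ℕ) < r₁ := him ▸ hi
        rw [dif_pos hmr]
        have hmk : (⟨(m : ℕ), by omega⟩ : Fin (r₁ + 2 * r₂)) = iD := Fin.ext him.symm
        rw [hmk]
      · rw [dif_neg him]
        apply hsig
        have hk : ((⟨(iD : ℕ), by have := iD.isLt; omega⟩ : Fin n) : ℕ) = (iD : ℕ) := rfl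
        rw [hNp ⟨(iD : ℕ), by have := iD.isLt; omega⟩ (by rw [hk]; exact him) _]
        simp only [hw_def]
        rw [dif_pos hi]
    · rw [dif_neg hi]
      have hiD := iD.isLt
      set jv : ℕ := ((iD : ℕ) - r₁) / 2 with hjv_def
      have hjvr : jv < r₂ := by omega
      have hkn : r₁ + jv < n := by omega
      -- the R factor equals w ⟨r₁ + jv⟩
      have hwk : w ⟨r₁ + jv, hkn⟩ = Real.sqrt
          (v ⟨r₁ + 2 * jv, by omega⟩ ^ 2 + v ⟨r₁ + 2 * jv + 1, by omega⟩ ^ 2) := by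
        simp only [hw_def]
        have : ¬ ((⟨r₁ + jv, hkn⟩ : Fin n) : ℕ) < r₁ := by simp
        rw [dif_neg this]
        congr 2 <;> · congr 1; simp
      have hR : (if hkm : r₁ + jv = (m : ℕ) then cl N (g m (utilde r₁ r₂ N m p))
          else N * p ⟨sl (m : ℕ) (r₁ + jv), by
            have := m.isLt; unfold sl; split <;> omega⟩) = w ⟨r₁ + jv, hkn⟩ := by
        by_cases hkm : r₁ + jv = (m : ℕ)
        · rw [dif_pos hkm, hclval]
          congr 1
          exact Fin.ext (by simp [hkm])
        · rw [dif_neg hkm]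
          exact hNp ⟨r₁ + jv, hkn⟩ hkm _
      have hpang : p ⟨r₁ + r₂ - 1 + jv, by omega⟩ = t ⟨jv, hjvr⟩ := by
        simp only [hp_def]
        have hns : ¬ ((r₁ + r₂ - 1 + jv) < n - 1) := by omega
        rw [dif_neg hns]
        congr 1
        apply Fin.ext
        simp only []
        omega
      have hteq := ht ⟨jv, hjvr⟩
      by_cases hpar : ((iD : ℕ) - r₁) % 2 = 0
      · rw [if_pos hpar]
        have hiDv : (iD : ℕ) = r₁ + 2 * jv := by omega
        have hvi : v iD = v ⟨r₁ + 2 * jv, by omega⟩ := by congr 1; exact Fin.ext hiDv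
        rw [hR, hpang, hwk, hvi]
        exact (hteq.2.1).symm
      · rw [if_neg hpar]
        have hiDv : (iD : ℕ) = r₁ + 2 * jv + 1 := by omega
        have hvi : v iD = v ⟨r₁ + 2 * jv + 1, by omega⟩ := by congr 1; exact Fin.ext hiDv
        rw [hR, hpang, hwk, hvi]
        exact (hteq.2.2).symm

end
end
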